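/- arXiv:1407.5518 — 4 statements merged into one kernel-verified Lean document; each statement's English description precedes it below -/
import Mathlib

section
/- Let p>1, b>0 and σ>0, and set α = ((p-1)/p)·σ^{1/(1-p)} and C_p = ((p-1)/p)^p. Then for every absolutely continuous function u on [0,b] one has ∫_0^b |u'(t)|^p dt + σ|u(0)|^p ≥ C_p ∫_0^b |u(t)|^p/(t+α)^p dt + (p-1)·C_p·(b+α)^{-p} ∫_0^b |u(t)|^p dt. -/
open MeasureTheory Set Filter
open scoped ENNReal Topology NNReal

private lemma hardy_abs_rpow_hasDerivAt (p : ℝ) (hp : 1 < p) (x : ℝ) :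
    HasDerivAt (fun y : ℝ => |y| ^ p) (p * |x| ^ (p - 1) * Real.sign x) x := by
  rcases lt_trichotomy x 0 with hx | hx | hx
  · have h1 : HasDerivAt (fun y : ℝ => (-y) ^ p) (p * (-x) ^ (p - 1) * (-1)) x := by
      have := (Real.hasDerivAt_rpow_const (p := p) (x := -x) (Or.inl (by linarith))).comp x
        (hasDerivAt_neg x)
      simpa [Function.comp_def] using this
    have h2 : (fun y : ℝ => |y| ^ p) =ᶠ[𝓝 x] fun y => (-y) ^ p := by
      filter_upwards [eventually_lt_nhds hx] with y hy
      rw [abs_of_neg hy]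
    have := h1.congr_of_eventuallyEq h2
    simpa [abs_of_neg hx, Real.sign_of_neg hx] using this
  · subst hx
    rw [hasDerivAt_iff_tendsto_slope]
    simp only [Real.sign_zero, mul_zero]
    have hb : ∀ y : ℝ, y ≠ 0 → |slope (fun y : ℝ => |y| ^ p) 0 y| ≤ |y| ^ (p - 1) := by
      intro y hy
      rw [slope_def_field]
      simp only [abs_zero, Real.zero_rpow (by positivity : p ≠ 0), sub_zero, zero_sub]
      rw [div_eq_mul_inv, abs_mul, abs_inv,
        abs_of_nonneg (Real.rpow_nonneg (abs_nonneg y) p),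
        Real.rpow_sub (abs_pos.2 hy), Real.rpow_one, div_eq_mul_inv]
    apply squeeze_zero_norm' (a := fun y : ℝ => |y| ^ (p - 1)) (t₀ := 𝓝[≠] (0:ℝ))
      (f := slope (fun y : ℝ => |y| ^ p) 0)
    · filter_upwards [self_mem_nhdsWithin] with y hy using hb y hy
    · have hc : ContinuousAt (fun y : ℝ => |y| ^ (p - 1)) 0 :=
        continuous_abs.continuousAt.rpow_const (Or.inr (by linarith))
      have := hc.tendsto.mono_left (nhdsWithin_le_nhds (s := {(0:ℝ)}ᶜ))
      simpa [Real.zero_rpow (show p - 1 ≠ 0 by linarith)] using this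
  · have h1 : HasDerivAt (fun y : ℝ => y ^ p) (p * x ^ (p - 1)) x :=
      Real.hasDerivAt_rpow_const (Or.inl (ne_of_gt hx))
    have h2 : (fun y : ℝ => |y| ^ p) =ᶠ[𝓝 x] fun y => y ^ p := by
      filter_upwards [eventually_gt_nhds hx] with y hy
      rw [abs_of_pos hy]
    have := h1.congr_of_eventuallyEq h2
    simpa [abs_of_pos hx, Real.sign_of_pos hx] using this

private lemma hardy_sign_bound (x : ℝ) : |Real.sign x| ≤ 1 := by
  rcases lt_trichotomy x 0 with h | h | h
  · simp [Real.sign_of_neg h]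
  · simp [h]
  · simp [Real.sign_of_pos h]

private lemma hardy_phi'_continuous (p : ℝ) (hp : 1 < p) :
    Continuous (fun x : ℝ => p * |x| ^ (p - 1) * Real.sign x) := by
  rw [continuous_iff_continuousAt]
  intro x
  rcases lt_trichotomy x 0 with hx | hx | hx
  · have h : (fun x : ℝ => p * |x| ^ (p - 1) * Real.sign x) =ᶠ[𝓝 x]
        fun x => p * |x| ^ (p - 1) * (-1) := by
      filter_upwards [eventually_lt_nhds hx] with y hy
      rw [Real.sign_of_neg hy]
    refine ContinuousAt.congr ?_ h.symm
    exact ((continuous_const.mul (continuous_abs.rpow_const (fun y => Or.inr (by linarith)))).mul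
      continuous_const).continuousAt
  · subst hx
    have ht : Tendsto (fun x : ℝ => p * |x| ^ (p - 1) * Real.sign x) (𝓝 0) (𝓝 0) := by
      apply squeeze_zero_norm (a := fun x : ℝ => p * |x| ^ (p - 1))
      · intro y
        calc ‖p * |y| ^ (p - 1) * Real.sign y‖ = (p * |y| ^ (p - 1)) * |Real.sign y| := by
              rw [Real.norm_eq_abs, abs_mul, abs_of_nonneg (by positivity)]
          _ ≤ (p * |y| ^ (p - 1)) * 1 := by
              apply mul_le_mul_of_nonneg_left (hardy_sign_bound y) (by positivity)
          _ = p * |y| ^ (p - 1) := mul_one _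
      · have hc : ContinuousAt (fun y : ℝ => p * |y| ^ (p - 1)) 0 :=
          continuous_const.continuousAt.mul
            (continuous_abs.continuousAt.rpow_const (Or.inr (by linarith)))
        simpa [Real.zero_rpow (show p - 1 ≠ 0 by linarith)] using hc.tendsto
    unfold ContinuousAt
    simpa [Real.sign_zero, Real.zero_rpow (show p - 1 ≠ 0 by linarith)] using ht
  · have h : (fun x : ℝ => p * |x| ^ (p - 1) * Real.sign x) =ᶠ[𝓝 x]
        fun x => p * |x| ^ (p - 1) * 1 := by
      filter_upwards [eventually_gt_nhds hx] with y hy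
      rw [Real.sign_of_pos hy]
    refine ContinuousAt.congr ?_ h.symm
    exact ((continuous_const.mul (continuous_abs.rpow_const (fun y => Or.inr (by linarith)))).mul
      continuous_const).continuousAt

private lemma hardy_superadd (q a c : ℝ) (hq : 1 ≤ q) (ha : 0 ≤ a) (hc : 0 ≤ c) :
    a ^ q + c ^ q ≤ (a + c) ^ q := by
  have := NNReal.add_rpow_le_rpow_add (a.toNNReal) (c.toNNReal) hq
  have h2 : ((a.toNNReal + c.toNNReal : ℝ≥0) : ℝ) = a + c := by
    simp [Real.coe_toNNReal a ha, Real.coe_toNNReal c hc]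
  calc a ^ q + c ^ q = ((a.toNNReal ^ q + c.toNNReal ^ q : ℝ≥0) : ℝ) := by
        push_cast
        rw [Real.coe_toNNReal a ha, Real.coe_toNNReal c hc]
    _ ≤ (((a.toNNReal + c.toNNReal) ^ q : ℝ≥0) : ℝ) := by exact_mod_cast this
    _ = (a + c) ^ q := by rw [NNReal.coe_rpow, h2]

private lemma ftc_chain (b : ℝ) (hb : 0 < b) (g : ℝ → ℝ) (hg : Integrable g)
    (c : ℝ) (Φ Φ' : ℝ → ℝ) (hΦ : ∀ x, HasDerivAt Φ (Φ' x) x) (hΦ'c : Continuous Φ')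
    (φ ψ : ℝ → ℝ) (hφ : ∀ t ∈ Icc (0:ℝ) b, HasDerivAt φ (ψ t) t)
    (hψ : ContinuousOn ψ (Icc (0:ℝ) b)) :
    Φ (c + ∫ s in (0:ℝ)..b, g s) * φ b - Φ c * φ 0 =
      (∫ t in Ioc (0:ℝ) b, Φ' (c + ∫ s in (0:ℝ)..t, g s) * g t * φ t)
        + ∫ t in Ioc (0:ℝ) b, Φ (c + ∫ s in (0:ℝ)..t, g s) * ψ t := by
  set u : ℝ → ℝ := fun t => c + ∫ s in (0:ℝ)..t, g s with hu
  have hΦc : Continuous Φ := continuous_iff_continuousAt.2 fun x => (hΦ x).continuousAt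
  have hucont : Continuous u :=
    continuous_const.add (intervalIntegral.continuous_primitive
      (fun a b => hg.intervalIntegrable) 0)
  have hφcont : ContinuousOn φ (Icc (0:ℝ) b) :=
    fun t ht => ((hφ t ht).continuousAt).continuousWithinAt
  obtain ⟨M₀, hM₀⟩ := (isCompact_Icc (a := (0:ℝ)) (b := b)).exists_bound_of_continuousOn
    hucont.continuousOn
  set M : ℝ := max M₀ 0 + 1 with hM
  have hMu : ∀ t ∈ Icc (0:ℝ) b, |u t| ≤ M - 1 := by
    intro t ht
    have := hM₀ t ht
    rw [Real.norm_eq_abs] at this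
    simp only [hM]
    calc |u t| ≤ M₀ := this
      _ ≤ max M₀ 0 + 1 - 1 := by simp
  have hM1 : (1:ℝ) ≤ M := by
    have : (0:ℝ) ≤ max M₀ 0 := le_max_right _ _
    simp only [hM]; linarith
  obtain ⟨K₁, hK₁⟩ := (isCompact_Icc (a := -M) (b := M)).exists_bound_of_continuousOn
    hΦc.continuousOn
  obtain ⟨K₂, hK₂⟩ := (isCompact_Icc (a := -M) (b := M)).exists_bound_of_continuousOn
    hΦ'c.continuousOn
  obtain ⟨K₃, hK₃⟩ := (isCompact_Icc (a := (0:ℝ)) (b := b)).exists_bound_of_continuousOn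
    hφcont
  set KΦ := max K₁ 0 with hKΦdef
  set KΦ' := max K₂ 0 with hKΦ'def
  set Kφ := max K₃ 0 with hKφdef
  have hKΦ : ∀ x ∈ Icc (-M) M, |Φ x| ≤ KΦ := fun x hx =>
    le_trans (by rw [← Real.norm_eq_abs]; exact hK₁ x hx) (le_max_left _ _)
  have hKΦ' : ∀ x ∈ Icc (-M) M, |Φ' x| ≤ KΦ' := fun x hx =>
    le_trans (by rw [← Real.norm_eq_abs]; exact hK₂ x hx) (le_max_left _ _)
  have hKφ : ∀ t ∈ Icc (0:ℝ) b, |φ t| ≤ Kφ := fun x hx =>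
    le_trans (by rw [← Real.norm_eq_abs]; exact hK₃ x hx) (le_max_left _ _)
  have hKΦ0 : 0 ≤ KΦ := le_max_right _ _
  have hKΦ'0 : 0 ≤ KΦ' := le_max_right _ _
  have hKφ0 : 0 ≤ Kφ := le_max_right _ _
  have hex : ∀ n : ℕ, ∃ h : ℝ → ℝ, Continuous h ∧ Integrable h ∧
      (∫ x, |g x - h x|) ≤ 1 / (n + 1) := by
    intro n
    obtain ⟨h, -, hle, hcont, hint⟩ :=
      hg.exists_hasCompactSupport_integral_sub_le (ε := 1 / (n + 1)) (by positivity)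
    exact ⟨h, hcont, hint, by simpa [Real.norm_eq_abs] using hle⟩
  choose h hcont hint hdist using hex
  set v : ℕ → ℝ → ℝ := fun n t => c + ∫ s in (0:ℝ)..t, h n s with hv
  have hvderiv : ∀ n t, HasDerivAt (v n) (h n t) t := by
    intro n t
    exact (intervalIntegral.integral_hasDerivAt_right
      ((hcont n).intervalIntegrable _ _)
      ((hcont n).stronglyMeasurable.stronglyMeasurableAtFilter)
      (hcont n).continuousAt).const_add c
  have hvcont : ∀ n, Continuous (v n) := fun n =>
    continuous_iff_continuousAt.2 fun t => (hvderiv n t).continuousAt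
  have hclose : ∀ n, ∀ t ∈ Icc (0:ℝ) b, |v n t - u t| ≤ 1 / (n + 1) := by
    intro n t ht
    have hsub : v n t - u t = ∫ s in (0:ℝ)..t, (h n s - g s) := by
      rw [intervalIntegral.integral_sub ((hint n).intervalIntegrable)
        (hg.intervalIntegrable)]
      simp only [hv, hu]
      ring
    rw [hsub]
    calc |∫ s in (0:ℝ)..t, (h n s - g s)| ≤ ∫ s in (0:ℝ)..t, |h n s - g s| :=
        intervalIntegral.abs_integral_le_integral_abs ht.1
      _ = ∫ s in Ioc (0:ℝ) t, |h n s - g s| := intervalIntegral.integral_of_le ht.1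
      _ ≤ ∫ s, |h n s - g s| := setIntegral_le_integral ((hint n).sub hg).abs
          (ae_of_all _ fun x => abs_nonneg _)
      _ = ∫ s, |g s - h n s| := by simp_rw [abs_sub_comm]
      _ ≤ 1 / (n + 1) := hdist n
  have htend : ∀ t ∈ Icc (0:ℝ) b, Tendsto (fun n => v n t) atTop (𝓝 (u t)) := by
    intro t ht
    rw [tendsto_iff_dist_tendsto_zero]
    exact squeeze_zero (fun n => dist_nonneg)
      (fun n => by rw [Real.dist_eq]; exact hclose n t ht)
      tendsto_one_div_add_atTop_nhds_zero_nat
  have hvmem : ∀ n, ∀ t ∈ Icc (0:ℝ) b, v n t ∈ Icc (-M) M := by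
    intro n t ht
    refine abs_le.1 ?_
    have h1 : |v n t| ≤ |u t| + |v n t - u t| := by
      calc |v n t| = |u t + (v n t - u t)| := by ring_nf
        _ ≤ |u t| + |v n t - u t| := abs_add_le _ _
    have h2 : (1:ℝ) / (n + 1) ≤ 1 := by
      rw [div_le_one (by positivity)]
      simp
    have := hclose n t ht
    have := hMu t ht
    linarith
  have humem : ∀ t ∈ Icc (0:ℝ) b, u t ∈ Icc (-M) M := fun t ht =>
    abs_le.1 (le_trans (hMu t ht) (by linarith))
  have hIoc : MeasurableSet (Ioc (0:ℝ) b) := measurableSet_Ioc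
  have hsubset : Ioc (0:ℝ) b ⊆ Icc 0 b := Ioc_subset_Icc_self
  -- FTC for each n
  have key : ∀ n, Φ (v n b) * φ b - Φ (v n 0) * φ 0 =
      ∫ t in Ioc (0:ℝ) b, (Φ' (v n t) * h n t * φ t + Φ (v n t) * ψ t) := by
    intro n
    have hderiv : ∀ t ∈ uIcc (0:ℝ) b,
        HasDerivAt (fun t => Φ (v n t) * φ t)
          (Φ' (v n t) * h n t * φ t + Φ (v n t) * ψ t) t := by
      intro t ht
      rw [uIcc_of_le hb.le] at ht
      exact ((hΦ (v n t)).comp t (hvderiv n t)).mul (hφ t ht)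
    have hci : ContinuousOn (fun t => Φ' (v n t) * h n t * φ t + Φ (v n t) * ψ t)
        (Icc (0:ℝ) b) :=
      ((((hΦ'c.comp (hvcont n)).continuousOn.mul (hcont n).continuousOn).mul hφcont).add
        (((hΦc.comp (hvcont n)).continuousOn).mul hψ))
    have hintg : IntervalIntegrable
        (fun t => Φ' (v n t) * h n t * φ t + Φ (v n t) * ψ t) volume 0 b := by
      apply ContinuousOn.intervalIntegrable
      rwa [uIcc_of_le hb.le]
    have := intervalIntegral.integral_eq_sub_of_hasDerivAt hderiv hintg
    rw [intervalIntegral.integral_of_le hb.le] at this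
    rw [← this]
  -- integrabilities
  have iA : ∀ n, IntegrableOn (fun t => Φ' (v n t) * h n t * φ t) (Ioc (0:ℝ) b) := fun n =>
    ((((hΦ'c.comp (hvcont n)).continuousOn.mul (hcont n).continuousOn).mul
      hφcont).integrableOn_Icc).mono_set hsubset
  have iB : ∀ n, IntegrableOn (fun t => Φ (v n t) * ψ t) (Ioc (0:ℝ) b) := fun n =>
    ((((hΦc.comp (hvcont n)).continuousOn).mul hψ).integrableOn_Icc).mono_set hsubset
  have iAg : ∀ n, IntegrableOn (fun t => Φ' (v n t) * g t * φ t) (Ioc (0:ℝ) b) := by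
    intro n
    have heq : (fun t => Φ' (v n t) * g t * φ t) = fun t => (Φ' (v n t) * φ t) * g t := by
      funext t; ring
    rw [heq]
    apply Integrable.bdd_mul (c := KΦ' * Kφ) hg.integrableOn
    · exact ((((hΦ'c.comp (hvcont n)).continuousOn.mul hφcont)).mono
        hsubset).aestronglyMeasurable hIoc
    · rw [ae_restrict_iff' hIoc]
      refine ae_of_all _ fun t ht => ?_
      have ht' := hsubset ht
      rw [Real.norm_eq_abs, abs_mul]
      exact mul_le_mul (hKΦ' _ (hvmem n t ht')) (hKφ t ht') (abs_nonneg _) hKΦ'0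
  have iAu : IntegrableOn (fun t => Φ' (u t) * g t * φ t) (Ioc (0:ℝ) b) := by
    have heq : (fun t => Φ' (u t) * g t * φ t) = fun t => (Φ' (u t) * φ t) * g t := by
      funext t; ring
    rw [heq]
    apply Integrable.bdd_mul (c := KΦ' * Kφ) hg.integrableOn
    · exact ((((hΦ'c.comp hucont).continuousOn.mul hφcont)).mono
        hsubset).aestronglyMeasurable hIoc
    · rw [ae_restrict_iff' hIoc]
      refine ae_of_all _ fun t ht => ?_
      have ht' := hsubset ht
      rw [Real.norm_eq_abs, abs_mul]
      exact mul_le_mul (hKΦ' _ (humem t ht')) (hKφ t ht') (abs_nonneg _) hKΦ'0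
  have iBu : IntegrableOn (fun t => Φ (u t) * ψ t) (Ioc (0:ℝ) b) :=
    (((hΦc.comp hucont).continuousOn.mul hψ).integrableOn_Icc).mono_set hsubset
  -- limits
  have T1 : Tendsto (fun n => ∫ t in Ioc (0:ℝ) b, Φ (v n t) * ψ t) atTop
      (𝓝 (∫ t in Ioc (0:ℝ) b, Φ (u t) * ψ t)) := by
    apply tendsto_integral_of_dominated_convergence (bound := fun t => KΦ * |ψ t|)
    · intro n; exact (iB n).aestronglyMeasurable
    · exact (((continuous_const.continuousOn (s := Icc (0:ℝ) b)).mul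
        hψ.abs).integrableOn_Icc).mono_set hsubset
    · intro n
      rw [ae_restrict_iff' hIoc]
      refine ae_of_all _ fun t ht => ?_
      rw [Real.norm_eq_abs, abs_mul]
      exact mul_le_mul_of_nonneg_right (hKΦ _ (hvmem n t (hsubset ht))) (abs_nonneg _)
    · rw [ae_restrict_iff' hIoc]
      refine ae_of_all _ fun t ht => ?_
      exact (hΦc.continuousAt.tendsto.comp (htend t (hsubset ht))).mul_const (ψ t)
  have T2a : Tendsto (fun n => ∫ t in Ioc (0:ℝ) b, Φ' (v n t) * g t * φ t) atTop
      (𝓝 (∫ t in Ioc (0:ℝ) b, Φ' (u t) * g t * φ t)) := by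
    apply tendsto_integral_of_dominated_convergence (bound := fun t => KΦ' * Kφ * |g t|)
    · intro n; exact (iAg n).aestronglyMeasurable
    · exact (hg.abs.integrableOn).const_mul _
    · intro n
      rw [ae_restrict_iff' hIoc]
      refine ae_of_all _ fun t ht => ?_
      have ht' := hsubset ht
      rw [Real.norm_eq_abs, abs_mul, abs_mul]
      have h1 : |Φ' (v n t)| ≤ KΦ' := hKΦ' _ (hvmem n t ht')
      have h2 : |φ t| ≤ Kφ := hKφ t ht'
      calc |Φ' (v n t)| * |g t| * |φ t| ≤ (KΦ' * |g t|) * Kφ := by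
            apply mul_le_mul _ h2 (abs_nonneg _) (by positivity)
            exact mul_le_mul_of_nonneg_right h1 (abs_nonneg _)
        _ = KΦ' * Kφ * |g t| := by ring
    · rw [ae_restrict_iff' hIoc]
      refine ae_of_all _ fun t ht => ?_
      exact ((hΦ'c.continuousAt.tendsto.comp (htend t (hsubset ht))).mul_const
        (g t)).mul_const (φ t)
  have T2b : Tendsto (fun n => (∫ t in Ioc (0:ℝ) b, Φ' (v n t) * h n t * φ t)
      - ∫ t in Ioc (0:ℝ) b, Φ' (v n t) * g t * φ t) atTop (𝓝 0) := by
    apply squeeze_zero_norm (a := fun n : ℕ => (KΦ' * Kφ) * (1 / (n + 1)))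
    · intro n
      calc ‖(∫ t in Ioc (0:ℝ) b, Φ' (v n t) * h n t * φ t)
            - ∫ t in Ioc (0:ℝ) b, Φ' (v n t) * g t * φ t‖
          = ‖∫ t in Ioc (0:ℝ) b, (Φ' (v n t) * h n t * φ t - Φ' (v n t) * g t * φ t)‖ := by
            rw [integral_sub (iA n) (iAg n)]
        _ ≤ ∫ t in Ioc (0:ℝ) b, ‖Φ' (v n t) * h n t * φ t - Φ' (v n t) * g t * φ t‖ :=
            norm_integral_le_integral_norm _
        _ ≤ ∫ t in Ioc (0:ℝ) b, (KΦ' * Kφ) * |h n t - g t| := by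
            apply setIntegral_mono_on ?_ ?_ hIoc ?_
            · exact ((iA n).sub (iAg n)).norm
            · exact (((hint n).sub hg).abs.integrableOn).const_mul _
            · intro t ht
              have ht' := hsubset ht
              have heq : Φ' (v n t) * h n t * φ t - Φ' (v n t) * g t * φ t
                  = (Φ' (v n t) * φ t) * (h n t - g t) := by ring
              rw [heq, Real.norm_eq_abs, abs_mul, abs_mul]
              have h1 : |Φ' (v n t)| ≤ KΦ' := hKΦ' _ (hvmem n t ht')
              have h2 : |φ t| ≤ Kφ := hKφ t ht'
              calc |Φ' (v n t)| * |φ t| * |h n t - g t| ≤ (KΦ' * Kφ) * |h n t - g t| := by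
                    apply mul_le_mul_of_nonneg_right _ (abs_nonneg _)
                    exact mul_le_mul h1 h2 (abs_nonneg _) hKΦ'0
                _ = KΦ' * Kφ * |h n t - g t| := by ring
        _ = (KΦ' * Kφ) * ∫ t in Ioc (0:ℝ) b, |h n t - g t| := integral_const_mul _ _
        _ ≤ (KΦ' * Kφ) * (1 / (n + 1)) := by
            apply mul_le_mul_of_nonneg_left _ (by positivity)
            calc ∫ t in Ioc (0:ℝ) b, |h n t - g t| ≤ ∫ t, |h n t - g t| :=
                setIntegral_le_integral ((hint n).sub hg).abs
                  (ae_of_all _ fun x => abs_nonneg _)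
              _ = ∫ t, |g t - h n t| := by simp_rw [abs_sub_comm]
              _ ≤ 1 / (n + 1) := hdist n
    · simpa using tendsto_one_div_add_atTop_nhds_zero_nat.const_mul (KΦ' * Kφ)
  have T2 : Tendsto (fun n => ∫ t in Ioc (0:ℝ) b, Φ' (v n t) * h n t * φ t) atTop
      (𝓝 (∫ t in Ioc (0:ℝ) b, Φ' (u t) * g t * φ t)) := by
    have := T2b.add T2a
    simpa using this
  have hv0 : ∀ n, v n 0 = c := fun n => by simp [hv]
  have TL : Tendsto (fun n => Φ (v n b) * φ b - Φ (v n 0) * φ 0) atTop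
      (𝓝 (Φ (u b) * φ b - Φ c * φ 0)) := by
    have h1 : Tendsto (fun n => Φ (v n b)) atTop (𝓝 (Φ (u b))) :=
      hΦc.continuousAt.tendsto.comp (htend b (right_mem_Icc.2 hb.le))
    simp_rw [hv0]
    exact (h1.mul_const (φ b)).sub_const (Φ c * φ 0)
  have TR : Tendsto (fun n => Φ (v n b) * φ b - Φ (v n 0) * φ 0) atTop
      (𝓝 ((∫ t in Ioc (0:ℝ) b, Φ' (u t) * g t * φ t)
        + ∫ t in Ioc (0:ℝ) b, Φ (u t) * ψ t)) := by
    have heq : ∀ n, Φ (v n b) * φ b - Φ (v n 0) * φ 0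
        = (∫ t in Ioc (0:ℝ) b, Φ' (v n t) * h n t * φ t)
          + ∫ t in Ioc (0:ℝ) b, Φ (v n t) * ψ t := by
      intro n
      rw [key n, integral_add (iA n) (iB n)]
    simp_rw [heq]
    exact T2.add T1
  exact tendsto_nhds_unique TL TR

private lemma hardy_core (p b σ α Cp : ℝ) (hp : 1 < p) (hb : 0 < b) (hσ : 0 < σ)
    (hα : α = (p - 1) / p * σ ^ (1 / (1 - p))) (hCp : Cp = ((p - 1) / p) ^ p)
    (g : ℝ → ℝ) (hg : Integrable g) (c : ℝ) (u : ℝ → ℝ)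
    (hu : ∀ t, u t = c + ∫ s in (0:ℝ)..t, g s)
    (hgp : IntegrableOn (fun t => |g t| ^ p) (Ioc (0:ℝ) b)) :
    Cp * (∫ t in Ioc (0:ℝ) b, |u t| ^ p / (t + α) ^ p)
      + ((p - 1) * Cp / (b + α) ^ p) * ∫ t in Ioc (0:ℝ) b, |u t| ^ p
      ≤ (∫ t in Ioc (0:ℝ) b, |g t| ^ p) + σ * |c| ^ p := by
  have hufun : u = fun t => c + ∫ s in (0:ℝ)..t, g s := funext hu
  have hp0 : (0:ℝ) < p := by linarith
  set β : ℝ := (p - 1) / p with hβdef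
  have hβ0 : 0 < β := div_pos (by linarith) hp0
  have hα0 : 0 < α := by
    rw [hα]
    exact mul_pos hβ0 (Real.rpow_pos_of_pos hσ _)
  have htα : ∀ t ∈ Icc (0:ℝ) b, 0 < t + α := fun t ht => by
    have := ht.1; linarith
  have hbα : 0 < b + α := by linarith
  have hCp0 : 0 < Cp := by rw [hCp]; exact Real.rpow_pos_of_pos hβ0 p
  set q : ℝ := p / (p - 1) with hqdef
  have hpq : p.HolderConjugate q := (Real.holderConjugate_iff_eq_conjExponent hp).2 hqdef
  have hq1 : 1 < q := by
    rw [hqdef, lt_div_iff₀ (by linarith : (0:ℝ) < p - 1)]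
    linarith
  have hq0 : 0 < q := by linarith
  have hpq' : (p - 1) * q = p := by
    rw [hqdef, mul_comm]
    exact div_mul_cancel₀ p (by linarith : p - 1 ≠ (0:ℝ))
  have h1pq : (1 - p) * q = -p := by
    have hr : (1 - p) * q = -((p - 1) * q) := by ring
    rw [hr, hpq']
  have hpdq : p / q = p - 1 := by
    rw [div_eq_iff hq0.ne']
    linarith [hpq']
  set K : ℝ := β ^ (p - 1) with hKdef
  have hK0 : 0 ≤ K := Real.rpow_nonneg hβ0.le _
  set y : ℝ := (b + α) ^ (1 - p) with hydef
  have hy0 : 0 ≤ y := Real.rpow_nonneg hbα.le _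
  set φ : ℝ → ℝ := fun t => K * ((t + α) ^ (1 - p) - y) with hφdef
  set ψ : ℝ → ℝ := fun t => K * ((1 - p) * (t + α) ^ (-p)) with hψdef
  set Φ : ℝ → ℝ := fun x => |x| ^ p with hΦdef
  set Φ' : ℝ → ℝ := fun x => p * |x| ^ (p - 1) * Real.sign x with hΦ'def
  have hΦd : ∀ x, HasDerivAt Φ (Φ' x) x := hardy_abs_rpow_hasDerivAt p hp
  have hΦ'c : Continuous Φ' := hardy_phi'_continuous p hp
  have hΦc : Continuous Φ := continuous_iff_continuousAt.2 fun x => (hΦd x).continuousAt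
  have hφd : ∀ t ∈ Icc (0:ℝ) b, HasDerivAt φ (ψ t) t := by
    intro t ht
    have hne : t + α ≠ 0 := ne_of_gt (htα t ht)
    have h0 : HasDerivAt (fun t : ℝ => (t + α) ^ (1 - p)) ((1 - p) * (t + α) ^ (-p)) t := by
      have := (Real.hasDerivAt_rpow_const (p := 1 - p) (x := t + α) (Or.inl hne)).comp t
        ((hasDerivAt_id t).add_const α)
      have hexp : (1 - p) - 1 = -p := by ring
      simpa [hexp, Function.comp_def] using this
    simpa [hψdef, mul_comm] using (h0.sub_const y).const_mul K
  have hψc : ContinuousOn ψ (Icc (0:ℝ) b) := by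
    apply continuousOn_const.mul (continuousOn_const.mul ?_)
    intro t ht
    exact ((continuousAt_id.add continuousAt_const).rpow_const
      (Or.inl (ne_of_gt (htα t ht)))).continuousWithinAt
  have hucont : Continuous u := by
    rw [hufun]
    exact continuous_const.add
      (intervalIntegral.continuous_primitive (fun a b => hg.intervalIntegrable) 0)
  have hyx : ∀ t ∈ Icc (0:ℝ) b, y ≤ (t + α) ^ (1 - p) := by
    intro t ht
    exact Real.rpow_le_rpow_of_nonpos (htα t ht) (by linarith [ht.2]) (by linarith)
  have hφ0 : ∀ t ∈ Icc (0:ℝ) b, 0 ≤ φ t := fun t ht =>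
    mul_nonneg hK0 (sub_nonneg.2 (hyx t ht))
  have hφb : φ b = 0 := by simp [hφdef, hydef]
  have hpβ : p * β = p - 1 := by
    rw [hβdef]; field_simp
  have hCpKβ : Cp = K * β := by
    rw [hCp, hKdef, ← Real.rpow_add_one hβ0.ne' (p - 1)]
    norm_num
  have hKp : K * (p - 1) = p * Cp := by
    rw [hCpKβ, ← hpβ]; ring
  have hKq : K ^ q = Cp := by
    rw [hKdef, ← Real.rpow_mul hβ0.le, hpq', hCp]
  have hφq : ∀ t ∈ Icc (0:ℝ) b, (φ t) ^ q ≤ Cp * ((t + α) ^ (-p) - (b + α) ^ (-p)) := by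
    intro t ht
    have hxy : 0 ≤ (t + α) ^ (1 - p) - y := sub_nonneg.2 (hyx t ht)
    have h1 : (φ t) ^ q = K ^ q * ((t + α) ^ (1 - p) - y) ^ q := by
      simp only [hφdef]
      exact Real.mul_rpow hK0 hxy
    have h2 : ((t + α) ^ (1 - p) - y) ^ q ≤ ((t + α) ^ (1 - p)) ^ q - y ^ q := by
      have hs := hardy_superadd q ((t + α) ^ (1 - p) - y) y hq1.le hxy hy0
      rw [sub_add_cancel] at hs
      linarith
    have h3 : ((t + α) ^ (1 - p)) ^ q = (t + α) ^ (-p) := by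
      rw [← Real.rpow_mul (htα t ht).le, h1pq]
    have h4 : y ^ q = (b + α) ^ (-p) := by
      rw [hydef, ← Real.rpow_mul hbα.le, h1pq]
    calc (φ t) ^ q = K ^ q * ((t + α) ^ (1 - p) - y) ^ q := h1
      _ ≤ K ^ q * (((t + α) ^ (1 - p)) ^ q - y ^ q) :=
          mul_le_mul_of_nonneg_left h2 (Real.rpow_nonneg hK0 q)
      _ = Cp * ((t + α) ^ (-p) - (b + α) ^ (-p)) := by rw [hKq, h3, h4]
  have hφ0σ : φ 0 ≤ σ := by
    have h1 : φ 0 ≤ K * α ^ (1 - p) := by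
      simp only [hφdef, zero_add]
      have h2 : α ^ (1 - p) - y ≤ α ^ (1 - p) := by linarith
      exact mul_le_mul_of_nonneg_left h2 hK0
    have h2 : K * α ^ (1 - p) = σ := by
      have hσ1 : (σ ^ (1 / (1 - p))) ^ (1 - p) = σ := by
        rw [← Real.rpow_mul hσ.le, one_div_mul_cancel (by linarith : (1:ℝ) - p ≠ 0),
          Real.rpow_one]
      rw [hα, Real.mul_rpow hβ0.le (Real.rpow_nonneg hσ.le _), hσ1, hKdef,
        ← mul_assoc, ← Real.rpow_add hβ0]
      have h3 : p - 1 + (1 - p) = 0 := by ring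
      rw [h3, Real.rpow_zero, one_mul]
    linarith
  have hsign : ∀ x : ℝ, |Φ' x| ≤ p * |x| ^ (p - 1) := by
    intro x
    simp only [hΦ'def]
    calc |p * |x| ^ (p - 1) * Real.sign x| = (p * |x| ^ (p - 1)) * |Real.sign x| := by
          rw [abs_mul, abs_of_nonneg (by positivity)]
      _ ≤ (p * |x| ^ (p - 1)) * 1 :=
          mul_le_mul_of_nonneg_left (hardy_sign_bound x) (by positivity)
      _ = p * |x| ^ (p - 1) := mul_one _
  have hY : ∀ t ∈ Icc (0:ℝ) b, Φ' (u t) * g t * φ t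
      ≤ |g t| ^ p + (p - 1) * Cp * ((t + α) ^ (-p) - (b + α) ^ (-p)) * (|u t| ^ p) := by
    intro t ht
    have hX0 : 0 ≤ |u t| ^ (p - 1) * φ t :=
      mul_nonneg (Real.rpow_nonneg (abs_nonneg _) _) (hφ0 t ht)
    have hyoung := Real.young_inequality_of_nonneg (abs_nonneg (g t)) hX0 hpq
    have hXq : (|u t| ^ (p - 1) * φ t) ^ q = |u t| ^ p * (φ t) ^ q := by
      rw [Real.mul_rpow (Real.rpow_nonneg (abs_nonneg _) _) (hφ0 t ht),
        ← Real.rpow_mul (abs_nonneg _), hpq']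
    have h1 : Φ' (u t) * g t * φ t ≤ p * (|g t| * (|u t| ^ (p - 1) * φ t)) := by
      calc Φ' (u t) * g t * φ t ≤ |Φ' (u t) * g t * φ t| := le_abs_self _
        _ = |Φ' (u t)| * |g t| * φ t := by
            rw [abs_mul, abs_mul, abs_of_nonneg (hφ0 t ht)]
        _ ≤ (p * |u t| ^ (p - 1)) * |g t| * φ t := by
            apply mul_le_mul_of_nonneg_right
              (mul_le_mul_of_nonneg_right (hsign (u t)) (abs_nonneg _)) (hφ0 t ht)
        _ = p * (|g t| * (|u t| ^ (p - 1) * φ t)) := by ring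
    have h2 : p * (|g t| * (|u t| ^ (p - 1) * φ t))
        ≤ |g t| ^ p + (p - 1) * (|u t| ^ p * (φ t) ^ q) := by
      have hm := mul_le_mul_of_nonneg_left hyoung hp0.le
      calc p * (|g t| * (|u t| ^ (p - 1) * φ t))
          ≤ p * (|g t| ^ p / p + (|u t| ^ (p - 1) * φ t) ^ q / q) := hm
        _ = |g t| ^ p + (p / q) * ((|u t| ^ (p - 1) * φ t) ^ q) := by
            field_simp
        _ = |g t| ^ p + (p - 1) * (|u t| ^ p * (φ t) ^ q) := by rw [hpdq, hXq]
    have h3 : (p - 1) * (|u t| ^ p * (φ t) ^ q)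
        ≤ (p - 1) * Cp * ((t + α) ^ (-p) - (b + α) ^ (-p)) * (|u t| ^ p) := by
      have hm := mul_le_mul_of_nonneg_left (hφq t ht) (Real.rpow_nonneg (abs_nonneg (u t)) p)
      have hm2 := mul_le_mul_of_nonneg_left hm (by linarith : (0:ℝ) ≤ p - 1)
      calc (p - 1) * (|u t| ^ p * (φ t) ^ q)
          ≤ (p - 1) * (|u t| ^ p * (Cp * ((t + α) ^ (-p) - (b + α) ^ (-p)))) := hm2
        _ = (p - 1) * Cp * ((t + α) ^ (-p) - (b + α) ^ (-p)) * (|u t| ^ p) := by ring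
    linarith
  -- FTC identity
  have E : Φ (u b) * φ b - Φ c * φ 0 =
      (∫ t in Ioc (0:ℝ) b, Φ' (u t) * g t * φ t)
        + ∫ t in Ioc (0:ℝ) b, Φ (u t) * ψ t := by
    have hE := ftc_chain b hb g hg c Φ Φ' hΦd hΦ'c φ ψ hφd hψc
    simp_rw [← hu] at hE
    exact hE
  have hIoc : MeasurableSet (Ioc (0:ℝ) b) := measurableSet_Ioc
  have hsub : Ioc (0:ℝ) b ⊆ Icc 0 b := Ioc_subset_Icc_self
  have hφcont : ContinuousOn φ (Icc (0:ℝ) b) :=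
    fun t ht => ((hφd t ht).continuousAt).continuousWithinAt
  have hwcont : ContinuousOn (fun t : ℝ => (t + α) ^ (-p)) (Icc (0:ℝ) b) := by
    intro t ht
    exact ((continuousAt_id.add continuousAt_const).rpow_const
      (Or.inl (ne_of_gt (htα t ht)))).continuousWithinAt
  have iI2 : IntegrableOn (fun t => |u t| ^ p * (t + α) ^ (-p)) (Ioc (0:ℝ) b) :=
    ((((hΦc.comp hucont).continuousOn).mul hwcont).integrableOn_Icc).mono_set hsub
  have iI3 : IntegrableOn (fun t => |u t| ^ p) (Ioc (0:ℝ) b) :=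
    (((hΦc.comp hucont).continuousOn).integrableOn_Icc).mono_set hsub
  -- bounds for integrability of the Young term
  obtain ⟨K₂, hK₂⟩ := (isCompact_Icc (a := (0:ℝ)) (b := b)).exists_bound_of_continuousOn
    ((hΦ'c.comp hucont).continuousOn (s := Icc 0 b))
  obtain ⟨K₃, hK₃⟩ := (isCompact_Icc (a := (0:ℝ)) (b := b)).exists_bound_of_continuousOn hφcont
  have iA : IntegrableOn (fun t => Φ' (u t) * g t * φ t) (Ioc (0:ℝ) b) := by
    have heq : (fun t => Φ' (u t) * g t * φ t) = fun t => (Φ' (u t) * φ t) * g t := by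
      funext t; ring
    rw [heq]
    apply Integrable.bdd_mul (c := max K₂ 0 * max K₃ 0) hg.integrableOn
    · exact ((((hΦ'c.comp hucont).continuousOn (s := Icc 0 b)).mul hφcont).mono
        hsub).aestronglyMeasurable hIoc
    · rw [ae_restrict_iff' hIoc]
      refine ae_of_all _ fun t ht => ?_
      have ht' := hsub ht
      rw [Real.norm_eq_abs, abs_mul]
      apply mul_le_mul
      · exact le_trans (hK₂ t ht') (le_max_left _ _)
      · exact le_trans (hK₃ t ht') (le_max_left _ _)
      · exact abs_nonneg _
      · exact le_max_right _ _
  have iY2 : IntegrableOn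
      (fun t => (p - 1) * Cp * ((t + α) ^ (-p) - (b + α) ^ (-p)) * (|u t| ^ p))
      (Ioc (0:ℝ) b) :=
    (((continuousOn_const.mul (hwcont.sub continuousOn_const)).mul
      ((hΦc.comp hucont).continuousOn)).integrableOn_Icc).mono_set hsub
  have hAle : (∫ t in Ioc (0:ℝ) b, Φ' (u t) * g t * φ t)
      ≤ ∫ t in Ioc (0:ℝ) b, (|g t| ^ p
        + (p - 1) * Cp * ((t + α) ^ (-p) - (b + α) ^ (-p)) * (|u t| ^ p)) := by
    apply setIntegral_mono_on iA (hgp.add iY2) hIoc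
    intro t ht
    exact hY t (hsub ht)
  have hRHSsplit : (∫ t in Ioc (0:ℝ) b, (|g t| ^ p
        + (p - 1) * Cp * ((t + α) ^ (-p) - (b + α) ^ (-p)) * (|u t| ^ p)))
      = (∫ t in Ioc (0:ℝ) b, |g t| ^ p)
        + (((p - 1) * Cp) * (∫ t in Ioc (0:ℝ) b, |u t| ^ p * (t + α) ^ (-p))
          - ((p - 1) * Cp * (b + α) ^ (-p)) * ∫ t in Ioc (0:ℝ) b, |u t| ^ p) := by
    rw [integral_add hgp iY2]
    congr 1
    have heq : (fun t => (p - 1) * Cp * ((t + α) ^ (-p) - (b + α) ^ (-p)) * (|u t| ^ p))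
        = fun t => ((p - 1) * Cp) * (|u t| ^ p * (t + α) ^ (-p))
          - ((p - 1) * Cp * (b + α) ^ (-p)) * (|u t| ^ p) := by
      funext t; ring
    rw [heq, integral_sub (iI2.const_mul _) (iI3.const_mul _), integral_const_mul,
      integral_const_mul]
  have hBfun : (fun t => Φ (u t) * ψ t)
      = fun t => (-(p * Cp)) * (|u t| ^ p * (t + α) ^ (-p)) := by
    funext t
    simp only [hΦdef, hψdef]
    linear_combination (-(|u t| ^ p * (t + α) ^ (-p))) * hKp
  have hB : (∫ t in Ioc (0:ℝ) b, Φ (u t) * ψ t)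
      = (-(p * Cp)) * ∫ t in Ioc (0:ℝ) b, |u t| ^ p * (t + α) ^ (-p) := by
    rw [hBfun, integral_const_mul]
  set I1 := ∫ t in Ioc (0:ℝ) b, |g t| ^ p with hI1def
  set I2 := ∫ t in Ioc (0:ℝ) b, |u t| ^ p * (t + α) ^ (-p) with hI2def
  set I3 := ∫ t in Ioc (0:ℝ) b, |u t| ^ p with hI3def
  have hE2 : p * Cp * I2 = Φ c * φ 0 + ∫ t in Ioc (0:ℝ) b, Φ' (u t) * g t * φ t := by
    rw [hφb, mul_zero, hB] at E
    linarith
  have hΦc0 : 0 ≤ Φ c := by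
    simp only [hΦdef]
    exact Real.rpow_nonneg (abs_nonneg _) _
  have hΦcφ : Φ c * φ 0 ≤ σ * |c| ^ p := by
    calc Φ c * φ 0 ≤ Φ c * σ := mul_le_mul_of_nonneg_left hφ0σ hΦc0
      _ = σ * |c| ^ p := by simp only [hΦdef]; ring
  have hmain : p * Cp * I2
      ≤ σ * |c| ^ p + (I1 + (((p - 1) * Cp) * I2 - ((p - 1) * Cp * (b + α) ^ (-p)) * I3)) := by
    rw [hE2]
    rw [hRHSsplit] at hAle
    linarith
  have hfin : Cp * I2 + (p - 1) * Cp * (b + α) ^ (-p) * I3 ≤ I1 + σ * |c| ^ p := by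
    nlinarith [hmain]
  have hI2' : (∫ t in Ioc (0:ℝ) b, |u t| ^ p / (t + α) ^ p) = I2 := by
    rw [hI2def]
    apply setIntegral_congr_fun hIoc
    intro t ht
    show |u t| ^ p / (t + α) ^ p = |u t| ^ p * (t + α) ^ (-p)
    rw [Real.rpow_neg (htα t (hsub ht)).le, div_eq_mul_inv]
  have hcoef : (p - 1) * Cp / (b + α) ^ p = (p - 1) * Cp * (b + α) ^ (-p) := by
    rw [Real.rpow_neg hbα.le, div_eq_mul_inv]
  rw [hI2', hcoef]
  exact hfin

/-- **Lemma 3.1 (one-dimensional Hardy inequality with Robin boundary term).**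
Let `p > 1`, `b > 0`, `σ > 0`, `α = ((p-1)/p)·σ^{1/(1-p)}` and `C_p = ((p-1)/p)^p`.
For every absolutely continuous function `u` on `[0,b]` (encoded via an integrable
a.e. derivative `g` with `u t = u 0 + ∫_0^t g`),
`∫_0^b |u'|^p + σ|u(0)|^p ≥ C_p ∫_0^b |u|^p/(t+α)^p + (p-1) C_p (b+α)^{-p} ∫_0^b |u|^p`. -/
theorem onedim_hardy_robin (p b σ α Cp : ℝ) (hp : 1 < p) (hb : 0 < b) (hσ : 0 < σ)
    (hα : α = (p - 1) / p * σ ^ (1 / (1 - p))) (hCp : Cp = ((p - 1) / p) ^ p)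
    (u g : ℝ → ℝ) (hg : IntegrableOn g (Icc 0 b))
    (hac : ∀ t ∈ Icc (0 : ℝ) b, u t = u 0 + ∫ s in (0 : ℝ)..t, g s) :
    (∫⁻ t in Icc (0 : ℝ) b, ENNReal.ofReal (|g t| ^ p)) + ENNReal.ofReal (σ * |u 0| ^ p) ≥
      ENNReal.ofReal Cp *
          (∫⁻ t in Icc (0 : ℝ) b, ENNReal.ofReal (|u t| ^ p / (t + α) ^ p)) +
        ENNReal.ofReal ((p - 1) * Cp / (b + α) ^ p) *
          ∫⁻ t in Icc (0 : ℝ) b, ENNReal.ofReal (|u t| ^ p) := by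
  have hp0 : (0:ℝ) < p := by linarith
  have hΦc : Continuous (fun x : ℝ => |x| ^ p) :=
    continuous_iff_continuousAt.2 fun x => (hardy_abs_rpow_hasDerivAt p hp x).continuousAt
  have hIcc : MeasurableSet (Icc (0:ℝ) b) := measurableSet_Icc
  have hIoc : MeasurableSet (Ioc (0:ℝ) b) := measurableSet_Ioc
  have hsub : Ioc (0:ℝ) b ⊆ Icc 0 b := Ioc_subset_Icc_self
  have hβ0 : 0 < (p - 1) / p := div_pos (by linarith) hp0
  have hCp0 : 0 < Cp := by rw [hCp]; exact Real.rpow_pos_of_pos hβ0 p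
  have hα0 : 0 < α := by
    rw [hα]
    exact mul_pos hβ0 (Real.rpow_pos_of_pos hσ _)
  have htα : ∀ t ∈ Icc (0:ℝ) b, 0 < t + α := fun t ht => by
    have := ht.1; linarith
  have hbα : 0 < b + α := by linarith
  -- replace g by its indicator extension, u by the primitive
  set g₀ : ℝ → ℝ := (Icc (0:ℝ) b).indicator g with hg₀def
  have hg₀ : Integrable g₀ := hg.integrable_indicator hIcc
  have hgeq : EqOn g₀ g (Icc (0:ℝ) b) := fun t ht => indicator_of_mem ht g
  set U : ℝ → ℝ := fun t => u 0 + ∫ s in (0:ℝ)..t, g₀ s with hUdef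
  have hUu : ∀ t ∈ Icc (0:ℝ) b, u t = U t := by
    intro t ht
    rw [hac t ht]
    show u 0 + _ = u 0 + _
    congr 1
    apply intervalIntegral.integral_congr
    intro s hs
    rw [uIcc_of_le ht.1] at hs
    exact (hgeq ⟨hs.1, le_trans hs.2 ht.2⟩).symm
  have hUcont : Continuous U :=
    continuous_const.add
      (intervalIntegral.continuous_primitive (fun a b => hg₀.intervalIntegrable) 0)
  -- rewrite the u-lintegrals in terms of U
  have hL2 : (∫⁻ t in Icc (0:ℝ) b, ENNReal.ofReal (|u t| ^ p / (t + α) ^ p))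
      = ∫⁻ t in Icc (0:ℝ) b, ENNReal.ofReal (|U t| ^ p / (t + α) ^ p) :=
    setLIntegral_congr_fun hIcc (fun t ht => by rw [hUu t ht])
  have hL3 : (∫⁻ t in Icc (0:ℝ) b, ENNReal.ofReal (|u t| ^ p))
      = ∫⁻ t in Icc (0:ℝ) b, ENNReal.ofReal (|U t| ^ p) :=
    setLIntegral_congr_fun hIcc (fun t ht => by rw [hUu t ht])
  rw [ge_iff_le, hL2, hL3]
  -- case: infinite energy
  by_cases htop : (∫⁻ t in Icc (0:ℝ) b, ENNReal.ofReal (|g t| ^ p)) = ⊤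
  · rw [htop, top_add]
    exact le_top
  -- finite case
  have hgp : IntegrableOn (fun t => |g t| ^ p) (Icc (0:ℝ) b) := by
    refine ⟨hΦc.comp_aestronglyMeasurable hg.1, ?_⟩
    rw [hasFiniteIntegral_iff_ofReal (ae_of_all _ fun t =>
      Real.rpow_nonneg (abs_nonneg _) p)]
    exact lt_top_iff_ne_top.2 htop
  have hgp₀ : IntegrableOn (fun t => |g₀ t| ^ p) (Ioc (0:ℝ) b) := by
    apply (hgp.mono_set hsub).congr_fun _ hIoc
    intro t ht
    show |g t| ^ p = |g₀ t| ^ p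
    rw [hgeq (hsub ht)]
  have iU2 : IntegrableOn (fun t => |U t| ^ p / (t + α) ^ p) (Icc (0:ℝ) b) := by
    apply ContinuousOn.integrableOn_Icc
    apply ((hΦc.comp hUcont).continuousOn).div
    · intro t ht
      exact ((continuousAt_id.add continuousAt_const).rpow_const
        (Or.inl (ne_of_gt (htα t ht)))).continuousWithinAt
    · intro t ht
      exact ne_of_gt (Real.rpow_pos_of_pos (htα t ht) p)
  have iU3 : IntegrableOn (fun t => |U t| ^ p) (Icc (0:ℝ) b) :=
    ((hΦc.comp hUcont).continuousOn).integrableOn_Icc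
  -- convert lintegrals to Bochner integrals
  have e1 : (∫⁻ t in Icc (0:ℝ) b, ENNReal.ofReal (|g t| ^ p))
      = ENNReal.ofReal (∫ t in Icc (0:ℝ) b, |g t| ^ p) :=
    (ofReal_integral_eq_lintegral_ofReal hgp
      (ae_of_all _ fun t => Real.rpow_nonneg (abs_nonneg _) p)).symm
  have e2 : (∫⁻ t in Icc (0:ℝ) b, ENNReal.ofReal (|U t| ^ p / (t + α) ^ p))
      = ENNReal.ofReal (∫ t in Icc (0:ℝ) b, |U t| ^ p / (t + α) ^ p) :=
    (ofReal_integral_eq_lintegral_ofReal iU2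
      (ae_restrict_iff' hIcc |>.2 (ae_of_all _ fun t ht =>
        div_nonneg (Real.rpow_nonneg (abs_nonneg _) p)
          (Real.rpow_nonneg (htα t ht).le p)))).symm
  have e3 : (∫⁻ t in Icc (0:ℝ) b, ENNReal.ofReal (|U t| ^ p))
      = ENNReal.ofReal (∫ t in Icc (0:ℝ) b, |U t| ^ p) :=
    (ofReal_integral_eq_lintegral_ofReal iU3
      (ae_of_all _ fun t => Real.rpow_nonneg (abs_nonneg _) p)).symm
  rw [e1, e2, e3]
  -- nonnegativity of the real integrals
  have hJ2 : 0 ≤ ∫ t in Icc (0:ℝ) b, |U t| ^ p / (t + α) ^ p :=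
    setIntegral_nonneg hIcc fun t ht =>
      div_nonneg (Real.rpow_nonneg (abs_nonneg _) p) (Real.rpow_nonneg (htα t ht).le p)
  have hJ3 : 0 ≤ ∫ t in Icc (0:ℝ) b, |U t| ^ p :=
    setIntegral_nonneg hIcc fun t ht => Real.rpow_nonneg (abs_nonneg _) p
  have hD0 : 0 ≤ (p - 1) * Cp / (b + α) ^ p :=
    div_nonneg (mul_nonneg (by linarith) hCp0.le) (Real.rpow_nonneg hbα.le p)
  rw [← ENNReal.ofReal_mul hCp0.le, ← ENNReal.ofReal_mul hD0,
    ← ENNReal.ofReal_add (mul_nonneg hCp0.le hJ2) (mul_nonneg hD0 hJ3),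
    ← ENNReal.ofReal_add (setIntegral_nonneg hIcc fun t ht =>
      Real.rpow_nonneg (abs_nonneg _) p)
      (mul_nonneg hσ.le (Real.rpow_nonneg (abs_nonneg _) p))]
  apply ENNReal.ofReal_le_ofReal
  -- reduce to the core inequality over Ioc
  have hcore := hardy_core p b σ α Cp hp hb hσ hα hCp g₀ hg₀ (u 0) U (fun t => rfl) hgp₀
  have r1 : (∫ t in Icc (0:ℝ) b, |g t| ^ p) = ∫ t in Ioc (0:ℝ) b, |g₀ t| ^ p := by
    rw [integral_Icc_eq_integral_Ioc]
    apply setIntegral_congr_fun hIoc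
    intro t ht
    show |g t| ^ p = |g₀ t| ^ p
    rw [hgeq (hsub ht)]
  have r2 : (∫ t in Icc (0:ℝ) b, |U t| ^ p / (t + α) ^ p)
      = ∫ t in Ioc (0:ℝ) b, |U t| ^ p / (t + α) ^ p := integral_Icc_eq_integral_Ioc
  have r3 : (∫ t in Icc (0:ℝ) b, |U t| ^ p) = ∫ t in Ioc (0:ℝ) b, |U t| ^ p :=
    integral_Icc_eq_integral_Ioc
  rw [r1, r2, r3]
  exact hcore
end

section
/- Let Ω ⊂ ℝ^n be an open bounded convex domain with boundary ∂Ω of class C^2, and for a positive constant σ > 0 let λ_p(Ω,σ) be the Robin–Hardy variational quantity with the constant boundary function σ. Then λ_p(Ω,σ) → +∞ as σ → 0+. -/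
open MeasureTheory Metric Set Filter Bornology
open scoped ENNReal Topology

noncomputable section

namespace RobinHardy

/-- Distance to the boundary of `Ω`. -/
def sdist {n : ℕ} (Ω : Set (EuclideanSpace ℝ (Fin n))) (x : EuclideanSpace ℝ (Fin n)) : ℝ :=
  Metric.infDist x (frontier Ω)

/-- The in-radius of `Ω`, i.e. `sup_{x ∈ Ω} dist(x, ∂Ω)`. -/
def inradius {n : ℕ} (Ω : Set (EuclideanSpace ℝ (Fin n))) : ℝ :=
  sSup (sdist Ω '' Ω)

/-- The surface measure on `∂Ω`: the `(n-1)`-dimensional Hausdorff measure restricted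
to the boundary of `Ω`. -/
def surf {n : ℕ} (Ω : Set (EuclideanSpace ℝ (Fin n))) :
    Measure (EuclideanSpace ℝ (Fin n)) :=
  (Measure.hausdorffMeasure ((n : ℝ) - 1)).restrict (frontier Ω)

/-- `Ω` has boundary of class `C²`: near every boundary point, `Ω` is a sublevel set of a
`C²` function with non-vanishing differential. -/
def HasC2Boundary {n : ℕ} (Ω : Set (EuclideanSpace ℝ (Fin n))) : Prop :=
  ∀ x ∈ frontier Ω, ∃ (U : Set (EuclideanSpace ℝ (Fin n)))
    (f : EuclideanSpace ℝ (Fin n) → ℝ), IsOpen U ∧ x ∈ U ∧ ContDiff ℝ 2 f ∧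
      (∀ y ∈ U, fderiv ℝ f y ≠ 0) ∧ Ω ∩ U = {y ∈ U | f y < 0} ∧
      frontier Ω ∩ U = {y ∈ U | f y = 0}

/-- Membership in `W^{1,p}(Ω)`, realized via functions continuous up to the boundary
(providing the boundary trace), differentiable in `Ω`, with finite `L^p`-integrals of the
function and of its gradient. -/
def MemW1p {n : ℕ} (p : ℝ) (Ω : Set (EuclideanSpace ℝ (Fin n)))
    (u : EuclideanSpace ℝ (Fin n) → ℝ) : Prop :=
  ContinuousOn u (closure Ω) ∧ (∀ x ∈ Ω, DifferentiableAt ℝ u x) ∧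
    (∫⁻ x in Ω, ENNReal.ofReal (|u x| ^ p)) ≠ ∞ ∧
    (∫⁻ x in Ω, ENNReal.ofReal (‖fderiv ℝ u x‖ ^ p)) ≠ ∞

/-- The `p`-th power of the `W^{1,p}(Ω)`-distance between two functions. -/
def W1pDist {n : ℕ} (p : ℝ) (Ω : Set (EuclideanSpace ℝ (Fin n)))
    (u v : EuclideanSpace ℝ (Fin n) → ℝ) : ℝ≥0∞ :=
  (∫⁻ x in Ω, ENNReal.ofReal (|u x - v x| ^ p)) +
    ∫⁻ x in Ω, ENNReal.ofReal (‖fderiv ℝ u x - fderiv ℝ v x‖ ^ p)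

/-- Membership in `W^{1,p}_{0,Γ}(Ω)`: the closure, in the `W^{1,p}(Ω)`-norm, of the set of
`C¹` functions vanishing on `Γ`. -/
def MemW1pGamma {n : ℕ} (p : ℝ) (Ω Γ : Set (EuclideanSpace ℝ (Fin n)))
    (u : EuclideanSpace ℝ (Fin n) → ℝ) : Prop :=
  MemW1p p Ω u ∧ ∃ v : ℕ → EuclideanSpace ℝ (Fin n) → ℝ,
    (∀ j, ContDiff ℝ 1 (v j)) ∧ (∀ j, ∀ x ∈ Γ, v j x = 0) ∧
      Tendsto (fun j => W1pDist p Ω (v j) u) atTop (𝓝 0)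

/-- Membership in `W^{1,p}_0(Ω)`: the closure of `C_c^∞(Ω)` in the `W^{1,p}(Ω)`-norm. -/
def MemW1p0 {n : ℕ} (p : ℝ) (Ω : Set (EuclideanSpace ℝ (Fin n)))
    (u : EuclideanSpace ℝ (Fin n) → ℝ) : Prop :=
  MemW1p p Ω u ∧ ∃ v : ℕ → EuclideanSpace ℝ (Fin n) → ℝ,
    (∀ j, ContDiff ℝ (⊤ : ℕ∞) (v j) ∧ HasCompactSupport (v j) ∧ tsupport (v j) ⊆ Ω) ∧
      Tendsto (fun j => W1pDist p Ω (v j) u) atTop (𝓝 0)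

/-- The class `Σ_Γ` of boundary functions: `σ = +∞` on `Γ` and `σ` essentially bounded
on `∂Ω \ cl(Γ)`. -/
def SigmaGamma {n : ℕ} (Ω Γ : Set (EuclideanSpace ℝ (Fin n)))
    (σ : EuclideanSpace ℝ (Fin n) → ℝ≥0∞) : Prop :=
  (∀ y ∈ Γ, σ y = ∞) ∧
    essSup σ ((surf Ω).restrict (frontier Ω \ closure Γ)) ≠ ∞

/-- `α(x) = ((p-1)/p)·σ(π(x))^{1/(1-p)}`, where `π` is a nearest-point projection onto `∂Ω`
(with the conventions `α(x) = 0` when `σ(π(x)) = ∞` and `α(x) = ∞` when `σ(π(x)) = 0`,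
built into the `ℝ≥0∞`-valued power). -/
def alphaF {n : ℕ} (p : ℝ) (σ : EuclideanSpace ℝ (Fin n) → ℝ≥0∞)
    (π : EuclideanSpace ℝ (Fin n) → EuclideanSpace ℝ (Fin n))
    (x : EuclideanSpace ℝ (Fin n)) : ℝ≥0∞ :=
  ENNReal.ofReal ((p - 1) / p) * σ (π x) ^ (1 / (1 - p))

/-- The weighted norm `‖u‖_{p,σ}^p = ∫_Ω |u(x)|^p/(δ(x)+α(x))^p dx`. -/
def wnorm {n : ℕ} (p : ℝ) (Ω : Set (EuclideanSpace ℝ (Fin n)))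
    (σ : EuclideanSpace ℝ (Fin n) → ℝ≥0∞)
    (π : EuclideanSpace ℝ (Fin n) → EuclideanSpace ℝ (Fin n))
    (u : EuclideanSpace ℝ (Fin n) → ℝ) : ℝ≥0∞ :=
  ∫⁻ x in Ω, ENNReal.ofReal (|u x| ^ p) /
    (ENNReal.ofReal (sdist Ω x) + alphaF p σ π x) ^ p

/-- The Robin functional `Q_p[σ,u] = ∫_Ω |∇u|^p dx + ∫_{∂Ω} σ|u|^p dν`, the boundary
integral being taken over the set where `σ` is finite. -/
def Qp {n : ℕ} (p : ℝ) (Ω : Set (EuclideanSpace ℝ (Fin n)))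
    (σ : EuclideanSpace ℝ (Fin n) → ℝ≥0∞)
    (u : EuclideanSpace ℝ (Fin n) → ℝ) : ℝ≥0∞ :=
  (∫⁻ x in Ω, ENNReal.ofReal (‖fderiv ℝ u x‖ ^ p)) +
    ∫⁻ y in frontier Ω ∩ {y | σ y ≠ ∞}, σ y * ENNReal.ofReal (|u y| ^ p) ∂(surf Ω)

/-- The variational quantity `λ_p(Ω,σ) = inf { Q_p[σ,u]/‖u‖_{p,σ}^p : u ∈ W^{1,p}_{0,Γ}(Ω), u ≠ 0 }`. -/
def lam {n : ℕ} (p : ℝ) (Ω Γ : Set (EuclideanSpace ℝ (Fin n)))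
    (σ : EuclideanSpace ℝ (Fin n) → ℝ≥0∞)
    (π : EuclideanSpace ℝ (Fin n) → EuclideanSpace ℝ (Fin n)) : ℝ≥0∞ :=
  ⨅ (u : EuclideanSpace ℝ (Fin n) → ℝ) (_ : MemW1pGamma p Ω Γ u)
    (_ : wnorm p Ω σ π u ≠ 0), Qp p Ω σ u / wnorm p Ω σ π u

/-- The variational quantity `λ_p(Ω,σ)` with the infimum over all of `W^{1,p}(Ω)`. -/
def lamAll {n : ℕ} (p : ℝ) (Ω : Set (EuclideanSpace ℝ (Fin n)))
    (σ : EuclideanSpace ℝ (Fin n) → ℝ≥0∞)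
    (π : EuclideanSpace ℝ (Fin n) → EuclideanSpace ℝ (Fin n)) : ℝ≥0∞ :=
  ⨅ (u : EuclideanSpace ℝ (Fin n) → ℝ) (_ : MemW1p p Ω u)
    (_ : wnorm p Ω σ π u ≠ 0), Qp p Ω σ u / wnorm p Ω σ π u

/-- `α = ((p-1)/p)·σ^{1/(1-p)}` for a constant boundary parameter `σ > 0`. -/
def alphaC (p σ : ℝ) : ℝ := ((p - 1) / p) * σ ^ (1 / (1 - p))

/-- `‖u‖_{p,σ}^p` for a constant boundary parameter `σ`. -/
def wnormC {n : ℕ} (p : ℝ) (Ω : Set (EuclideanSpace ℝ (Fin n))) (σ : ℝ)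
    (u : EuclideanSpace ℝ (Fin n) → ℝ) : ℝ≥0∞ :=
  ∫⁻ x in Ω, ENNReal.ofReal (|u x| ^ p / (sdist Ω x + alphaC p σ) ^ p)

/-- `Q_p[σ,u]` for a constant boundary parameter `σ`. -/
def QpC {n : ℕ} (p : ℝ) (Ω : Set (EuclideanSpace ℝ (Fin n))) (σ : ℝ)
    (u : EuclideanSpace ℝ (Fin n) → ℝ) : ℝ≥0∞ :=
  (∫⁻ x in Ω, ENNReal.ofReal (‖fderiv ℝ u x‖ ^ p)) +
    ENNReal.ofReal σ * ∫⁻ y, ENNReal.ofReal (|u y| ^ p) ∂(surf Ω)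

/-- `λ_p(Ω,σ)` for a constant boundary parameter `σ`. -/
def lamC {n : ℕ} (p : ℝ) (Ω : Set (EuclideanSpace ℝ (Fin n))) (σ : ℝ) : ℝ≥0∞ :=
  ⨅ (u : EuclideanSpace ℝ (Fin n) → ℝ) (_ : MemW1p p Ω u)
    (_ : wnormC p Ω σ u ≠ 0), QpC p Ω σ u / wnormC p Ω σ u


/-- Splitting `ℝ^{m+1} = ℝ × ℝ^m`. -/
def emb (m : ℕ) : (ℝ × (Fin m → ℝ)) ≃ᵐ EuclideanSpace ℝ (Fin (m + 1)) :=
  (MeasurableEquiv.piFinSuccAbove (fun _ => ℝ) 0).symm.trans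
    (MeasurableEquiv.toLp 2 (Fin (m + 1) → ℝ))

lemma emb_mp (m : ℕ) : MeasurePreserving (emb m) volume volume := by
  have h1 := (MeasureTheory.volume_preserving_piFinSuccAbove (fun _ : Fin (m+1) => ℝ) 0).symm _
  have h2 := (EuclideanSpace.volume_preserving_symm_measurableEquiv_toLp (Fin (m+1))).symm
  exact h2.comp h1

lemma emb_apply_zero (m : ℕ) (t : ℝ) (y : Fin m → ℝ) : (emb m (t, y)) 0 = t := by
  have h : (emb m (t, y)) = (Fin.insertNth 0 t y : Fin (m+1) → ℝ) := rfl
  rw [h]; simp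

lemma emb_apply_succ (m : ℕ) (t : ℝ) (y : Fin m → ℝ) (j : Fin m) :
    (emb m (t, y)) j.succ = y j := by
  have h : (emb m (t, y)) = (Fin.insertNth 0 t y : Fin (m+1) → ℝ) := rfl
  rw [h]
  simpa using Fin.insertNth_apply_succAbove (i := (0 : Fin (m+1))) (x := t) (p := y) j

/-- the basis direction -/
def e0 (m : ℕ) : EuclideanSpace ℝ (Fin (m + 1)) := EuclideanSpace.single 0 1

lemma norm_e0 (m : ℕ) : ‖e0 m‖ = 1 := by
  simp [e0, EuclideanSpace.norm_single]

lemma emb_affine (m : ℕ) (t s : ℝ) (y : Fin m → ℝ) :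
    emb m (t, y) = emb m (s, y) + (t - s) • e0 m := by
  apply PiLp.ext
  intro i
  rw [PiLp.add_apply, PiLp.smul_apply]
  refine Fin.cases ?_ ?_ i
  · rw [emb_apply_zero, emb_apply_zero]
    simp [e0, EuclideanSpace.single_apply]
  · intro j
    rw [emb_apply_succ, emb_apply_succ]
    simp [e0, EuclideanSpace.single_apply, Fin.succ_ne_zero]

lemma emb_cont_t (m : ℕ) (y : Fin m → ℝ) : Continuous (fun t : ℝ => emb m (t, y)) := by
  have : (fun t : ℝ => emb m (t, y)) = fun t => emb m (0, y) + (t - 0) • e0 m := by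
    funext t; exact emb_affine m t 0 y
  rw [this]
  fun_prop

lemma coord_abs_le_dist {m : ℕ} (x y : EuclideanSpace ℝ (Fin (m+1))) (i : Fin (m+1)) :
    |x i - y i| ≤ dist x y := by
  rw [EuclideanSpace.dist_eq]
  have h1 : |x i - y i| = Real.sqrt (dist (x i) (y i) ^ 2) := by
    rw [Real.sqrt_sq_eq_abs, Real.dist_eq, abs_abs]
  rw [h1]
  apply Real.sqrt_le_sqrt
  exact Finset.single_le_sum (f := fun j => dist (x j) (y j) ^ 2)
    (fun j _ => sq_nonneg _) (Finset.mem_univ i)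

lemma emb_dist_t (m : ℕ) (t s : ℝ) (y : Fin m → ℝ) :
    |t - s| ≤ dist (emb m (t, y)) (emb m (s, y)) := by
  have := coord_abs_le_dist (emb m (t,y)) (emb m (s,y)) 0
  rwa [emb_apply_zero, emb_apply_zero] at this

/-- projection onto last m coordinates, as a map to pi-type (sup metric). -/
def projm (m : ℕ) (x : EuclideanSpace ℝ (Fin (m+1))) : Fin m → ℝ := fun j => x j.succ

lemma projm_emb (m : ℕ) (t : ℝ) (y : Fin m → ℝ) : projm m (emb m (t, y)) = y := by
  funext j; exact emb_apply_succ m t y j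

lemma projm_lipschitz (m : ℕ) : LipschitzWith 1 (projm m) := by
  apply LipschitzWith.of_dist_le_mul
  intro x y
  rw [NNReal.coe_one, one_mul]
  rcases isEmpty_or_nonempty (Fin m) with h | h
  · simpa [dist_pi_def] using dist_nonneg
  · rw [dist_pi_le_iff dist_nonneg]
    intro j
    have := coord_abs_le_dist x y j.succ
    rwa [Real.dist_eq]

lemma emb_continuous (m : ℕ) : Continuous (emb m) := by
  have h2 : Continuous fun z : ℝ × (Fin m → ℝ) => (Fin.insertNth 0 z.1 z.2 : Fin (m+1) → ℝ) := by
    refine continuous_pi fun i => ?_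
    refine Fin.cases ?_ ?_ i
    · simpa using continuous_fst
    · intro j
      exact ((continuous_apply j).comp continuous_snd).congr (fun a => by simp)
  exact ((EuclideanSpace.equiv (Fin (m+1)) ℝ).symm.continuous).comp h2

lemma emb_measurable (m : ℕ) : Measurable (emb m) := (emb m).measurable

lemma oneD {p : ℝ} (hp : 1 < p) {a b : ℝ} (hab : a < b) (w w' G : ℝ → ℝ)
    (hwa : Tendsto w (𝓝[Ioo a b] a) (𝓝 (w a)))
    (hw' : ∀ t ∈ Ioo a b, HasDerivAt w (w' t) t)
    (h'm : Measurable w') (hGm : Measurable G)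
    (hG0 : ∀ t, 0 ≤ G t)
    (hbound : ∀ t ∈ Ioo a b, |w' t| ≤ G t) :
    ∫⁻ t in Ioo a b, ENNReal.ofReal (|w t| ^ p) ≤
      ENNReal.ofReal (2 ^ (p-1) * (b - a)) * ENNReal.ofReal (|w a| ^ p) +
      ENNReal.ofReal (2 ^ (p-1) * (b - a) ^ p) * ∫⁻ t in Ioo a b, ENNReal.ofReal (G t ^ p) := by
  have hp0 : (0:ℝ) < p := lt_trans one_pos hp
  have hba : (0:ℝ) < b - a := sub_pos.mpr hab
  have h2p : (0:ℝ) < 2 ^ (p-1) := Real.rpow_pos_of_pos two_pos _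
  set J := ∫⁻ t in Ioo a b, ENNReal.ofReal (G t ^ p) with hJdef
  by_cases hJ : J = ∞
  · have hc : ENNReal.ofReal (2 ^ (p-1) * (b - a) ^ p) ≠ 0 := by
      simp only [ne_eq, ENNReal.ofReal_eq_zero, not_le]
      positivity
    rw [hJ, ENNReal.mul_top hc]
    exact le_top
  -- conjugate exponent
  set q : ℝ := p / (p - 1) with hqdef
  have hpq : p.HolderConjugate q := Real.HolderConjugate.conjExponent hp
  have hpqc : p / q = p - 1 := by
    rw [hqdef]
    field_simp
  -- Hölder
  have hGof : ∀ t, (ENNReal.ofReal (G t)) ^ p = ENNReal.ofReal (G t ^ p) := fun t =>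
    ENNReal.ofReal_rpow_of_nonneg (hG0 t) hp0.le
  have holder : (∫⁻ t in Ioo a b, ENNReal.ofReal (G t)) ≤
      J ^ (1/p) * (ENNReal.ofReal (b-a)) ^ (1/q) := by
    have h := ENNReal.lintegral_mul_le_Lp_mul_Lq (volume.restrict (Ioo a b)) hpq
      (f := fun t => ENNReal.ofReal (G t)) (g := fun _ => 1)
      (hGm.ennreal_ofReal.aemeasurable) aemeasurable_const
    simp only [Pi.mul_apply, mul_one, ENNReal.one_rpow] at h
    calc (∫⁻ t in Ioo a b, ENNReal.ofReal (G t))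
        ≤ (∫⁻ t in Ioo a b, (ENNReal.ofReal (G t)) ^ p) ^ (1/p) *
          (∫⁻ _ in Ioo a b, (1:ℝ≥0∞)) ^ (1/q) := h
      _ = J ^ (1/p) * (ENNReal.ofReal (b-a)) ^ (1/q) := by
          rw [lintegral_congr (fun t => hGof t)]
          rw [setLIntegral_one, Real.volume_Ioo]
  have hAtop : (∫⁻ t in Ioo a b, ENNReal.ofReal (G t)) ≠ ∞ := by
    refine (lt_of_le_of_lt holder ?_).ne
    apply ENNReal.mul_lt_top
    · exact (ENNReal.rpow_lt_top_of_nonneg (by positivity) hJ)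
    · exact (ENNReal.rpow_lt_top_of_nonneg (one_div_nonneg.mpr hpq.symm.nonneg)
        ENNReal.ofReal_ne_top)
  -- integrability of G on Ioo a b
  have hGi : IntegrableOn G (Ioo a b) := by
    refine ⟨hGm.aestronglyMeasurable, ?_⟩
    rw [hasFiniteIntegral_iff_norm]
    have : ∀ t, ENNReal.ofReal ‖G t‖ = ENNReal.ofReal (G t) := fun t => by
      rw [Real.norm_eq_abs, abs_of_nonneg (hG0 t)]
    rw [lintegral_congr this]
    exact hAtop.lt_top
  have hw'i : IntegrableOn w' (Ioo a b) := by
    refine Integrable.mono' hGi h'm.aestronglyMeasurable ?_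
    refine (ae_restrict_iff' measurableSet_Ioo).mpr (Eventually.of_forall ?_)
    intro t ht
    rw [Real.norm_eq_abs]
    exact hbound t ht
  set A : ℝ := ∫ t in Ioo a b, G t with hAdef
  have hA0 : 0 ≤ A := setIntegral_nonneg measurableSet_Ioo (fun t _ => hG0 t)
  have hAeq : ENNReal.ofReal A = ∫⁻ t in Ioo a b, ENNReal.ofReal (G t) :=
    ofReal_integral_eq_lintegral_ofReal hGi
      ((ae_restrict_iff' measurableSet_Ioo).mpr (Eventually.of_forall (fun t _ => hG0 t)))
  -- pointwise FTC estimate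
  have hkey : ∀ s ∈ Ioo a b, ∀ t ∈ Ioo a b, |w t| ≤ |w s| + A := by
    intro s hs t ht
    have huIcc : uIcc s t ⊆ Ioo a b := (Set.ordConnected_Ioo).uIcc_subset hs ht
    have hftc : ∫ r in s..t, w' r = w t - w s := by
      apply intervalIntegral.integral_eq_sub_of_hasDerivAt
      · intro r hr
        exact hw' r (huIcc hr)
      · exact (hw'i.mono_set huIcc).intervalIntegrable
    have h1 : |w t - w s| ≤ ∫ r in Set.uIoc s t, |w' r| := by
      rw [← hftc]
      simpa [Real.norm_eq_abs] using
        intervalIntegral.norm_integral_le_integral_norm_uIoc (f := w') (a := s) (b := t) (μ := volume)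
    have hΙ : Set.uIoc s t ⊆ Ioo a b := fun r hr => huIcc (uIoc_subset_uIcc hr)
    have h2 : ∫ r in Set.uIoc s t, |w' r| ≤ ∫ r in Set.uIoc s t, G r := by
      apply setIntegral_mono_on (MeasureTheory.IntegrableOn.mono_set hw'i.abs hΙ)
        (hGi.mono_set hΙ) measurableSet_uIoc
      intro r hr
      exact hbound r (hΙ hr)
    have h3 : ∫ r in Set.uIoc s t, G r ≤ A := by
      apply setIntegral_mono_set hGi
      · exact (ae_restrict_iff' measurableSet_Ioo).mpr (Eventually.of_forall (fun t _ => hG0 t))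
      · exact HasSubset.Subset.eventuallyLE hΙ
    calc |w t| ≤ |w s| + |w t - w s| := by
          have := abs_add_le (w s) (w t - w s); simpa using this
      _ ≤ |w s| + A := by linarith
  -- ℝ≥0∞ pointwise bound, for fixed s
  have hC2 : (2:ℝ≥0∞) ^ (p-1) = ENNReal.ofReal (2 ^ (p-1)) := by
    rw [← ENNReal.ofReal_rpow_of_pos two_pos, ENNReal.ofReal_ofNat]
  have hmain : ∀ s ∈ Ioo a b,
      (∫⁻ t in Ioo a b, ENNReal.ofReal (|w t| ^ p)) ≤
        ENNReal.ofReal (2 ^ (p-1) * (b - a)) * ENNReal.ofReal (|w s| ^ p) +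
        ENNReal.ofReal (2 ^ (p-1) * (b - a) ^ p) * J := by
    intro s hs
    have hpt : ∀ t ∈ Ioo a b, ENNReal.ofReal (|w t| ^ p) ≤
        (2:ℝ≥0∞) ^ (p-1) * (ENNReal.ofReal (|w s| ^ p) + ENNReal.ofReal (A ^ p)) := by
      intro t ht
      have h1 : |w t| ^ p ≤ (|w s| + A) ^ p :=
        Real.rpow_le_rpow (abs_nonneg _) (hkey s hs t ht) hp0.le
      have h2 : ENNReal.ofReal ((|w s| + A) ^ p) =
          (ENNReal.ofReal (|w s|) + ENNReal.ofReal A) ^ p := by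
        rw [← ENNReal.ofReal_add (abs_nonneg _) hA0]
        exact (ENNReal.ofReal_rpow_of_nonneg (by positivity) hp0.le).symm
      calc ENNReal.ofReal (|w t| ^ p) ≤ ENNReal.ofReal ((|w s| + A) ^ p) :=
            ENNReal.ofReal_le_ofReal h1
        _ = (ENNReal.ofReal (|w s|) + ENNReal.ofReal A) ^ p := h2
        _ ≤ (2:ℝ≥0∞) ^ (p-1) * ((ENNReal.ofReal (|w s|)) ^ p + (ENNReal.ofReal A) ^ p) :=
            ENNReal.rpow_add_le_mul_rpow_add_rpow _ _ hp.le
        _ = (2:ℝ≥0∞) ^ (p-1) * (ENNReal.ofReal (|w s| ^ p) + ENNReal.ofReal (A ^ p)) := by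
            rw [ENNReal.ofReal_rpow_of_nonneg (abs_nonneg _) hp0.le,
              ENNReal.ofReal_rpow_of_nonneg hA0 hp0.le]
    have hAp : ENNReal.ofReal (A ^ p) ≤ J * ENNReal.ofReal ((b-a) ^ (p-1)) := by
      have e1 : ENNReal.ofReal (A ^ p) = (ENNReal.ofReal A) ^ p :=
        (ENNReal.ofReal_rpow_of_nonneg hA0 hp0.le).symm
      rw [e1, hAeq]
      calc (∫⁻ t in Ioo a b, ENNReal.ofReal (G t)) ^ p
          ≤ (J ^ (1/p) * (ENNReal.ofReal (b-a)) ^ (1/q)) ^ p :=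
            ENNReal.rpow_le_rpow holder hp0.le
        _ = J * ENNReal.ofReal ((b-a) ^ (p-1)) := by
            rw [ENNReal.mul_rpow_of_nonneg _ _ hp0.le, ← ENNReal.rpow_mul, ← ENNReal.rpow_mul,
              one_div_mul_cancel hp0.ne', ENNReal.rpow_one]
            congr 1
            rw [div_mul_eq_mul_div, one_mul, hpqc,
              ENNReal.ofReal_rpow_of_nonneg hba.le (by linarith)]
    calc (∫⁻ t in Ioo a b, ENNReal.ofReal (|w t| ^ p))
        ≤ ∫⁻ _ in Ioo a b, (2:ℝ≥0∞) ^ (p-1) *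
            (ENNReal.ofReal (|w s| ^ p) + ENNReal.ofReal (A ^ p)) :=
          setLIntegral_mono measurable_const hpt
      _ = ENNReal.ofReal (b-a) * ((2:ℝ≥0∞) ^ (p-1) *
            (ENNReal.ofReal (|w s| ^ p) + ENNReal.ofReal (A ^ p))) := by
          rw [setLIntegral_const, Real.volume_Ioo, mul_comm]
      _ ≤ ENNReal.ofReal (b-a) * ((2:ℝ≥0∞) ^ (p-1) *
            (ENNReal.ofReal (|w s| ^ p) + J * ENNReal.ofReal ((b-a) ^ (p-1)))) := by
          gcongr
      _ = ENNReal.ofReal (2 ^ (p-1) * (b - a)) * ENNReal.ofReal (|w s| ^ p) +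
          ENNReal.ofReal (2 ^ (p-1) * (b - a) ^ p) * J := by
          have hbp : (b - a) ^ p = (b - a) * (b - a) ^ (p - 1) := by
            have h := Real.rpow_add hba 1 (p - 1)
            rw [show (1:ℝ) + (p - 1) = p by ring, Real.rpow_one] at h
            exact h
          have e1 : ENNReal.ofReal (2 ^ (p-1) * (b - a)) =
              ENNReal.ofReal (2^(p-1)) * ENNReal.ofReal (b-a) := ENNReal.ofReal_mul h2p.le
          have e2 : ENNReal.ofReal (2 ^ (p-1) * (b - a) ^ p) =
              ENNReal.ofReal (2^(p-1)) *
                (ENNReal.ofReal (b-a) * ENNReal.ofReal ((b-a)^(p-1))) := by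
            rw [hbp, ← ENNReal.ofReal_mul hba.le, ← ENNReal.ofReal_mul h2p.le]
          rw [hC2, e1, e2]
          ring
  -- pass to the limit s → a
  have hne : (𝓝[Ioo a b] a).NeBot := by
    apply mem_closure_iff_nhdsWithin_neBot.mp
    rw [closure_Ioo hab.ne]
    exact ⟨le_refl a, hab.le⟩
  have hcont : Tendsto (fun s => ENNReal.ofReal (2 ^ (p-1) * (b - a)) * ENNReal.ofReal (|w s| ^ p) +
      ENNReal.ofReal (2 ^ (p-1) * (b - a) ^ p) * J) (𝓝[Ioo a b] a)
      (𝓝 (ENNReal.ofReal (2 ^ (p-1) * (b - a)) * ENNReal.ofReal (|w a| ^ p) +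
      ENNReal.ofReal (2 ^ (p-1) * (b - a) ^ p) * J)) := by
    apply Tendsto.add _ tendsto_const_nhds
    apply ENNReal.Tendsto.const_mul _ (Or.inr ENNReal.ofReal_ne_top)
    apply (ENNReal.continuous_ofReal.tendsto _).comp
    have habs : Tendsto (fun s => |w s|) (𝓝[Ioo a b] a) (𝓝 (|w a|)) :=
      (continuous_abs.tendsto _).comp hwa
    have hrpow : ContinuousAt (fun x : ℝ => x ^ p) (|w a|) :=
      Real.continuousAt_rpow_const _ _ (Or.inr hp0.le)
    exact hrpow.tendsto.comp habs
  exact ge_of_tendsto hcont (eventually_mem_nhdsWithin.mono hmain)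
lemma map_graph_le_surf (m : ℕ) (F : Set (EuclideanSpace ℝ (Fin (m+1))))
    (G : (Fin m → ℝ) → EuclideanSpace ℝ (Fin (m+1))) (hGm : Measurable G)
    (S : Set (Fin m → ℝ)) (hS : MeasurableSet S)
    (hGF : ∀ y ∈ S, G y ∈ F)
    (hsec : ∀ y ∈ S, projm m (G y) = y) :
    Measure.map G (volume.restrict S) ≤
      (μH[((m+1 : ℕ) : ℝ) - 1] : Measure (EuclideanSpace ℝ (Fin (m+1)))).restrict F := by
  have hd : ((m+1 : ℕ) : ℝ) - 1 = (m : ℝ) := by push_cast; ring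
  rw [hd]
  rw [Measure.le_iff]
  intro A hA
  rw [Measure.map_apply hGm hA, Measure.restrict_apply (hGm hA)]
  have hvol : (volume : Measure (Fin m → ℝ)) = μH[(m : ℝ)] := by
    rw [← MeasureTheory.hausdorffMeasure_pi_real (ι := Fin m)]
    congr 1
    simp
  have hseteq : G ⁻¹' A ∩ S = projm m '' (A ∩ (G '' S)) := by
    ext y
    constructor
    · rintro ⟨hyA, hyS⟩
      exact ⟨G y, ⟨hyA, mem_image_of_mem G hyS⟩, hsec y hyS⟩
    · rintro ⟨x, ⟨hxA, ⟨y₀, hy₀S, rfl⟩⟩, rfl⟩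
      rw [hsec y₀ hy₀S]
      exact ⟨hxA, hy₀S⟩
  rw [hvol, hseteq]
  calc (μH[(m:ℝ)] : Measure (Fin m → ℝ)) (projm m '' (A ∩ G '' S))
      ≤ (1 : ℝ≥0∞) ^ (m : ℝ) * μH[(m:ℝ)] (A ∩ G '' S) :=
        (projm_lipschitz m).hausdorffMeasure_image_le (by positivity) _
    _ = μH[(m:ℝ)] (A ∩ G '' S) := by rw [ENNReal.one_rpow, one_mul]
    _ ≤ μH[(m:ℝ)] (A ∩ F) := by
        apply measure_mono
        rintro x ⟨hxA, ⟨y₀, hy₀S, rfl⟩⟩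
        exact ⟨hxA, hGF y₀ hy₀S⟩
    _ = (μH[(m:ℝ)].restrict F) A := (Measure.restrict_apply hA).symm

section Geometry
variable {m : ℕ} {Ω : Set (EuclideanSpace ℝ (Fin (m+1)))}

/-- the section of `Ω` over `y'` -/
def secI (m : ℕ) (Ω : Set (EuclideanSpace ℝ (Fin (m+1)))) (y' : Fin m → ℝ) : Set ℝ :=
  {t : ℝ | emb m (t, y') ∈ Ω}

/-- lower endpoint of the section -/
def aF (m : ℕ) (Ω : Set (EuclideanSpace ℝ (Fin (m+1)))) (y' : Fin m → ℝ) : ℝ :=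
  sInf (secI m Ω y')

/-- projection of `Ω` -/
def projS (m : ℕ) (Ω : Set (EuclideanSpace ℝ (Fin (m+1)))) : Set (Fin m → ℝ) :=
  {y' | (secI m Ω y').Nonempty}

/-- boundary graph map -/
def graphG (m : ℕ) (Ω : Set (EuclideanSpace ℝ (Fin (m+1)))) (y' : Fin m → ℝ) :
    EuclideanSpace ℝ (Fin (m+1)) :=
  emb m (aF m Ω y', y')

lemma secI_open (hΩ : IsOpen Ω) (y' : Fin m → ℝ) : IsOpen (secI m Ω y') :=
  hΩ.preimage (emb_cont_t m y')

lemma emb_combo (y' : Fin m → ℝ) (t s θ₁ θ₂ : ℝ) (h : θ₁ + θ₂ = 1) :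
    emb m (θ₁ * t + θ₂ * s, y') = θ₁ • emb m (t, y') + θ₂ • emb m (s, y') := by
  rw [emb_affine m t 0 y', emb_affine m s 0 y', emb_affine m (θ₁ * t + θ₂ * s) 0 y']
  rw [smul_add, smul_add, smul_smul, smul_smul]
  have h1 : θ₁ • emb m (0, y') + θ₂ • emb m (0, y') = emb m (0, y') := by
    rw [← add_smul, h, one_smul]
  rw [sub_zero, sub_zero, sub_zero]
  rw [add_add_add_comm, h1, ← add_smul]

lemma secI_convex (hconv : Convex ℝ Ω) (y' : Fin m → ℝ) : Convex ℝ (secI m Ω y') := by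
  intro t ht s hs θ₁ θ₂ h1 h2 h3
  show emb m (θ₁ • t + θ₂ • s, y') ∈ Ω
  have : (θ₁ • t + θ₂ • s : ℝ) = θ₁ * t + θ₂ * s := rfl
  rw [this, emb_combo y' t s θ₁ θ₂ h3]
  exact hconv ht hs h1 h2 h3

lemma secI_sub_bdd (hbd : IsBounded Ω) (y' : Fin m → ℝ) {t s : ℝ}
    (ht : t ∈ secI m Ω y') (hs : s ∈ secI m Ω y') :
    |t - s| ≤ diam (closure Ω) := by
  refine le_trans (emb_dist_t m t s y') ?_
  exact dist_le_diam_of_mem hbd.closure (subset_closure ht) (subset_closure hs)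

lemma secI_bddBelow (hbd : IsBounded Ω) (y' : Fin m → ℝ) : BddBelow (secI m Ω y') := by
  rcases Set.eq_empty_or_nonempty (secI m Ω y') with h | ⟨t₀, ht₀⟩
  · rw [h]; exact bddBelow_empty
  · refine ⟨t₀ - diam (closure Ω), fun t ht => ?_⟩
    have := secI_sub_bdd hbd y' ht₀ ht
    rw [abs_sub_comm] at this
    have := abs_le.mp ((abs_sub_comm t t₀) ▸ this)
    linarith [this.1]

lemma secI_bddAbove (hbd : IsBounded Ω) (y' : Fin m → ℝ) : BddAbove (secI m Ω y') := by
  rcases Set.eq_empty_or_nonempty (secI m Ω y') with h | ⟨t₀, ht₀⟩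
  · rw [h]; exact bddAbove_empty
  · refine ⟨t₀ + diam (closure Ω), fun t ht => ?_⟩
    have := secI_sub_bdd hbd y' ht ht₀
    have := abs_le.mp this
    linarith [this.2]

lemma secI_eq_Ioo (hΩ : IsOpen Ω) (hbd : IsBounded Ω) (hconv : Convex ℝ Ω)
    (y' : Fin m → ℝ) (hne : (secI m Ω y').Nonempty) :
    secI m Ω y' = Ioo (sInf (secI m Ω y')) (sSup (secI m Ω y')) := by
  have hbb := secI_bddBelow hbd y'
  have hba := secI_bddAbove hbd y'
  ext t
  constructor
  · intro ht
    obtain ⟨ε, hε, hball⟩ := Metric.isOpen_iff.mp (secI_open hΩ y') t ht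
    constructor
    · have h1 : t - ε/2 ∈ secI m Ω y' := by
        apply hball
        rw [Real.ball_eq_Ioo]
        constructor <;> [linarith; linarith]
      calc sInf (secI m Ω y') ≤ t - ε/2 := csInf_le hbb h1
        _ < t := by linarith
    · have h1 : t + ε/2 ∈ secI m Ω y' := by
        apply hball
        rw [Real.ball_eq_Ioo]
        constructor <;> [linarith; linarith]
      calc t < t + ε/2 := by linarith
        _ ≤ sSup (secI m Ω y') := le_csSup hba h1
  · intro ⟨h1, h2⟩
    obtain ⟨t₁, ht₁, ht₁t⟩ := (csInf_lt_iff hbb hne).mp h1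
    obtain ⟨t₂, ht₂, htt₂⟩ := (lt_csSup_iff hba hne).mp h2
    exact (secI_convex hconv y').ordConnected.out ht₁ ht₂ ⟨ht₁t.le, htt₂.le⟩

lemma aF_lt_sSup (hΩ : IsOpen Ω) (hbd : IsBounded Ω) (hconv : Convex ℝ Ω)
    (y' : Fin m → ℝ) (hne : (secI m Ω y').Nonempty) :
    aF m Ω y' < sSup (secI m Ω y') := by
  obtain ⟨t₀, ht₀⟩ := hne
  have h := secI_eq_Ioo hΩ hbd hconv y' ⟨t₀, ht₀⟩
  rw [h] at ht₀
  exact lt_trans ht₀.1 ht₀.2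

lemma graphG_mem_frontier (hΩ : IsOpen Ω) (hbd : IsBounded Ω) (hconv : Convex ℝ Ω)
    (y' : Fin m → ℝ) (hne : (secI m Ω y').Nonempty) :
    graphG m Ω y' ∈ frontier Ω := by
  have hab : aF m Ω y' < sSup (secI m Ω y') := aF_lt_sSup hΩ hbd hconv y' hne
  have hIoo : secI m Ω y' = Ioo (aF m Ω y') (sSup (secI m Ω y')) :=
    secI_eq_Ioo hΩ hbd hconv y' hne
  have hnebot : (𝓝[secI m Ω y'] (aF m Ω y')).NeBot := by
    apply mem_closure_iff_nhdsWithin_neBot.mp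
    rw [hIoo, closure_Ioo hab.ne]
    exact ⟨le_refl _, hab.le⟩
  constructor
  · apply mem_closure_of_tendsto (x := graphG m Ω y')
      (f := fun t : ℝ => emb m (t, y')) (b := 𝓝[secI m Ω y'] (aF m Ω y'))
    · exact ((emb_cont_t m y').tendsto _).mono_left nhdsWithin_le_nhds
    · filter_upwards [eventually_mem_nhdsWithin] with t ht
      exact ht
  · rw [hΩ.interior_eq]
    intro hmem
    have h : aF m Ω y' ∈ secI m Ω y' := hmem
    rw [hIoo] at h
    exact lt_irrefl _ h.1

lemma projS_open (hΩ : IsOpen Ω) : IsOpen (projS m Ω) := by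
  have : projS m Ω = Prod.snd '' ((fun z : ℝ × (Fin m → ℝ) => emb m z) ⁻¹' Ω) := by
    ext y'
    constructor
    · rintro ⟨t, ht⟩; exact ⟨(t, y'), ht, rfl⟩
    · rintro ⟨⟨t, z⟩, hz, rfl⟩; exact ⟨t, hz⟩
  rw [this]
  exact isOpenMap_snd _ (hΩ.preimage (emb_continuous m))

lemma aF_measurable (hΩ : IsOpen Ω) (hbd : IsBounded Ω) : Measurable (aF m Ω) := by
  apply measurable_of_Iio
  intro c
  have hopen : IsOpen {y' : Fin m → ℝ | ∃ t, t < c ∧ emb m (t, y') ∈ Ω} := by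
    have : {y' : Fin m → ℝ | ∃ t, t < c ∧ emb m (t, y') ∈ Ω} =
        Prod.snd '' ((fun z : ℝ × (Fin m → ℝ) => emb m z) ⁻¹' Ω ∩ (Iio c ×ˢ univ)) := by
      ext y'
      constructor
      · rintro ⟨t, htc, ht⟩; exact ⟨(t, y'), ⟨ht, htc, trivial⟩, rfl⟩
      · rintro ⟨⟨t, z⟩, ⟨hz, htc, -⟩, rfl⟩; exact ⟨t, htc, hz⟩
    rw [this]
    exact isOpenMap_snd _ (((hΩ.preimage (emb_continuous m))).inter
      ((isOpen_Iio).prod isOpen_univ))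
  have hset : aF m Ω ⁻¹' (Iio c) =
      {y' : Fin m → ℝ | ∃ t, t < c ∧ emb m (t, y') ∈ Ω} ∪
        (if (0:ℝ) < c then (projS m Ω)ᶜ else ∅) := by
    ext y'
    simp only [mem_preimage, mem_Iio, mem_union, mem_setOf_eq]
    by_cases hy : (secI m Ω y').Nonempty
    · have h1 : y' ∈ projS m Ω := hy
      rw [show aF m Ω y' = sInf (secI m Ω y') from rfl]
      constructor
      · intro hlt
        obtain ⟨t, ht, htc⟩ := (csInf_lt_iff (secI_bddBelow hbd y') hy).mp hlt
        exact Or.inl ⟨t, htc, ht⟩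
      · rintro (⟨t, htc, ht⟩ | habs)
        · exact lt_of_le_of_lt (csInf_le (secI_bddBelow hbd y') ht) htc
        · split at habs
          · exact absurd h1 habs
          · exact absurd habs (notMem_empty y')
    · have h2 : secI m Ω y' = ∅ := not_nonempty_iff_eq_empty.mp hy
      have h3 : aF m Ω y' = 0 := by
        rw [show aF m Ω y' = sInf (secI m Ω y') from rfl, h2, Real.sInf_empty]
      rw [h3]
      constructor
      · intro h0c
        right
        rw [if_pos h0c]
        exact fun hmem => hy hmem
      · rintro (⟨t, htc, ht⟩ | habs)
        · exact absurd ⟨t, ht⟩ hy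
        · split at habs
          · assumption
          · exact absurd habs (notMem_empty y')
  rw [hset]
  apply MeasurableSet.union hopen.measurableSet
  split
  · exact (projS_open hΩ).measurableSet.compl
  · exact MeasurableSet.empty

lemma graphG_measurable (hΩ : IsOpen Ω) (hbd : IsBounded Ω) : Measurable (graphG m Ω) := by
  apply (emb_measurable m).comp
  exact ((aF_measurable hΩ hbd)).prodMk measurable_id

end Geometry

lemma exists_measurable_ext {n : ℕ} {s : Set (EuclideanSpace ℝ (Fin n))} (hs : IsClosed s)
    (u : EuclideanSpace ℝ (Fin n) → ℝ) (hu : ContinuousOn u s) :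
    ∃ v : EuclideanSpace ℝ (Fin n) → ℝ, Measurable v ∧ ∀ x ∈ s, v x = u x := by
  refine ⟨Function.extend (Subtype.val : s → _) (fun x => u x.val) 0, ?_, ?_⟩
  · apply (MeasurableEmbedding.subtype_coe hs.measurableSet).measurable_extend
    · exact (ContinuousOn.restrict hu).measurable
    · exact measurable_const
  · intro x hx
    have h := Subtype.coe_injective.extend_apply (fun x : s => u x.val) 0 ⟨x, hx⟩
    exact h

section Poincare
variable {m : ℕ} {Ω : Set (EuclideanSpace ℝ (Fin (m+1)))}

lemma sSup_sub_sInf_le (hbd : IsBounded Ω) (y' : Fin m → ℝ)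
    (hne : (secI m Ω y').Nonempty) :
    sSup (secI m Ω y') - sInf (secI m Ω y') ≤ diam (closure Ω) := by
  have h1 : sSup (secI m Ω y') ≤ sInf (secI m Ω y') + diam (closure Ω) := by
    apply csSup_le hne
    intro t ht
    have h2 : t - diam (closure Ω) ≤ sInf (secI m Ω y') := by
      apply le_csInf hne
      intro s hs
      have := abs_le.mp (secI_sub_bdd hbd y' ht hs)
      linarith [this.2]
    linarith
  linarith

lemma poincare (p : ℝ) (hp : 1 < p)
    (hΩ : IsOpen Ω) (hbd : IsBounded Ω) (hconv : Convex ℝ Ω)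
    (u : EuclideanSpace ℝ (Fin (m+1)) → ℝ)
    (hu_cont : ContinuousOn u (closure Ω))
    (hu_diff : ∀ x ∈ Ω, DifferentiableAt ℝ u x) :
    (∫⁻ x in Ω, ENNReal.ofReal (|u x| ^ p)) ≤
      ENNReal.ofReal (2 ^ (p-1) * (max (diam (closure Ω)) 1) ^ p) *
        ((∫⁻ y, ENNReal.ofReal (|u y| ^ p) ∂(surf Ω)) +
          ∫⁻ x in Ω, ENNReal.ofReal (‖fderiv ℝ u x‖ ^ p)) := by
  have hp0 : (0:ℝ) < p := lt_trans one_pos hp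
  set D : ℝ := max (diam (closure Ω)) 1 with hDdef
  have hD1 : (1:ℝ) ≤ D := le_max_right _ _
  have hD0 : (0:ℝ) < D := lt_of_lt_of_le one_pos hD1
  have hDp : D ≤ D ^ p := by
    nth_rewrite 1 [show D = D ^ (1:ℝ) from (Real.rpow_one D).symm]
    exact Real.rpow_le_rpow_of_exponent_le hD1 hp.le
  -- measurable extension
  obtain ⟨v, hvm, hveq⟩ := exists_measurable_ext isClosed_closure u hu_cont
  have hveqΩ : ∀ x ∈ Ω, v x = u x := fun x hx => hveq x (subset_closure hx)
  have hv_cont : ContinuousOn v (closure Ω) := hu_cont.congr hveq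
  have hv_diff : ∀ x ∈ Ω, DifferentiableAt ℝ v x := by
    intro x hx
    apply (hu_diff x hx).congr_of_eventuallyEq
    exact Filter.eventuallyEq_of_mem (hΩ.mem_nhds hx) (fun y hy => hveqΩ y hy)
  have hfeq : ∀ x ∈ Ω, fderiv ℝ v x = fderiv ℝ u x := by
    intro x hx
    apply Filter.EventuallyEq.fderiv_eq
    exact Filter.eventuallyEq_of_mem (hΩ.mem_nhds hx) (fun y hy => hveqΩ y hy)
  -- replace u by v everywhere
  have hIu : (∫⁻ x in Ω, ENNReal.ofReal (|u x| ^ p)) =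
      ∫⁻ x in Ω, ENNReal.ofReal (|v x| ^ p) := by
    apply setLIntegral_congr_fun_ae hΩ.measurableSet
    exact Eventually.of_forall (fun x hx => by rw [hveqΩ x hx])
  have hSu : (∫⁻ y, ENNReal.ofReal (|u y| ^ p) ∂(surf Ω)) =
      ∫⁻ y, ENNReal.ofReal (|v y| ^ p) ∂(surf Ω) := by
    rw [surf]
    apply setLIntegral_congr_fun_ae isClosed_frontier.measurableSet
    refine Eventually.of_forall (fun x hx => ?_)
    rw [hveq x (frontier_subset_closure hx)]
  have hGu : (∫⁻ x in Ω, ENNReal.ofReal (‖fderiv ℝ u x‖ ^ p)) =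
      ∫⁻ x in Ω, ENNReal.ofReal (‖fderiv ℝ v x‖ ^ p) := by
    apply setLIntegral_congr_fun_ae hΩ.measurableSet
    exact Eventually.of_forall (fun x hx => by rw [hfeq x hx])
  rw [hIu, hSu, hGu]
  -- measurable integrands
  have hvabs : Measurable fun x => ENNReal.ofReal (|v x| ^ p) :=
    (hvm.abs.pow measurable_const).ennreal_ofReal
  have hfder : Measurable fun x => ENNReal.ofReal (‖fderiv ℝ v x‖ ^ p) :=
    (((measurable_fderiv ℝ v).norm).pow measurable_const).ennreal_ofReal
  set f := Ω.indicator (fun x => ENNReal.ofReal (|v x| ^ p)) with hfdef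
  set fg := Ω.indicator (fun x => ENNReal.ofReal (‖fderiv ℝ v x‖ ^ p)) with hfgdef
  have hfm : Measurable f := hvabs.indicator hΩ.measurableSet
  have hfgm : Measurable fg := hfder.indicator hΩ.measurableSet
  -- Fubini
  have hfub : ∀ (F : EuclideanSpace ℝ (Fin (m+1)) → ℝ≥0∞), Measurable F →
      (∫⁻ x, F x) = ∫⁻ y' : Fin m → ℝ, ∫⁻ t : ℝ, F (emb m (t, y')) := by
    intro F hF
    rw [← (emb_mp m).lintegral_comp_emb (emb m).measurableEmbedding F]
    rw [MeasureTheory.Measure.volume_eq_prod]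
    exact lintegral_prod_symm _ ((hF.comp (emb_measurable m)).aemeasurable)
  have hindf : ∀ (y' : Fin m → ℝ) (t : ℝ) (g : EuclideanSpace ℝ (Fin (m+1)) → ℝ≥0∞),
      (Ω.indicator g) (emb m (t, y')) = (secI m Ω y').indicator (fun s => g (emb m (s, y'))) t := by
    intro y' t g
    by_cases h : t ∈ secI m Ω y'
    · rw [Set.indicator_of_mem h, Set.indicator_of_mem (by exact h)]
    · rw [Set.indicator_of_notMem h, Set.indicator_of_notMem (by exact h)]
  -- definitions
  set S' := projS m Ω with hS'def
  set G := graphG m Ω with hGdef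
  have hS'm : MeasurableSet S' := (projS_open hΩ).measurableSet
  have hGm : Measurable G := graphG_measurable hΩ hbd
  set C0 : ℝ≥0∞ := ENNReal.ofReal (2 ^ (p-1) * D ^ p) with hC0def
  set bd : (Fin m → ℝ) → ℝ≥0∞ :=
    S'.indicator (fun y' => ENNReal.ofReal (|v (G y')| ^ p)) with hbddef
  set gradline : (Fin m → ℝ) → ℝ≥0∞ :=
    fun y' => ∫⁻ t : ℝ, fg (emb m (t, y')) with hgldef
  have hbdm : Measurable bd :=
    ((hvm.comp hGm).abs.pow measurable_const).ennreal_ofReal.indicator hS'm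
  have hglm : Measurable gradline := by
    apply Measurable.lintegral_prod_left
    exact hfgm.comp (emb_measurable m)
  -- the per-line estimate
  have hline : ∀ y' : Fin m → ℝ,
      (∫⁻ t : ℝ, f (emb m (t, y'))) ≤ C0 * bd y' + C0 * gradline y' := by
    intro y'
    by_cases hS : y' ∈ S'
    · -- nonempty section
      have hne : (secI m Ω y').Nonempty := hS
      set a := aF m Ω y' with hadef
      set b := sSup (secI m Ω y') with hbdef2
      have hab : a < b := aF_lt_sSup hΩ hbd hconv y' hne
      have hIoo : secI m Ω y' = Ioo a b := secI_eq_Ioo hΩ hbd hconv y' hne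
      have hbaD : b - a ≤ D := le_trans (sSup_sub_sInf_le hbd y' hne) (le_max_left _ _)
      -- the 1-D lemma
      have h1d := oneD hp hab (fun t => v (emb m (t, y')))
        (fun t => (fderiv ℝ v (emb m (t, y'))) (e0 m))
        (fun t => ‖fderiv ℝ v (emb m (t, y'))‖) ?_ ?_ ?_ ?_ ?_ ?_
      · -- assemble
        have e1 : (∫⁻ t : ℝ, f (emb m (t, y'))) =
            ∫⁻ t in Ioo a b, ENNReal.ofReal (|v (emb m (t, y'))| ^ p) := by
          rw [hfdef]
          rw [lintegral_congr (fun t => hindf y' t _)]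
          simp only [hIoo]
          rw [lintegral_indicator measurableSet_Ioo]
        have e2 : gradline y' =
            ∫⁻ t in Ioo a b, ENNReal.ofReal (‖fderiv ℝ v (emb m (t, y'))‖ ^ p) := by
          rw [hgldef]
          simp only [hfgdef]
          rw [lintegral_congr (fun t => hindf y' t _)]
          simp only [hIoo]
          rw [lintegral_indicator measurableSet_Ioo]
        have e3 : bd y' = ENNReal.ofReal (|v (emb m (a, y'))| ^ p) := by
          rw [hbddef, Set.indicator_of_mem hS]
          rfl
        rw [e1, e2, e3]
        refine le_trans h1d ?_
        gcongr
        · rw [hC0def]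
          apply ENNReal.ofReal_le_ofReal
          apply mul_le_mul_of_nonneg_left _ (by positivity)
          calc b - a ≤ D := hbaD
            _ ≤ D ^ p := hDp
        · rw [hC0def]
          apply ENNReal.ofReal_le_ofReal
          apply mul_le_mul_of_nonneg_left _ (by positivity)
          exact Real.rpow_le_rpow (by linarith) hbaD hp0.le
      · -- hwa : continuity at left endpoint
        have hGfr : emb m (a, y') ∈ frontier Ω := graphG_mem_frontier hΩ hbd hconv y' hne
        have hγ : Tendsto (fun t => emb m (t, y')) (𝓝[Ioo a b] a)
            (𝓝[closure Ω] (emb m (a, y'))) := by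
          apply ContinuousWithinAt.tendsto_nhdsWithin
          · exact ((emb_cont_t m y').continuousAt).continuousWithinAt
          · intro t ht
            rw [← hIoo] at ht
            exact subset_closure ht
        exact ((hv_cont _ (frontier_subset_closure hGfr)).tendsto).comp hγ
      · -- derivatives
        intro t ht
        rw [← hIoo] at ht
        have hx : emb m (t, y') ∈ Ω := ht
        have hγd : HasDerivAt (fun s : ℝ => emb m (s, y')) (e0 m) t := by
          have : (fun s : ℝ => emb m (s, y')) =
              fun s : ℝ => s • e0 m + emb m (0, y') := by
            funext s
            rw [emb_affine m s 0 y', sub_zero]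
            exact add_comm _ _
          rw [this]
          simpa using ((hasDerivAt_id t).smul_const (e0 m)).add_const (emb m (0, y'))
        exact ((hv_diff _ hx).hasFDerivAt).comp_hasDerivAt t hγd
      · exact (measurable_fderiv_apply_const ℝ v (e0 m)).comp (emb_cont_t m y').measurable
      · exact ((measurable_fderiv ℝ v).norm).comp (emb_cont_t m y').measurable
      · exact fun t => norm_nonneg _
      · intro t ht
        calc |(fderiv ℝ v (emb m (t, y'))) (e0 m)|
            ≤ ‖fderiv ℝ v (emb m (t, y'))‖ * ‖e0 m‖ :=
              (fderiv ℝ v (emb m (t, y'))).le_opNorm (e0 m)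
          _ = ‖fderiv ℝ v (emb m (t, y'))‖ := by rw [norm_e0, mul_one]
    · -- empty section
      have hemp : secI m Ω y' = ∅ := not_nonempty_iff_eq_empty.mp hS
      have : ∀ t : ℝ, f (emb m (t, y')) = 0 := by
        intro t
        rw [hfdef, hindf y' t _, hemp]
        simp
      rw [lintegral_congr this, lintegral_zero]
      exact zero_le'
  -- integrate the per-line estimate
  have hstep1 : (∫⁻ x in Ω, ENNReal.ofReal (|v x| ^ p)) = ∫⁻ x, f x :=
    (lintegral_indicator hΩ.measurableSet _).symm
  have hstep2 : (∫⁻ x, f x) ≤ C0 * (∫⁻ y', bd y') + C0 * ∫⁻ y', gradline y' := by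
    rw [hfub f hfm]
    calc (∫⁻ y' : Fin m → ℝ, ∫⁻ t : ℝ, f (emb m (t, y')))
        ≤ ∫⁻ y' : Fin m → ℝ, (C0 * bd y' + C0 * gradline y') := lintegral_mono hline
      _ = C0 * (∫⁻ y', bd y') + C0 * ∫⁻ y', gradline y' := by
          rw [lintegral_add_left (by exact (hbdm.const_mul C0))]
          rw [lintegral_const_mul C0 hbdm, lintegral_const_mul C0 hglm]
  -- trace: boundary term
  have hstep3 : (∫⁻ y', bd y') ≤ ∫⁻ y, ENNReal.ofReal (|v y| ^ p) ∂(surf Ω) := by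
    have h0 : (∫⁻ y', bd y') = ∫⁻ y' in S', ENNReal.ofReal (|v (G y')| ^ p) := by
      rw [hbddef, lintegral_indicator hS'm]
    rw [h0]
    have h1 : (∫⁻ y' in S', ENNReal.ofReal (|v (G y')| ^ p)) =
        ∫⁻ x, ENNReal.ofReal (|v x| ^ p) ∂(Measure.map G (volume.restrict S')) :=
      (lintegral_map hvabs hGm).symm
    rw [h1, surf]
    apply lintegral_mono'
    · exact map_graph_le_surf m (frontier Ω) G hGm S' hS'm
        (fun y' hy' => graphG_mem_frontier hΩ hbd hconv y' hy')
        (fun y' _ => projm_emb m _ y')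
    · exact le_rfl
  -- gradient term
  have hstep4 : (∫⁻ y', gradline y') = ∫⁻ x in Ω, ENNReal.ofReal (‖fderiv ℝ v x‖ ^ p) := by
    have : (∫⁻ y', gradline y') = ∫⁻ x, fg x := (hfub fg hfgm).symm
    rw [this, hfgdef, lintegral_indicator hΩ.measurableSet]
  calc (∫⁻ x in Ω, ENNReal.ofReal (|v x| ^ p)) = ∫⁻ x, f x := hstep1
    _ ≤ C0 * (∫⁻ y', bd y') + C0 * ∫⁻ y', gradline y' := hstep2
    _ ≤ C0 * (∫⁻ y, ENNReal.ofReal (|v y| ^ p) ∂(surf Ω)) +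
        C0 * ∫⁻ x in Ω, ENNReal.ofReal (‖fderiv ℝ v x‖ ^ p) :=
        add_le_add (mul_le_mul_right hstep3 C0) (le_of_eq (by rw [hstep4]))
    _ = C0 * ((∫⁻ y, ENNReal.ofReal (|v y| ^ p) ∂(surf Ω)) +
        ∫⁻ x in Ω, ENNReal.ofReal (‖fderiv ℝ v x‖ ^ p)) := by rw [mul_add]

lemma key_bound (p : ℝ) (hp : 1 < p)
    (hΩ : IsOpen Ω) (hbd : IsBounded Ω) (hconv : Convex ℝ Ω)
    {σ : ℝ} (hσ0 : 0 < σ) (hσ1 : σ ≤ 1)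
    (u : EuclideanSpace ℝ (Fin (m+1)) → ℝ) (hu : MemW1p p Ω u)
    (hw0 : wnormC p Ω σ u ≠ 0) :
    ENNReal.ofReal (σ * alphaC p σ ^ p /
        (2 * (2 ^ (p-1) * (max (diam (closure Ω)) 1) ^ p)))
      ≤ QpC p Ω σ u / wnormC p Ω σ u := by
  have hp0 : (0:ℝ) < p := lt_trans one_pos hp
  set D : ℝ := max (diam (closure Ω)) 1 with hDdef
  have hD0 : (0:ℝ) < D := lt_of_lt_of_le one_pos (le_max_right _ _)
  have hC0' : (0:ℝ) < 2 ^ (p-1) * D ^ p := by positivity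
  have hα : 0 < alphaC p σ := by
    rw [alphaC]
    have h1 : (0:ℝ) < (p-1)/p := div_pos (by linarith) hp0
    have h2 : (0:ℝ) < σ ^ (1/(1-p)) := Real.rpow_pos_of_pos hσ0 _
    positivity
  have hαp : (0:ℝ) < alphaC p σ ^ p := Real.rpow_pos_of_pos hα _
  set Iu := ∫⁻ x in Ω, ENNReal.ofReal (|u x| ^ p) with hIudef
  set SI := ∫⁻ y, ENNReal.ofReal (|u y| ^ p) ∂(surf Ω) with hSIdef
  set GI := ∫⁻ x in Ω, ENNReal.ofReal (‖fderiv ℝ u x‖ ^ p) with hGIdef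
  have hQ : QpC p Ω σ u = GI + ENNReal.ofReal σ * SI := by
    rw [hSIdef, hGIdef]; rfl
  -- wnormC ≤ ofReal((α^p)⁻¹) * Iu
  have h1 : wnormC p Ω σ u ≤ ENNReal.ofReal ((alphaC p σ ^ p)⁻¹) * Iu := by
    have hpt : ∀ x, ENNReal.ofReal (|u x| ^ p / (sdist Ω x + alphaC p σ) ^ p) ≤
        ENNReal.ofReal ((alphaC p σ ^ p)⁻¹) * ENNReal.ofReal (|u x| ^ p) := by
      intro x
      rw [← ENNReal.ofReal_mul (by positivity)]
      apply ENNReal.ofReal_le_ofReal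
      rw [← div_eq_inv_mul]
      have hd0 : 0 ≤ sdist Ω x := Metric.infDist_nonneg
      have hden : alphaC p σ ^ p ≤ (sdist Ω x + alphaC p σ) ^ p :=
        Real.rpow_le_rpow hα.le (by linarith) hp0.le
      exact div_le_div_of_nonneg_left (by positivity) hαp hden
    calc wnormC p Ω σ u
        ≤ ∫⁻ x in Ω, ENNReal.ofReal ((alphaC p σ ^ p)⁻¹) * ENNReal.ofReal (|u x| ^ p) := by
          rw [wnormC]
          exact lintegral_mono (fun x => hpt x)
      _ = ENNReal.ofReal ((alphaC p σ ^ p)⁻¹) * Iu := by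
          rw [hIudef]
          exact lintegral_const_mul' _ _ ENNReal.ofReal_ne_top
  -- Poincaré
  have h2 : Iu ≤ ENNReal.ofReal (2 ^ (p-1) * D ^ p) * (SI + GI) :=
    poincare p hp hΩ hbd hconv u hu.1 hu.2.1
  -- boundary/gradient vs QpC
  have hσR : ENNReal.ofReal σ⁻¹ * ENNReal.ofReal σ = 1 := by
    rw [← ENNReal.ofReal_mul (by positivity), inv_mul_cancel₀ hσ0.ne', ENNReal.ofReal_one]
  have h3 : SI ≤ ENNReal.ofReal σ⁻¹ * QpC p Ω σ u := by
    calc SI = (ENNReal.ofReal σ⁻¹ * ENNReal.ofReal σ) * SI := by rw [hσR, one_mul]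
      _ = ENNReal.ofReal σ⁻¹ * (ENNReal.ofReal σ * SI) := by rw [mul_assoc]
      _ ≤ ENNReal.ofReal σ⁻¹ * QpC p Ω σ u := by
          apply mul_le_mul_right
          rw [hQ]
          exact le_add_self
  have h4 : GI ≤ ENNReal.ofReal σ⁻¹ * QpC p Ω σ u := by
    have hg : GI ≤ QpC p Ω σ u := by rw [hQ]; exact self_le_add_right _ _
    have hone : (1:ℝ≥0∞) ≤ ENNReal.ofReal σ⁻¹ := by
      rw [← ENNReal.ofReal_one]
      exact ENNReal.ofReal_le_ofReal ((one_le_inv₀ hσ0).mpr hσ1)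
    calc GI ≤ QpC p Ω σ u := hg
      _ = 1 * QpC p Ω σ u := (one_mul _).symm
      _ ≤ ENNReal.ofReal σ⁻¹ * QpC p Ω σ u := mul_le_mul_left hone _
  -- combine
  have h5 : wnormC p Ω σ u ≤
      ENNReal.ofReal ((alphaC p σ ^ p)⁻¹ * (2 ^ (p-1) * D ^ p * (σ⁻¹ + σ⁻¹))) *
        QpC p Ω σ u := by
    calc wnormC p Ω σ u ≤ ENNReal.ofReal ((alphaC p σ ^ p)⁻¹) * Iu := h1
      _ ≤ ENNReal.ofReal ((alphaC p σ ^ p)⁻¹) *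
          (ENNReal.ofReal (2 ^ (p-1) * D ^ p) * (SI + GI)) := mul_le_mul_right h2 _
      _ ≤ ENNReal.ofReal ((alphaC p σ ^ p)⁻¹) *
          (ENNReal.ofReal (2 ^ (p-1) * D ^ p) *
            ((ENNReal.ofReal σ⁻¹ * QpC p Ω σ u) + (ENNReal.ofReal σ⁻¹ * QpC p Ω σ u))) := by
          apply mul_le_mul_right
          apply mul_le_mul_right
          exact add_le_add h3 h4
      _ = ENNReal.ofReal ((alphaC p σ ^ p)⁻¹ * (2 ^ (p-1) * D ^ p * (σ⁻¹ + σ⁻¹))) *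
          QpC p Ω σ u := by
          rw [← add_mul, ← ENNReal.ofReal_add (by positivity) (by positivity),
            ENNReal.ofReal_mul (le_of_lt (inv_pos.mpr hαp)),
            ENNReal.ofReal_mul (le_of_lt hC0')]
          ring
  -- wnormC is finite
  have hwtop : wnormC p Ω σ u ≠ ⊤ := by
    refine (lt_of_le_of_lt h1 ?_).ne
    exact ENNReal.mul_lt_top ENNReal.ofReal_lt_top (hu.2.2.1.lt_top)
  -- conclude
  rw [ENNReal.le_div_iff_mul_le (Or.inl hw0) (Or.inl hwtop)]
  calc ENNReal.ofReal (σ * alphaC p σ ^ p / (2 * (2 ^ (p-1) * D ^ p))) * wnormC p Ω σ u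
      ≤ ENNReal.ofReal (σ * alphaC p σ ^ p / (2 * (2 ^ (p-1) * D ^ p))) *
        (ENNReal.ofReal ((alphaC p σ ^ p)⁻¹ * (2 ^ (p-1) * D ^ p * (σ⁻¹ + σ⁻¹))) *
          QpC p Ω σ u) := mul_le_mul_right h5 _
    _ = ENNReal.ofReal ((σ * alphaC p σ ^ p / (2 * (2 ^ (p-1) * D ^ p))) *
          ((alphaC p σ ^ p)⁻¹ * (2 ^ (p-1) * D ^ p * (σ⁻¹ + σ⁻¹)))) * QpC p Ω σ u := by
        rw [← mul_assoc, ← ENNReal.ofReal_mul (by positivity)]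
    _ = QpC p Ω σ u := by
        have hcalc : (σ * alphaC p σ ^ p / (2 * (2 ^ (p-1) * D ^ p))) *
            ((alphaC p σ ^ p)⁻¹ * (2 ^ (p-1) * D ^ p * (σ⁻¹ + σ⁻¹))) = 1 := by
          field_simp
          ring
        rw [hcalc, ENNReal.ofReal_one, one_mul]


/-- **Proposition 4.3, (4.4).** For `Ω ⊂ ℝⁿ` open, bounded, convex with `C²` boundary and
constant boundary parameter `σ`, one has `λ_p(Ω,σ) → +∞` as `σ → 0+`. -/
theorem lam_tendsto_top (n : ℕ) (hn : 1 ≤ n) (p : ℝ) (hp : 1 < p)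
    (Ω : Set (EuclideanSpace ℝ (Fin n))) (hΩ : IsOpen Ω) (hne : Ω.Nonempty)
    (hbd : IsBounded Ω) (hconv : Convex ℝ Ω) (hC2 : HasC2Boundary Ω) :
    Tendsto (fun σ : ℝ => lamC p Ω σ) (𝓝[>] (0 : ℝ)) (𝓝 (∞ : ℝ≥0∞)) := by
  obtain ⟨m, rfl⟩ : ∃ m, n = m + 1 := ⟨n - 1, (Nat.succ_pred_eq_of_pos hn).symm⟩
  have hp0 : (0:ℝ) < p := lt_trans one_pos hp
  have hp1 : p - 1 > 0 := by linarith
  set D : ℝ := max (diam (closure Ω)) 1 with hDdef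
  have hD0 : (0:ℝ) < D := lt_of_lt_of_le one_pos (le_max_right _ _)
  set q' : ℝ := 1/(1-p) with hq'def
  have hq'neg : q' < 0 := by
    rw [hq'def]
    apply div_neg_of_pos_of_neg one_pos
    linarith
  set c₃ : ℝ := ((p-1)/p) ^ p / (2 * (2 ^ (p-1) * D ^ p)) with hc₃def
  have hc₃ : 0 < c₃ := by
    rw [hc₃def]
    have : (0:ℝ) < ((p-1)/p) ^ p := Real.rpow_pos_of_pos (by positivity) _
    positivity
  -- the real identity : for σ > 0, σ * α^p / (2 C₀') = σ^q' * c₃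
  have hid : ∀ σ : ℝ, 0 < σ →
      σ * alphaC p σ ^ p / (2 * (2 ^ (p-1) * D ^ p)) = σ ^ q' * c₃ := by
    intro σ hσ
    have h1 : alphaC p σ ^ p = ((p-1)/p) ^ p * σ ^ (q' * p) := by
      rw [alphaC, Real.mul_rpow (by positivity) (Real.rpow_nonneg hσ.le _)]
      rw [Real.rpow_mul hσ.le]
    have h2 : σ * σ ^ (q' * p) = σ ^ q' := by
      nth_rewrite 1 [← Real.rpow_one σ]
      rw [← Real.rpow_add hσ]
      congr 1
      rw [hq'def]
      have hne : (1:ℝ) - p ≠ 0 := by linarith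
      field_simp
      ring
    rw [h1, hc₃def]
    calc σ * (((p-1)/p) ^ p * σ ^ (q' * p)) / (2 * (2 ^ (p-1) * D ^ p))
        = (σ * σ ^ (q' * p)) * (((p-1)/p) ^ p / (2 * (2 ^ (p-1) * D ^ p))) := by ring
      _ = σ ^ q' * (((p-1)/p) ^ p / (2 * (2 ^ (p-1) * D ^ p))) := by rw [h2]
  -- eventual lower bound for lamC
  have hKle : ∀ᶠ σ in 𝓝[>](0:ℝ), ENNReal.ofReal (σ ^ q' * c₃) ≤ lamC p Ω σ := by
    filter_upwards [Ioc_mem_nhdsGT_of_mem (Set.mem_Ico.mpr ⟨le_refl (0:ℝ), zero_lt_one⟩)]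
      with σ hσ
    obtain ⟨hσ0, hσ1⟩ := hσ
    rw [← hid σ hσ0]
    rw [lamC]
    refine le_iInf fun u => le_iInf fun hu => le_iInf fun hw => ?_
    exact key_bound p hp hΩ hbd hconv hσ0 hσ1 u hu hw
  -- the lower bound tends to ⊤
  have hT : Tendsto (fun σ : ℝ => ENNReal.ofReal (σ ^ q' * c₃)) (𝓝[>](0:ℝ)) (𝓝 ⊤) := by
    have hneg : Tendsto (fun σ : ℝ => σ ^ (-q')) (𝓝[>](0:ℝ)) (𝓝[>] (0:ℝ)) := by
      rw [tendsto_nhdsWithin_iff]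
      constructor
      · have hc : ContinuousAt (fun x : ℝ => x ^ (-q')) 0 :=
          Real.continuousAt_rpow_const 0 (-q') (Or.inr (by linarith))
        have h0 : (0:ℝ) ^ (-q') = 0 := Real.zero_rpow (by linarith)
        have := hc.tendsto.mono_left (nhdsWithin_le_nhds (s := Set.Ioi (0:ℝ)))
        rwa [h0] at this
      · filter_upwards [self_mem_nhdsWithin] with σ hσ
        exact Real.rpow_pos_of_pos hσ _
    have hinv : Tendsto (fun σ : ℝ => (σ ^ (-q'))⁻¹) (𝓝[>](0:ℝ)) atTop :=
      hneg.inv_tendsto_nhdsGT_zero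
    have hinv' : Tendsto (fun σ : ℝ => σ ^ q') (𝓝[>](0:ℝ)) atTop := by
      apply hinv.congr'
      filter_upwards [self_mem_nhdsWithin] with σ hσ
      rw [← Real.rpow_neg (le_of_lt hσ), neg_neg]
    have hmul : Tendsto (fun σ : ℝ => σ ^ q' * c₃) (𝓝[>](0:ℝ)) atTop :=
      hinv'.atTop_mul_const hc₃
    exact ENNReal.tendsto_ofReal_atTop.comp hmul
  exact tendsto_nhds_top_mono hT hKle


end Poincare

end RobinHardy
end
end

section
/- Let 1 < p < n and R > 0, and let B_R^c = {x ∈ ℝ^n : |x| > R} be the complement of the closed ball of radius R centered at the origin. Then for every u ∈ W^{1,p}(B_R^c), ∫_{B_R^c} |∇u(x)|^p dx ≥ ((n-p)/p)^p ∫_{B_R^c} |u(x)|^p/|x|^p dx. -/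
open MeasureTheory Metric Set Filter Bornology
open scoped ENNReal Topology

noncomputable section

namespace RobinHardy


lemma lint_Ioi_rpow {e : ℝ} (he : e < -1) {c : ℝ} (hc : 0 < c) :
    ∫⁻ s in Set.Ioi c, ENNReal.ofReal (s ^ e) = ENNReal.ofReal (c ^ (e + 1) / (-(e + 1))) := by
  rw [← ofReal_integral_eq_lintegral_ofReal (integrableOn_Ioi_rpow_of_lt he hc) ?_]
  · rw [integral_Ioi_rpow_of_lt he hc]
    congr 1
    rw [div_neg, neg_div]
  · filter_upwards [ae_restrict_mem measurableSet_Ioi] with s hs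
    exact Real.rpow_nonneg (le_of_lt (hc.trans hs)) _

lemma lint_Ioo_rpow {e : ℝ} (he : -1 < e) {s : ℝ} (hs : 0 < s) :
    ∫⁻ r in Set.Ioo 0 s, ENNReal.ofReal (r ^ e) = ENNReal.ofReal (s ^ (e + 1) / (e + 1)) := by
  rw [Measure.restrict_congr_set Ioo_ae_eq_Ioc]
  have hint : IntervalIntegrable (fun r : ℝ => r ^ e) volume 0 s :=
    intervalIntegral.intervalIntegrable_rpow' he
  have hii : MeasureTheory.IntegrableOn (fun r : ℝ => r ^ e) (Set.Ioc 0 s) volume :=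
    (intervalIntegrable_iff_integrableOn_Ioc_of_le hs.le).mp hint
  rw [← ofReal_integral_eq_lintegral_ofReal hii ?_]
  · rw [← intervalIntegral.integral_of_le hs.le, integral_rpow (Or.inl he)]
    rw [Real.zero_rpow (by linarith : e + 1 ≠ 0), sub_zero]
  · filter_upwards [ae_restrict_mem measurableSet_Ioc] with r hr
    exact Real.rpow_nonneg hr.1.le _

lemma hardy_op {p κ R : ℝ} (hp : 1 < p) (hκ : 0 < κ) (hR : 0 < R)
    {g : ℝ → ℝ≥0∞} (hg : Measurable g) :
    ∫⁻ r in Set.Ioi R, (∫⁻ s in Set.Ioi r, g s ∂(volume.restrict (Set.Ioi R))) ^ p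
        * ENNReal.ofReal (r ^ (κ * p - 1)) ≤
      ENNReal.ofReal (κ⁻¹ ^ p) *
        ∫⁻ s in Set.Ioi R, g s ^ p * ENNReal.ofReal (s ^ (κ * p + p - 1)) := by
  have hp0 : (0:ℝ) < p := lt_trans one_pos hp
  have hp1 : (0:ℝ) < p - 1 := by linarith
  have hpq : p.HolderConjugate (p / (p - 1)) := Real.HolderConjugate.conjExponent hp
  set q : ℝ := p / (p - 1) with hqdef
  have hq0 : 0 < q := hpq.symm.pos
  set a : ℝ := (κ + 1) * (p - 1) / p with hadef
  have haq : a * q = κ + 1 := by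
    rw [hadef, hqdef]; field_simp
  have hap : a * p = (κ + 1) * (p - 1) := by
    rw [hadef]; field_simp
  set h : ℝ → ℝ≥0∞ := fun s => g s ^ p * ENNReal.ofReal (s ^ (a * p)) with hhdef
  have hhm : Measurable h := by fun_prop
  set μR := volume.restrict (Set.Ioi R) with hμR
  -- pointwise Hölder bound
  have key : ∀ r ∈ Set.Ioi R,
      (∫⁻ s in Set.Ioi r, g s ∂μR) ^ p ≤
        (∫⁻ s in Set.Ioi r, h s ∂μR) * ENNReal.ofReal ((r ^ (-κ) / κ) ^ (p - 1)) := by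
    intro r hr
    have hr0 : 0 < r := hR.trans hr
    have hres : μR.restrict (Set.Ioi r) = volume.restrict (Set.Ioi r) := by
      rw [hμR, Measure.restrict_restrict measurableSet_Ioi,
        Set.inter_eq_left.mpr (Set.Ioi_subset_Ioi (le_of_lt hr))]
    have hsplit : ∫⁻ s in Set.Ioi r, g s ∂μR
        = ∫⁻ s in Set.Ioi r, ((fun s => g s * ENNReal.ofReal (s ^ a)) *
            (fun s => ENNReal.ofReal (s ^ (-a)))) s ∂μR := by
      refine setLIntegral_congr_fun measurableSet_Ioi (fun s hs => ?_)
      have hs0 : 0 < s := hr0.trans hs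
      simp only [Pi.mul_apply]
      rw [mul_assoc, ← ENNReal.ofReal_mul (Real.rpow_nonneg hs0.le a),
        ← Real.rpow_add hs0]
      simp
    have hXeq : ∫⁻ s in Set.Ioi r, (g s * ENNReal.ofReal (s ^ a)) ^ p ∂μR
        = ∫⁻ s in Set.Ioi r, h s ∂μR := by
      refine setLIntegral_congr_fun measurableSet_Ioi (fun s hs => ?_)
      have hs0 : 0 < s := hr0.trans hs
      rw [ENNReal.mul_rpow_of_nonneg _ _ hp0.le,
        ENNReal.ofReal_rpow_of_nonneg (Real.rpow_nonneg hs0.le a) hp0.le,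
        ← Real.rpow_mul hs0.le]
    have hYeq : ∫⁻ s in Set.Ioi r, (ENNReal.ofReal (s ^ (-a))) ^ q ∂μR
        = ENNReal.ofReal (r ^ (-κ) / κ) := by
      have h1 : ∫⁻ s in Set.Ioi r, (ENNReal.ofReal (s ^ (-a))) ^ q ∂μR
          = ∫⁻ s in Set.Ioi r, ENNReal.ofReal (s ^ (-(κ + 1))) ∂μR := by
        refine setLIntegral_congr_fun measurableSet_Ioi (fun s hs => ?_)
        have hs0 : 0 < s := hr0.trans hs
        rw [ENNReal.ofReal_rpow_of_nonneg (Real.rpow_nonneg hs0.le _) hq0.le,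
          ← Real.rpow_mul hs0.le]
        congr 2
        rw [neg_mul, haq]
      rw [h1, hres, lint_Ioi_rpow (by linarith) hr0]
      congr 1
      rw [show -(κ + 1) + 1 = -κ by ring]
      rw [neg_neg]
    calc (∫⁻ s in Set.Ioi r, g s ∂μR) ^ p
        ≤ ((∫⁻ s in Set.Ioi r, (g s * ENNReal.ofReal (s ^ a)) ^ p ∂μR) ^ (1 / p) *
           (∫⁻ s in Set.Ioi r, (ENNReal.ofReal (s ^ (-a))) ^ q ∂μR) ^ (1 / q)) ^ p := by
          rw [hsplit]
          refine ENNReal.rpow_le_rpow ?_ hp0.le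
          exact ENNReal.lintegral_mul_le_Lp_mul_Lq _ hpq (by fun_prop) (by fun_prop)
      _ = (∫⁻ s in Set.Ioi r, h s ∂μR) * ENNReal.ofReal ((r ^ (-κ) / κ) ^ (p - 1)) := by
          rw [hXeq, hYeq, ENNReal.mul_rpow_of_nonneg _ _ hp0.le, ← ENNReal.rpow_mul,
            ← ENNReal.rpow_mul, one_div_mul_cancel hp0.ne', ENNReal.rpow_one,
            one_div_mul_eq_div, hpq.div_conj_eq_sub_one,
            ENNReal.ofReal_rpow_of_nonneg (div_nonneg (Real.rpow_nonneg hr0.le _) hκ.le)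
              (by linarith : (0:ℝ) ≤ p - 1)]
  -- step A
  have hκ1 : (-1 : ℝ) < κ - 1 := by linarith
  set S := ∫⁻ s in Set.Ioi R, g s ^ p * ENNReal.ofReal (s ^ (κ * p + p - 1)) with hS
  have stepA : ∫⁻ r in Set.Ioi R, (∫⁻ s in Set.Ioi r, g s ∂μR) ^ p
        * ENNReal.ofReal (r ^ (κ * p - 1))
      ≤ ENNReal.ofReal (κ⁻¹ ^ (p - 1)) *
        ∫⁻ r in Set.Ioi R, (∫⁻ s in Set.Ioi r, h s ∂μR) * ENNReal.ofReal (r ^ (κ - 1)) := by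
    rw [← lintegral_const_mul' _ _ ENNReal.ofReal_ne_top]
    refine lintegral_mono_ae ?_
    filter_upwards [ae_restrict_mem measurableSet_Ioi] with r hr
    have hr0 : 0 < r := hR.trans hr
    have hscal : (r ^ (-κ) / κ) ^ (p - 1) * r ^ (κ * p - 1) = κ⁻¹ ^ (p - 1) * r ^ (κ - 1) := by
      rw [div_eq_mul_inv, Real.mul_rpow (Real.rpow_nonneg hr0.le _) (inv_nonneg.mpr hκ.le),
        ← Real.rpow_mul hr0.le, mul_comm (r ^ (-κ * (p - 1))) (κ⁻¹ ^ (p - 1)), mul_assoc,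
        ← Real.rpow_add hr0]
      congr 2
      ring
    calc (∫⁻ s in Set.Ioi r, g s ∂μR) ^ p * ENNReal.ofReal (r ^ (κ * p - 1))
        ≤ ((∫⁻ s in Set.Ioi r, h s ∂μR) * ENNReal.ofReal ((r ^ (-κ) / κ) ^ (p - 1))) *
            ENNReal.ofReal (r ^ (κ * p - 1)) := mul_le_mul_left (key r hr) _
      _ = ENNReal.ofReal (κ⁻¹ ^ (p - 1)) *
            ((∫⁻ s in Set.Ioi r, h s ∂μR) * ENNReal.ofReal (r ^ (κ - 1))) := by
          rw [mul_assoc, ← ENNReal.ofReal_mul (by positivity), hscal,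
            ENNReal.ofReal_mul (by positivity)]
          ring
  have stepB : ∫⁻ r in Set.Ioi R, (∫⁻ s in Set.Ioi r, h s ∂μR) * ENNReal.ofReal (r ^ (κ - 1))
      ≤ ENNReal.ofReal κ⁻¹ * S := by
    have hrw : ∀ r : ℝ, (∫⁻ s in Set.Ioi r, h s ∂μR) * ENNReal.ofReal (r ^ (κ - 1))
        = ∫⁻ s, (Set.Ioi r).indicator h s * ENNReal.ofReal (r ^ (κ - 1)) ∂μR := by
      intro r
      rw [lintegral_mul_const' _ _ ENNReal.ofReal_ne_top, lintegral_indicator measurableSet_Ioi]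
    have hum : AEMeasurable
        (Function.uncurry fun r s => (Set.Ioi r).indicator h s * ENNReal.ofReal (r ^ (κ - 1)))
        (μR.prod μR) := by
      have e1 : (Function.uncurry fun r s =>
            (Set.Ioi r).indicator h s * ENNReal.ofReal (r ^ (κ - 1)))
          = fun z : ℝ × ℝ => ({w : ℝ × ℝ | w.1 < w.2}).indicator (fun w => h w.2) z *
              ENNReal.ofReal (z.1 ^ (κ - 1)) := by
        ext z
        by_cases hc : z.1 < z.2 <;>
          simp [Function.uncurry, Set.indicator_apply, hc]
      rw [e1]
      exact (((hhm.comp measurable_snd).indicator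
        (measurableSet_lt measurable_fst measurable_snd)).mul (by fun_prop)).aemeasurable
    have inner_le : ∀ s ∈ Set.Ioi R,
        (∫⁻ r, (Set.Ioi r).indicator h s * ENNReal.ofReal (r ^ (κ - 1)) ∂μR)
          ≤ h s * ENNReal.ofReal (s ^ κ / κ) := by
      intro s hs
      have hs0 : 0 < s := hR.trans hs
      have e2 : ∀ r : ℝ, (Set.Ioi r).indicator h s * ENNReal.ofReal (r ^ (κ - 1))
          = (Set.Iio s).indicator (fun r => h s * ENNReal.ofReal (r ^ (κ - 1))) r := by
        intro r
        by_cases hc : r < s <;> simp [Set.indicator_apply, hc]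
      simp_rw [e2]
      rw [lintegral_indicator measurableSet_Iio, lintegral_const_mul _ (by fun_prop)]
      refine mul_le_mul_right ?_ _
      calc ∫⁻ r in Set.Iio s, ENNReal.ofReal (r ^ (κ - 1)) ∂μR
          = ∫⁻ r in Set.Iio s ∩ Set.Ioi R, ENNReal.ofReal (r ^ (κ - 1)) := by
            rw [hμR, Measure.restrict_restrict measurableSet_Iio]
        _ ≤ ∫⁻ r in Set.Ioo 0 s, ENNReal.ofReal (r ^ (κ - 1)) :=
            lintegral_mono_set (fun r hr => ⟨hR.trans hr.2, hr.1⟩)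
        _ = ENNReal.ofReal (s ^ κ / κ) := by
            rw [lint_Ioo_rpow hκ1 hs0, show κ - 1 + 1 = κ by ring]
    calc ∫⁻ r in Set.Ioi R, (∫⁻ s in Set.Ioi r, h s ∂μR) * ENNReal.ofReal (r ^ (κ - 1))
        = ∫⁻ s, ∫⁻ r, (Set.Ioi r).indicator h s * ENNReal.ofReal (r ^ (κ - 1)) ∂μR ∂μR := by
          simp_rw [hrw]
          exact lintegral_lintegral_swap hum
      _ ≤ ∫⁻ s, h s * ENNReal.ofReal (s ^ κ / κ) ∂μR := by
          refine lintegral_mono_ae ?_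
          filter_upwards [ae_restrict_mem measurableSet_Ioi] with s hs using inner_le s hs
      _ = ENNReal.ofReal κ⁻¹ * S := by
          rw [hS, ← lintegral_const_mul' _ _ ENNReal.ofReal_ne_top]
          refine setLIntegral_congr_fun measurableSet_Ioi (fun s hs => ?_)
          have hs0 : 0 < s := hR.trans hs
          have hsum : s ^ (a * p) * s ^ κ = s ^ (κ * p + p - 1) := by
            rw [← Real.rpow_add hs0, hap]
            congr 1
            ring
          show g s ^ p * ENNReal.ofReal (s ^ (a * p)) * ENNReal.ofReal (s ^ κ / κ)
              = ENNReal.ofReal κ⁻¹ * (g s ^ p * ENNReal.ofReal (s ^ (κ * p + p - 1)))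
          rw [div_eq_mul_inv, ENNReal.ofReal_mul (Real.rpow_nonneg hs0.le _), ← hsum,
            ENNReal.ofReal_mul (Real.rpow_nonneg hs0.le _)]
          ring
  calc ∫⁻ r in Set.Ioi R, (∫⁻ s in Set.Ioi r, g s ∂μR) ^ p * ENNReal.ofReal (r ^ (κ * p - 1))
      ≤ ENNReal.ofReal (κ⁻¹ ^ (p - 1)) *
          ∫⁻ r in Set.Ioi R, (∫⁻ s in Set.Ioi r, h s ∂μR) * ENNReal.ofReal (r ^ (κ - 1)) := stepA
    _ ≤ ENNReal.ofReal (κ⁻¹ ^ (p - 1)) * (ENNReal.ofReal κ⁻¹ * S) := mul_le_mul_right stepB _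
    _ = ENNReal.ofReal (κ⁻¹ ^ p) * S := by
        rw [← mul_assoc, ← ENNReal.ofReal_mul (by positivity)]
        congr 2
        rw [← Real.rpow_add_one (inv_ne_zero hκ.ne') (p - 1), sub_add_cancel]

lemma ray_hardy {p κ R : ℝ} (hp : 1 < p) (hκ : 0 < κ) (hR : 0 < R)
    {f f' : ℝ → ℝ} (hf'm : Measurable f')
    (hderiv : ∀ r ∈ Set.Ioi R, HasDerivAt f (f' r) r)
    (hB : ∫⁻ r in Set.Ioi R,
        ENNReal.ofReal (|f r| ^ p) * ENNReal.ofReal (r ^ (κ * p - 1)) ≠ ⊤) :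
    ENNReal.ofReal (κ ^ p) *
        ∫⁻ r in Set.Ioi R, ENNReal.ofReal (|f r| ^ p) * ENNReal.ofReal (r ^ (κ * p - 1)) ≤
      ∫⁻ r in Set.Ioi R, ENNReal.ofReal (|f' r| ^ p) * ENNReal.ofReal (r ^ (κ * p + p - 1)) := by
  have hp0 : (0:ℝ) < p := lt_trans one_pos hp
  by_cases hA : (∫⁻ r in Set.Ioi R,
      ENNReal.ofReal (|f' r| ^ p) * ENNReal.ofReal (r ^ (κ * p + p - 1))) = ⊤
  · exact hA ▸ le_top
  set A := ∫⁻ r in Set.Ioi R,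
      ENNReal.ofReal (|f' r| ^ p) * ENNReal.ofReal (r ^ (κ * p + p - 1)) with hAdef
  set B := ∫⁻ r in Set.Ioi R,
      ENNReal.ofReal (|f r| ^ p) * ENNReal.ofReal (r ^ (κ * p - 1)) with hBdef
  set g : ℝ → ℝ≥0∞ := fun s => ENNReal.ofReal |f' s| with hgdef
  have hgm : Measurable g := by fun_prop
  set μR := volume.restrict (Set.Ioi R) with hμR
  -- existence of good large T
  have hTex : ∀ M δ : ℝ, 0 < δ → ∃ T, M < T ∧ R < T ∧ |f T| ^ p * T ^ (κ * p) < δ := by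
    intro M δ hδ
    by_contra hcon
    push_neg at hcon
    set M' := max M R with hM'
    have hM'R : R ≤ M' := le_max_right M R
    have hM'0 : 0 < M' := lt_of_lt_of_le hR hM'R
    have hchain : (∫⁻ r in Set.Ioi M', ENNReal.ofReal (δ * r⁻¹)) ≤ B := by
      refine le_trans (lintegral_mono_ae ?_) (lintegral_mono_set (Set.Ioi_subset_Ioi hM'R))
      filter_upwards [ae_restrict_mem measurableSet_Ioi] with r hr
      have hrM : M' < r := hr
      have hr0 : 0 < r := hM'0.trans hrM
      have hd : δ ≤ |f r| ^ p * r ^ (κ * p) :=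
        hcon r (lt_of_le_of_lt (le_max_left M R) hrM) (lt_of_le_of_lt hM'R hrM)
      have hexp : r ^ (κ * p - 1) = r ^ (κ * p) * r⁻¹ := by
        rw [show κ * p - 1 = κ * p + -1 by ring, Real.rpow_add hr0, Real.rpow_neg_one]
      rw [← ENNReal.ofReal_mul (by positivity : (0:ℝ) ≤ |f r| ^ p), hexp]
      refine ENNReal.ofReal_le_ofReal ?_
      have : δ * r⁻¹ ≤ (|f r| ^ p * r ^ (κ * p)) * r⁻¹ := by
        gcongr
      linarith [this, mul_assoc (|f r| ^ p) (r ^ (κ * p)) r⁻¹]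
    have htop : (∫⁻ r in Set.Ioi M', ENNReal.ofReal (δ * r⁻¹)) = ⊤ := by
      by_contra hfin
      have hInt : MeasureTheory.IntegrableOn (fun r : ℝ => δ * r⁻¹) (Set.Ioi M') volume := by
        refine ⟨(by fun_prop : Measurable fun r : ℝ => δ * r⁻¹).aestronglyMeasurable, ?_⟩
        rw [hasFiniteIntegral_iff_ofReal ?_]
        · exact Ne.lt_top hfin
        · filter_upwards [ae_restrict_mem measurableSet_Ioi] with r hr
          have hr0 : 0 < r := hM'0.trans hr
          positivity
      have hInt2 : MeasureTheory.IntegrableOn (fun r : ℝ => r⁻¹) (Set.Ioi M') volume := by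
        have heq : (fun r : ℝ => δ⁻¹ * (δ * r⁻¹)) = fun r : ℝ => r⁻¹ := by
          funext r; field_simp
        rw [← heq]
        exact hInt.const_mul δ⁻¹
      have hInt3 : MeasureTheory.IntegrableOn (fun r : ℝ => r ^ (-1 : ℝ)) (Set.Ioi M')
          volume := by
        have heq2 : (fun r : ℝ => r ^ (-1 : ℝ)) = fun r : ℝ => r⁻¹ :=
          funext fun r => Real.rpow_neg_one r
        rw [heq2]; exact hInt2
      rw [integrableOn_Ioi_rpow_iff hM'0] at hInt3
      linarith
    exact hB (eq_top_iff.mpr (htop ▸ hchain))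
  -- pointwise bound |f r| ≤ tail integral of |f'|
  have hFb : ∀ r ∈ Set.Ioi R, ENNReal.ofReal |f r| ≤ ∫⁻ s in Set.Ioi r, g s ∂μR := by
    intro r hr
    have hr0 : 0 < r := hR.trans hr
    refine ENNReal.le_of_forall_pos_le_add fun ε hε _ => ?_
    have hε' : (0:ℝ) < ε := hε
    obtain ⟨T, hTr, hTR, hTs⟩ := hTex r ((ε:ℝ) ^ p * R ^ (κ * p)) (by positivity)
    have hfT : |f T| < ε := by
      by_contra hcon2
      push_neg at hcon2
      have h1 : (ε:ℝ) ^ p ≤ |f T| ^ p := Real.rpow_le_rpow hε'.le hcon2 hp0.le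
      have h2 : R ^ (κ * p) ≤ T ^ (κ * p) :=
        Real.rpow_le_rpow hR.le (le_of_lt hTR) (by positivity)
      nlinarith [Real.rpow_nonneg (le_of_lt hR) (κ * p),
        Real.rpow_nonneg (abs_nonneg (f T)) p, Real.rpow_pos_of_pos hR (κ * p)]
    have hsub : Set.uIcc r T ⊆ Set.Ioi R := by
      rw [Set.uIcc_of_le hTr.le]
      exact fun x hx => lt_of_lt_of_le hr hx.1
    -- interval integrability of f'
    set e : ℝ := κ * p + p - 1 with hedef
    have he0 : 0 ≤ e := by rw [hedef]; nlinarith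
    have hIoc : Set.Ioc r T ⊆ Set.Ioi R := fun x hx => lt_trans hr hx.1
    have hintOn : MeasureTheory.IntegrableOn f' (Set.Ioc r T) volume := by
      refine ⟨hf'm.aestronglyMeasurable.restrict, ?_⟩
      rw [hasFiniteIntegral_iff_norm]
      calc ∫⁻ a in Set.Ioc r T, ENNReal.ofReal ‖f' a‖
          ≤ ∫⁻ a in Set.Ioc r T,
              (1 + ENNReal.ofReal (r ^ (-e)) *
                (ENNReal.ofReal (|f' a| ^ p) * ENNReal.ofReal (a ^ e))) := by
            refine lintegral_mono_ae ?_
            filter_upwards [ae_restrict_mem measurableSet_Ioc] with a ha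
            have ha0 : 0 < a := hr0.trans ha.1
            have hra : r ≤ a := ha.1.le
            have hre : r ^ e ≤ a ^ e := Real.rpow_le_rpow hr0.le hra he0
            have hrepos : 0 < r ^ e := Real.rpow_pos_of_pos hr0 e
            have hkey : ‖f' a‖ ≤ 1 + r ^ (-e) * (|f' a| ^ p * a ^ e) := by
              rw [Real.norm_eq_abs, Real.rpow_neg hr0.le]
              rcases le_or_gt (|f' a|) 1 with hs | hs
              · have : 0 ≤ (r ^ e)⁻¹ * (|f' a| ^ p * a ^ e) := by positivity
                linarith
              · have h1 : |f' a| ≤ |f' a| ^ p := by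
                  nth_rewrite 1 [← Real.rpow_one (|f' a|)]
                  exact Real.rpow_le_rpow_of_exponent_le hs.le hp.le
                have h2 : (1:ℝ) ≤ (r ^ e)⁻¹ * a ^ e := by
                  rw [← div_eq_inv_mul, le_div_iff₀ hrepos, one_mul]
                  exact hre
                have h3 : |f' a| ^ p ≤ (r ^ e)⁻¹ * a ^ e * |f' a| ^ p := by
                  nth_rewrite 1 [← one_mul (|f' a| ^ p)]
                  exact mul_le_mul_of_nonneg_right h2 (by positivity)
                nlinarith
            calc ENNReal.ofReal ‖f' a‖
                ≤ ENNReal.ofReal (1 + r ^ (-e) * (|f' a| ^ p * a ^ e)) :=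
                  ENNReal.ofReal_le_ofReal hkey
              _ = 1 + ENNReal.ofReal (r ^ (-e)) *
                    (ENNReal.ofReal (|f' a| ^ p) * ENNReal.ofReal (a ^ e)) := by
                  rw [ENNReal.ofReal_add (by norm_num) (by positivity),
                    ENNReal.ofReal_mul (by positivity), ENNReal.ofReal_mul (by positivity),
                    ENNReal.ofReal_one]
        _ = volume (Set.Ioc r T) + ENNReal.ofReal (r ^ (-e)) *
              ∫⁻ a in Set.Ioc r T, ENNReal.ofReal (|f' a| ^ p) * ENNReal.ofReal (a ^ e) := by
            rw [lintegral_add_left measurable_const, lintegral_one,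
              Measure.restrict_apply MeasurableSet.univ, Set.univ_inter,
              lintegral_const_mul' _ _ ENNReal.ofReal_ne_top]
        _ ≤ volume (Set.Ioc r T) + ENNReal.ofReal (r ^ (-e)) * A := by
            gcongr
            exact lintegral_mono_set hIoc
        _ < ⊤ := by
            refine ENNReal.add_lt_top.mpr ⟨measure_Ioc_lt_top, ?_⟩
            exact ENNReal.mul_lt_top ENNReal.ofReal_lt_top (Ne.lt_top hA)
    have hint : IntervalIntegrable f' volume r T :=
      (intervalIntegrable_iff_integrableOn_Ioc_of_le hTr.le).mpr hintOn
    have hFTC : f T - f r = ∫ s in r..T, f' s :=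
      (intervalIntegral.integral_eq_sub_of_hasDerivAt (fun x hx => hderiv x (hsub hx)) hint).symm
    have habs : |f r| ≤ |f T| + ∫ s in r..T, |f' s| := by
      have h1 : |f r| - |f T| ≤ |f T - f r| := by
        rw [abs_sub_comm]
        exact abs_sub_abs_le_abs_sub (f r) (f T)
      have h2 : |∫ s in r..T, f' s| ≤ ∫ s in r..T, |f' s| :=
        intervalIntegral.abs_integral_le_integral_abs hTr.le
      rw [hFTC] at h1
      linarith
    have h3 : ENNReal.ofReal (∫ s in r..T, |f' s|) = ∫⁻ s in Set.Ioc r T, g s := by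
      rw [intervalIntegral.integral_of_le hTr.le,
        ofReal_integral_eq_lintegral_ofReal hintOn.abs
          (ae_of_all _ fun s => abs_nonneg (f' s))]
    have hres : μR.restrict (Set.Ioi r) = volume.restrict (Set.Ioi r) := by
      rw [hμR, Measure.restrict_restrict measurableSet_Ioi,
        Set.inter_eq_left.mpr (Set.Ioi_subset_Ioi (le_of_lt hr))]
    have h4 : (∫⁻ s in Set.Ioc r T, g s) ≤ ∫⁻ s in Set.Ioi r, g s ∂μR := by
      rw [hres]
      exact lintegral_mono_set Set.Ioc_subset_Ioi_self
    calc ENNReal.ofReal |f r|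
        ≤ ENNReal.ofReal (|f T| + ∫ s in r..T, |f' s|) := ENNReal.ofReal_le_ofReal habs
      _ = ENNReal.ofReal |f T| + ENNReal.ofReal (∫ s in r..T, |f' s|) :=
          ENNReal.ofReal_add (abs_nonneg _)
            (intervalIntegral.integral_nonneg hTr.le fun s _ => abs_nonneg (f' s))
      _ ≤ ↑ε + ∫⁻ s in Set.Ioi r, g s ∂μR := by
          rw [h3]
          refine add_le_add ?_ h4
          exact le_trans (ENNReal.ofReal_le_ofReal hfT.le)
            (le_of_eq ENNReal.ofReal_coe_nnreal)
      _ = (∫⁻ s in Set.Ioi r, g s ∂μR) + ↑ε := add_comm _ _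
  -- combine with the Hardy operator inequality
  have hmain := hardy_op hp hκ hR hgm
  have hgp : (∫⁻ s in Set.Ioi R, g s ^ p * ENNReal.ofReal (s ^ (κ * p + p - 1))) = A := by
    refine setLIntegral_congr_fun measurableSet_Ioi (fun s _ => ?_)
    rw [hgdef, ENNReal.ofReal_rpow_of_nonneg (abs_nonneg _) hp0.le]
  have hBF : B ≤ ∫⁻ r in Set.Ioi R,
      (∫⁻ s in Set.Ioi r, g s ∂μR) ^ p * ENNReal.ofReal (r ^ (κ * p - 1)) := by
    refine lintegral_mono_ae ?_
    filter_upwards [ae_restrict_mem measurableSet_Ioi] with r hr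
    refine mul_le_mul_left ?_ _
    rw [← ENNReal.ofReal_rpow_of_nonneg (abs_nonneg _) hp0.le]
    exact ENNReal.rpow_le_rpow (hFb r hr) hp0.le
  calc ENNReal.ofReal (κ ^ p) * B
      ≤ ENNReal.ofReal (κ ^ p) * (ENNReal.ofReal (κ⁻¹ ^ p) * A) := by
        refine mul_le_mul_right (hBF.trans (hmain.trans_eq ?_)) _
        rw [hgp]
    _ = A := by
        rw [← mul_assoc, ← ENNReal.ofReal_mul (by positivity),
          ← Real.mul_rpow hκ.le (inv_nonneg.mpr hκ.le), mul_inv_cancel₀ hκ.ne',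
          Real.one_rpow, ENNReal.ofReal_one, one_mul]


lemma measurable_indicator_of_continuousOn {α : Type*} [TopologicalSpace α] [MeasurableSpace α]
    [BorelSpace α] {s : Set α} (hs : IsOpen s) {u : α → ℝ} (hu : ContinuousOn u s) :
    Measurable (s.indicator u) := by
  have hemb : MeasurableEmbedding (Subtype.val : s → α) :=
    MeasurableEmbedding.subtype_coe hs.measurableSet
  have hcont : Measurable fun y : s => u y :=
    (continuousOn_iff_continuous_restrict.mp hu).measurable
  have h := hemb.measurable_extend hcont (measurable_const : Measurable fun _ : α => (0 : ℝ))
  convert h using 1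
  funext x
  by_cases hx : x ∈ s
  · rw [Set.indicator_of_mem hx,
      show x = Subtype.val (⟨x, hx⟩ : s) from rfl,
      Subtype.val_injective.extend_apply]
  · rw [Set.indicator_of_notMem hx, Function.extend_apply']
    rintro ⟨a, rfl⟩
    exact hx a.2

lemma polar_formula {n : ℕ} (hn : 1 ≤ n) {R : ℝ} (hR : 0 < R)
    {F : EuclideanSpace ℝ (Fin n) → ℝ≥0∞} (hF : Measurable F) :
    ∫⁻ x in {x : EuclideanSpace ℝ (Fin n) | R < ‖x‖}, F x =
      ∫⁻ ω : Metric.sphere (0 : EuclideanSpace ℝ (Fin n)) 1,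
        ∫⁻ r in Set.Ioi R,
          F (r • (ω : EuclideanSpace ℝ (Fin n))) * ENNReal.ofReal (r ^ ((n : ℝ) - 1))
          ∂volume ∂((volume : Measure (EuclideanSpace ℝ (Fin n))).toSphere) := by
  haveI : Nontrivial (EuclideanSpace ℝ (Fin n)) := Module.nontrivial_of_finrank_pos
    (R := ℝ) (by rw [finrank_euclideanSpace_fin]; omega)
  set Ω : Set (EuclideanSpace ℝ (Fin n)) := {x : EuclideanSpace ℝ (Fin n) | R < ‖x‖} with hΩdef
  have hΩ : MeasurableSet Ω := measurableSet_lt measurable_const measurable_norm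
  set G : EuclideanSpace ℝ (Fin n) → ℝ≥0∞ := Ω.indicator F with hGdef
  have hGm : Measurable G := hF.indicator hΩ
  set G' : Metric.sphere (0 : EuclideanSpace ℝ (Fin n)) 1 × Set.Ioi (0 : ℝ) → ℝ≥0∞ :=
    fun z => G ((z.2 : ℝ) • (z.1 : EuclideanSpace ℝ (Fin n))) with hG'def
  have hsmul : Measurable fun z : Metric.sphere (0 : EuclideanSpace ℝ (Fin n)) 1 × Set.Ioi (0 : ℝ) =>
      (z.2 : ℝ) • (z.1 : EuclideanSpace ℝ (Fin n)) :=
    ((continuous_subtype_val.comp continuous_snd).smul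
      (continuous_subtype_val.comp continuous_fst)).measurable
  have hG'm : Measurable G' := hGm.comp hsmul
  have h0 : ({0}ᶜ : Set (EuclideanSpace ℝ (Fin n))) =ᵐ[volume] Set.univ := by
    rw [Filter.eventuallyEq_univ]
    refine mem_ae_iff.mpr ?_
    rw [compl_compl]
    exact measure_singleton 0
  have step1 : ∫⁻ x in Ω, F x = ∫⁻ x in ({0}ᶜ : Set (EuclideanSpace ℝ (Fin n))), G x := by
    rw [hGdef, lintegral_indicator hΩ, Measure.restrict_congr_set h0, Measure.restrict_univ]
  have step2 : ∫⁻ x in ({0}ᶜ : Set (EuclideanSpace ℝ (Fin n))), G x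
      = ∫⁻ y : ({0}ᶜ : Set (EuclideanSpace ℝ (Fin n))), G (y : EuclideanSpace ℝ (Fin n)) ∂(Measure.comap Subtype.val volume) :=
    (lintegral_subtype_comap (measurableSet_singleton (0 : EuclideanSpace ℝ (Fin n))).compl _).symm
  have step3 : ∫⁻ y : ({0}ᶜ : Set (EuclideanSpace ℝ (Fin n))), G (y : EuclideanSpace ℝ (Fin n)) ∂(Measure.comap Subtype.val volume)
      = ∫⁻ z, G' z ∂(((volume : Measure (EuclideanSpace ℝ (Fin n))).toSphere).prod
          (MeasureTheory.Measure.volumeIoiPow (n - 1))) := by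
    have hmp := (MeasureTheory.Measure.measurePreserving_homeomorphUnitSphereProd
      (volume : Measure (EuclideanSpace ℝ (Fin n)))).lintegral_comp_emb
      (Homeomorph.measurableEmbedding _) G'
    rw [finrank_euclideanSpace_fin] at hmp
    rw [← hmp]
    refine lintegral_congr fun y => ?_
    rw [hG'def]
    simp only [homeomorphUnitSphereProd_apply_fst_coe, homeomorphUnitSphereProd_apply_snd_coe]
    rw [smul_inv_smul₀ (norm_ne_zero_iff.mpr y.2)]
  have step4 : ∫⁻ z, G' z ∂(((volume : Measure (EuclideanSpace ℝ (Fin n))).toSphere).prod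
        (MeasureTheory.Measure.volumeIoiPow (n - 1)))
      = ∫⁻ ω : Metric.sphere (0 : EuclideanSpace ℝ (Fin n)) 1, ∫⁻ r : Set.Ioi (0:ℝ),
          G' (ω, r) ∂(MeasureTheory.Measure.volumeIoiPow (n - 1)) ∂(volume : Measure (EuclideanSpace ℝ (Fin n))).toSphere :=
    lintegral_prod _ hG'm.aemeasurable
  rw [step1, step2, step3, step4]
  refine lintegral_congr fun ω => ?_
  have hωm : Measurable fun t : ℝ => G (t • (ω : EuclideanSpace ℝ (Fin n))) :=
    hGm.comp (continuous_id.smul continuous_const).measurable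
  have hstep : ∫⁻ r : Set.Ioi (0:ℝ), G' (ω, r) ∂(MeasureTheory.Measure.volumeIoiPow (n - 1))
      = ∫⁻ t in Set.Ioi (0:ℝ),
          ENNReal.ofReal (t ^ (n - 1)) * G (t • (ω : EuclideanSpace ℝ (Fin n))) ∂volume := by
    have h1 : (fun r : Set.Ioi (0:ℝ) => G' (ω, r))
        = fun r : Set.Ioi (0:ℝ) => G ((r : ℝ) • (ω : EuclideanSpace ℝ (Fin n))) := rfl
    rw [MeasureTheory.Measure.volumeIoiPow, h1,
      lintegral_withDensity_eq_lintegral_mul _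
        (show Measurable fun r : Set.Ioi (0:ℝ) => ENNReal.ofReal ((r : ℝ) ^ (n - 1)) by fun_prop)
        (show Measurable fun r : Set.Ioi (0:ℝ) =>
            G ((r : ℝ) • (ω : EuclideanSpace ℝ (Fin n)))
          from hωm.comp measurable_subtype_coe)]
    have h2 : ((fun r : Set.Ioi (0:ℝ) => ENNReal.ofReal ((r : ℝ) ^ (n - 1))) *
          fun r : Set.Ioi (0:ℝ) => G ((r : ℝ) • (ω : EuclideanSpace ℝ (Fin n))))
        = fun r : Set.Ioi (0:ℝ) =>
            (fun t : ℝ => ENNReal.ofReal (t ^ (n - 1)) *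
              G (t • (ω : EuclideanSpace ℝ (Fin n)))) ↑r := rfl
    rw [h2, lintegral_subtype_comap measurableSet_Ioi]
  rw [hstep]
  have hω1 : ‖(ω : EuclideanSpace ℝ (Fin n))‖ = 1 := mem_sphere_zero_iff_norm.mp ω.2
  have congr1 : ∀ r ∈ Set.Ioi (0:ℝ),
      ENNReal.ofReal (r ^ (n - 1)) * G (r • (ω : EuclideanSpace ℝ (Fin n)))
        = (Set.Ioi R).indicator
            (fun t : ℝ => F (t • (ω : EuclideanSpace ℝ (Fin n))) *
              ENNReal.ofReal (t ^ ((n : ℝ) - 1))) r := by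
    intro r hr
    have hr0 : (0:ℝ) < r := hr
    have hnorm : ‖r • (ω : EuclideanSpace ℝ (Fin n))‖ = r := by
      rw [norm_smul, hω1, mul_one, Real.norm_eq_abs, abs_of_pos hr0]
    have hpow : (r : ℝ) ^ (n - 1 : ℕ) = r ^ ((n : ℝ) - 1) := by
      rw [← Real.rpow_natCast r (n - 1), Nat.cast_sub hn, Nat.cast_one]
    by_cases hrR : R < r
    · have hmem : r • (ω : EuclideanSpace ℝ (Fin n)) ∈ Ω := by
        simpa [hΩdef, hnorm] using hrR
      rw [Set.indicator_of_mem (show r ∈ Set.Ioi R from hrR), hGdef, Set.indicator_of_mem hmem, hpow, mul_comm]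
    · have hmem : r • (ω : EuclideanSpace ℝ (Fin n)) ∉ Ω := by
        simpa [hΩdef, hnorm] using hrR
      rw [Set.indicator_of_notMem (show r ∉ Set.Ioi R from hrR), hGdef, Set.indicator_of_notMem hmem, mul_zero]
  rw [setLIntegral_congr_fun measurableSet_Ioi congr1,
    lintegral_indicator measurableSet_Ioi, Measure.restrict_restrict measurableSet_Ioi]
  congr 1
  show volume.restrict (Set.Ioi R ∩ Set.Ioi 0) = volume.restrict (Set.Ioi R)
  rw [Set.inter_eq_left.mpr (Set.Ioi_subset_Ioi hR.le)]

/-- **Proposition 6.1 (Hardy inequality on the complement of a ball, `n > p`).**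
For `1 < p < n`, `R > 0` and every `u ∈ W^{1,p}(B_R^c)`:
`∫_{B_R^c} |∇u|^p ≥ ((n-p)/p)^p ∫_{B_R^c} |u|^p/|x|^p`. -/
theorem exterior_hardy (n : ℕ) (p R : ℝ) (hp : 1 < p) (hpn : p < n) (hR : 0 < R)
    (u : EuclideanSpace ℝ (Fin n) → ℝ)
    (hu : MemW1p p {x : EuclideanSpace ℝ (Fin n) | R < ‖x‖} u) :
    (∫⁻ x in {x : EuclideanSpace ℝ (Fin n) | R < ‖x‖},
        ENNReal.ofReal (‖fderiv ℝ u x‖ ^ p)) ≥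
      ENNReal.ofReal ((((n : ℝ) - p) / p) ^ p) *
        ∫⁻ x in {x : EuclideanSpace ℝ (Fin n) | R < ‖x‖},
          ENNReal.ofReal (|u x| ^ p / ‖x‖ ^ p) := by
  classical
  have hp0 : (0:ℝ) < p := lt_trans one_pos hp
  have hn1 : (1:ℝ) < n := hp.trans hpn
  have hn : 1 ≤ n := by exact_mod_cast hn1.le
  set κ : ℝ := ((n:ℝ) - p) / p with hκdef
  have hκ : 0 < κ := div_pos (by linarith) hp0
  have hκp : κ * p = (n:ℝ) - p := by
    rw [hκdef]; field_simp
  obtain ⟨hcont, hdiff, hfin, hgrad⟩ := hu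
  set Ω : Set (EuclideanSpace ℝ (Fin n)) := {x : EuclideanSpace ℝ (Fin n) | R < ‖x‖} with hΩdef
  have hΩopen : IsOpen Ω := isOpen_lt continuous_const continuous_norm
  have hΩ : MeasurableSet Ω := hΩopen.measurableSet
  set v : EuclideanSpace ℝ (Fin n) → ℝ := Ω.indicator u with hvdef
  have hvm : Measurable v :=
    measurable_indicator_of_continuousOn hΩopen (hcont.mono subset_closure)
  have hfdm : Measurable fun x => ‖fderiv ℝ u x‖ := (measurable_fderiv ℝ u).norm
  set F1 : EuclideanSpace ℝ (Fin n) → ℝ≥0∞ :=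
    fun x => ENNReal.ofReal (‖fderiv ℝ u x‖ ^ p) with hF1
  have hF1m : Measurable F1 := by rw [hF1]; fun_prop
  set F2 : EuclideanSpace ℝ (Fin n) → ℝ≥0∞ :=
    fun x => ENNReal.ofReal (|v x| ^ p / ‖x‖ ^ p) with hF2
  have hF2m : Measurable F2 := by rw [hF2]; fun_prop
  rw [ge_iff_le]
  have hgoalrhs : ∫⁻ x in Ω, ENNReal.ofReal (|u x| ^ p / ‖x‖ ^ p) = ∫⁻ x in Ω, F2 x := by
    refine setLIntegral_congr_fun hΩ (fun x hx => ?_)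
    simp only [hF2, hvdef, Set.indicator_of_mem (s := Ω) (a := x) hx u]
  rw [hgoalrhs, hΩdef, polar_formula hn hR hF1m, polar_formula hn hR hF2m]
  -- per-ray data
  have hsphm : Measurable fun z : Metric.sphere (0 : EuclideanSpace ℝ (Fin n)) 1 × ℝ =>
      z.2 • (z.1 : EuclideanSpace ℝ (Fin n)) :=
    (continuous_snd.smul (continuous_subtype_val.comp continuous_fst)).measurable
  have hBm : Measurable fun ω : Metric.sphere (0 : EuclideanSpace ℝ (Fin n)) 1 =>
      ∫⁻ r in Set.Ioi R, F2 (r • (ω : EuclideanSpace ℝ (Fin n))) *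
        ENNReal.ofReal (r ^ ((n:ℝ) - 1)) ∂volume := by
    refine Measurable.lintegral_prod_right'
      (f := fun z : Metric.sphere (0 : EuclideanSpace ℝ (Fin n)) 1 × ℝ =>
        F2 (z.2 • (z.1 : EuclideanSpace ℝ (Fin n))) * ENNReal.ofReal (z.2 ^ ((n:ℝ) - 1))) ?_
    exact (hF2m.comp hsphm).mul (by fun_prop)
  have htot : (∫⁻ ω : Metric.sphere (0 : EuclideanSpace ℝ (Fin n)) 1,
      ∫⁻ r in Set.Ioi R, F2 (r • (ω : EuclideanSpace ℝ (Fin n))) *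
        ENNReal.ofReal (r ^ ((n:ℝ) - 1)) ∂volume
        ∂((volume : Measure (EuclideanSpace ℝ (Fin n))).toSphere)) ≠ ⊤ := by
    rw [← polar_formula hn hR hF2m]
    have hbound : ∫⁻ x in {x : EuclideanSpace ℝ (Fin n) | R < ‖x‖}, F2 x
        ≤ ENNReal.ofReal ((R ^ p)⁻¹) * ∫⁻ x in Ω, ENNReal.ofReal (|u x| ^ p) := by
      rw [← lintegral_const_mul' _ _ ENNReal.ofReal_ne_top]
      refine lintegral_mono_ae ?_
      filter_upwards [ae_restrict_mem hΩ] with x hx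
      have hxR : R < ‖x‖ := hx
      have hRp : (0:ℝ) < R ^ p := Real.rpow_pos_of_pos hR p
      have hxp : R ^ p ≤ ‖x‖ ^ p := Real.rpow_le_rpow hR.le hxR.le hp0.le
      simp only [hF2, hvdef, Set.indicator_of_mem (s := Ω) (a := x) hx u]
      calc ENNReal.ofReal (|u x| ^ p / ‖x‖ ^ p)
          ≤ ENNReal.ofReal (|u x| ^ p / R ^ p) :=
            ENNReal.ofReal_le_ofReal (by gcongr)
        _ = ENNReal.ofReal ((R ^ p)⁻¹) * ENNReal.ofReal (|u x| ^ p) := by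
            rw [div_eq_mul_inv, mul_comm, ENNReal.ofReal_mul (by positivity)]
    refine ne_top_of_le_ne_top ?_ hbound
    exact ENNReal.mul_ne_top ENNReal.ofReal_ne_top hfin
  have hBae := (ae_lt_top hBm htot).mono fun ω h => h.ne
  rw [← lintegral_const_mul' _ _ ENNReal.ofReal_ne_top]
  refine lintegral_mono_ae ?_
  filter_upwards [hBae] with ω hBω
  have hω1 : ‖(ω : EuclideanSpace ℝ (Fin n))‖ = 1 := mem_sphere_zero_iff_norm.mp ω.2
  have hnorm : ∀ r : ℝ, 0 < r → ‖r • (ω : EuclideanSpace ℝ (Fin n))‖ = r := fun r hr0 => by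
    rw [norm_smul, hω1, mul_one, Real.norm_eq_abs, abs_of_pos hr0]
  have hmem : ∀ r : ℝ, r ∈ Set.Ioi R → r • (ω : EuclideanSpace ℝ (Fin n)) ∈ Ω := by
    intro r hr
    have : R < r := hr
    simp only [hΩdef, Set.mem_setOf_eq, hnorm r (hR.trans hr)]
    exact this
  have hinner2 : ∫⁻ r in Set.Ioi R, F2 (r • (ω : EuclideanSpace ℝ (Fin n))) *
        ENNReal.ofReal (r ^ ((n:ℝ) - 1)) ∂volume
      = ∫⁻ r in Set.Ioi R, ENNReal.ofReal (|u (r • (ω : EuclideanSpace ℝ (Fin n)))| ^ p) *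
          ENNReal.ofReal (r ^ (κ * p - 1)) ∂volume := by
    refine setLIntegral_congr_fun measurableSet_Ioi (fun r hr => ?_)
    have hr0 : (0:ℝ) < r := hR.trans hr
    have hexp : r ^ (-p) * r ^ ((n:ℝ) - 1) = r ^ (κ * p - 1) := by
      rw [← Real.rpow_add hr0]
      congr 1
      rw [hκp]; ring
    simp only [hF2, hvdef, Set.indicator_of_mem (s := Ω) (a := r • (ω : EuclideanSpace ℝ (Fin n))) (hmem r hr) u, hnorm r hr0]
    rw [div_eq_mul_inv, ← Real.rpow_neg hr0.le, ENNReal.ofReal_mul (by positivity), mul_assoc,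
      ← ENNReal.ofReal_mul (by positivity), hexp]
  rw [hinner2]
  -- apply the per-ray Hardy inequality
  have hf'm : Measurable fun r : ℝ =>
      (fderiv ℝ u (r • (ω : EuclideanSpace ℝ (Fin n)))) (ω : EuclideanSpace ℝ (Fin n)) :=
    (measurable_fderiv_apply_const ℝ u _).comp
      (continuous_id.smul continuous_const).measurable
  have hderiv : ∀ r ∈ Set.Ioi R,
      HasDerivAt (fun t : ℝ => u (t • (ω : EuclideanSpace ℝ (Fin n))))
        ((fderiv ℝ u (r • (ω : EuclideanSpace ℝ (Fin n)))) (ω : EuclideanSpace ℝ (Fin n))) r := by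
    intro r hr
    have hd := (hdiff _ (hmem r hr)).hasFDerivAt
    have hray : HasDerivAt (fun t : ℝ => t • (ω : EuclideanSpace ℝ (Fin n)))
        ((1:ℝ) • (ω : EuclideanSpace ℝ (Fin n))) r := (hasDerivAt_id r).smul_const _
    have := hd.comp_hasDerivAt r hray
    rw [one_smul] at this
    exact this
  have hray := ray_hardy hp hκ hR hf'm hderiv (by rw [← hinner2]; exact hBω)
  refine le_trans ?_ (hray.trans ?_)
  · exact le_of_eq rfl
  · refine lintegral_mono_ae ?_
    filter_upwards [ae_restrict_mem measurableSet_Ioi] with r hr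
    have hr0 : (0:ℝ) < r := hR.trans hr
    have hexp2 : r ^ (κ * p + p - 1) = r ^ ((n:ℝ) - 1) := by
      congr 1
      rw [hκp]; ring
    rw [hexp2]
    refine mul_le_mul_left (ENNReal.ofReal_le_ofReal ?_) _
    refine Real.rpow_le_rpow (abs_nonneg _) ?_ hp0.le
    calc |(fderiv ℝ u (r • (ω : EuclideanSpace ℝ (Fin n)))) (ω : EuclideanSpace ℝ (Fin n))|
        ≤ ‖fderiv ℝ u (r • (ω : EuclideanSpace ℝ (Fin n)))‖ *
            ‖(ω : EuclideanSpace ℝ (Fin n))‖ :=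
          (fderiv ℝ u _).le_opNorm _
      _ = ‖fderiv ℝ u (r • (ω : EuclideanSpace ℝ (Fin n)))‖ := by rw [hω1, mul_one]


end RobinHardy
end
end

section
/- Let 1 < p < n, R > 0 and ρ > R. Let f: [R,∞) → [0,∞) be a C^∞ nonnegative function with f(r) = 0 for all r ≥ ρ. Then ∫_R^∞ f(r)^p r^{n-1-p} dr ≤ (p/(n-p))^p ∫_R^∞ |f'(r)|^p r^{n-1} dr. -/
open MeasureTheory Set Filter
open scoped ENNReal Topology

lemma radial_hardy_ibp (n : ℕ) (p R ρ : ℝ) (hp : 1 < p) (hpn : p < n) (hR : 0 < R)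
    (hρ : R < ρ) (f g : ℝ → ℝ) (hfc : ContinuousOn f (Ici R)) (hgc : ContinuousOn g (Ici R))
    (hfd : ∀ r ∈ Ioi R, HasDerivAt f (g r) r)
    (hnn : ∀ r ∈ Ici R, 0 ≤ f r) (hfρ : f ρ = 0) :
    ∫ r in R..ρ, f r ^ p * r ^ ((n:ℝ)-1-p) ≤
      (p/((n:ℝ)-p)) * ∫ r in R..ρ, f r ^ (p-1) * |g r| * r ^ ((n:ℝ)-p) := by
  have hp0 : (0:ℝ) < p := lt_trans one_pos hp
  have hp1 : (0:ℝ) < p - 1 := by linarith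
  have hnp : (0:ℝ) < (n:ℝ) - p := by linarith
  have hsub : Icc R ρ ⊆ Ici R := Icc_subset_Ici_self
  have hne : ∀ r ∈ Icc R ρ, r ≠ 0 := fun r hr => (lt_of_lt_of_le hR hr.1).ne'
  have huicc : (Set.uIcc R ρ) = Icc R ρ := uIcc_of_le hρ.le
  -- continuity facts
  have hfcc : ContinuousOn f (Icc R ρ) := hfc.mono hsub
  have hgcc : ContinuousOn g (Icc R ρ) := hgc.mono hsub
  have hu_c : ContinuousOn (fun r => f r ^ p) (Icc R ρ) :=
    hfcc.rpow_const (fun x _ => Or.inr hp0.le)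
  have hu'_c : ContinuousOn (fun r => p * f r ^ (p-1) * g r) (Icc R ρ) :=
    (continuousOn_const.mul (hfcc.rpow_const (fun x _ => Or.inr hp1.le))).mul hgcc
  have hv_c : ContinuousOn (fun r : ℝ => r ^ ((n:ℝ)-p) / ((n:ℝ)-p)) (Icc R ρ) :=
    (continuousOn_id.rpow_const (fun x hx => Or.inl (hne x hx))).div_const _
  have hv'_c : ContinuousOn (fun r : ℝ => r ^ ((n:ℝ)-1-p)) (Icc R ρ) :=
    continuousOn_id.rpow_const (fun x hx => Or.inl (hne x hx))
  have hh_c : ContinuousOn (fun r => f r ^ (p-1) * |g r| * r ^ ((n:ℝ)-p)) (Icc R ρ) :=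
    ((hfcc.rpow_const (fun x _ => Or.inr hp1.le)).mul hgcc.abs).mul
      (continuousOn_id.rpow_const (fun x hx => Or.inl (hne x hx)))
  have hu'v : IntervalIntegrable (fun r => (p * f r ^ (p-1) * g r) * (r ^ ((n:ℝ)-p) / ((n:ℝ)-p)))
      volume R ρ := ((hu'_c.mul hv_c).mono huicc.subset).intervalIntegrable
  have huv' : IntervalIntegrable (fun r => f r ^ p * r ^ ((n:ℝ)-1-p)) volume R ρ :=
    ((hu_c.mul hv'_c).mono huicc.subset).intervalIntegrable
  -- integration by parts
  have hIBP : ∫ r in R..ρ, ((p * f r ^ (p-1) * g r) * (r ^ ((n:ℝ)-p) / ((n:ℝ)-p))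
        + f r ^ p * (r ^ ((n:ℝ)-1-p)))
      = f ρ ^ p * (ρ ^ ((n:ℝ)-p) / ((n:ℝ)-p)) - f R ^ p * (R ^ ((n:ℝ)-p) / ((n:ℝ)-p)) := by
    apply intervalIntegral.integral_deriv_mul_eq_sub_of_hasDeriv_right
    · rw [huicc]; exact hu_c
    · rw [huicc]; exact hv_c
    · intro x hx
      rw [min_eq_left hρ.le, max_eq_right hρ.le] at hx
      have h := (((hfd x hx.1).rpow_const (Or.inr hp.le))).hasDerivWithinAt (s := Ioi x)
      rwa [show g x * p * f x ^ (p-1) = p * f x ^ (p-1) * g x by ring] at h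
    · intro x hx
      rw [min_eq_left hρ.le, max_eq_right hρ.le] at hx
      have hx0 : 0 < x := lt_trans hR hx.1
      have h1 : HasDerivAt (fun r : ℝ => r ^ ((n:ℝ)-p)) (((n:ℝ)-p) * x ^ ((n:ℝ)-p-1)) x :=
        Real.hasDerivAt_rpow_const (Or.inl hx0.ne')
      have h2 := (h1.div_const ((n:ℝ)-p)).hasDerivWithinAt (s := Ioi x)
      refine h2.congr_deriv ?_
      rw [mul_comm, mul_div_assoc, div_self hnp.ne', mul_one]
      congr 1
      ring
    · exact (hu'_c.mono huicc.subset).intervalIntegrable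
    · exact (hv'_c.mono huicc.subset).intervalIntegrable
  rw [hfρ, Real.zero_rpow hp0.ne', zero_mul, zero_sub] at hIBP
  rw [intervalIntegral.integral_add hu'v huv'] at hIBP
  have hbR : 0 ≤ f R ^ p * (R ^ ((n:ℝ)-p) / ((n:ℝ)-p)) :=
    mul_nonneg (Real.rpow_nonneg (hnn R Set.self_mem_Ici) p)
      (div_nonneg (Real.rpow_nonneg hR.le _) hnp.le)
  have h2 : ∫ r in R..ρ, -((p * f r ^ (p-1) * g r) * (r ^ ((n:ℝ)-p) / ((n:ℝ)-p)))
      ≤ ∫ r in R..ρ, (p/((n:ℝ)-p)) * (f r ^ (p-1) * |g r| * r ^ ((n:ℝ)-p)) := by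
    apply intervalIntegral.integral_mono_on hρ.le hu'v.neg
      (((continuousOn_const.mul hh_c).mono huicc.subset).intervalIntegrable)
    intro r hr
    have hr0 : 0 < r := lt_of_lt_of_le hR hr.1
    have hfr : 0 ≤ f r := hnn r (mem_Ici.mpr hr.1)
    have e1 : -((p * f r ^ (p-1) * g r) * (r ^ ((n:ℝ)-p) / ((n:ℝ)-p)))
        = (p/((n:ℝ)-p)) * (f r ^ (p-1) * (-(g r)) * r ^ ((n:ℝ)-p)) := by ring
    simp only [Pi.neg_apply]
    rw [e1]
    apply mul_le_mul_of_nonneg_left _ (by positivity)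
    apply mul_le_mul_of_nonneg_right _ (Real.rpow_nonneg hr0.le _)
    exact mul_le_mul_of_nonneg_left (neg_le_abs _) (Real.rpow_nonneg hfr _)
  rw [intervalIntegral.integral_neg] at h2
  rw [intervalIntegral.integral_const_mul] at h2
  linarith
/-- **Radial weighted Hardy inequality on the half-line `[R,∞)`.**
For `1 < p < n`, `0 < R < ρ` and a nonnegative `C^∞` function `f` on `[R,∞)` vanishing
for `r ≥ ρ`, one has `∫_R^∞ f(r)^p r^{n-1-p} dr ≤ (p/(n-p))^p ∫_R^∞ |f'(r)|^p r^{n-1} dr`. -/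
theorem radial_hardy (n : ℕ) (p R ρ : ℝ) (hp : 1 < p) (hpn : p < n) (hR : 0 < R)
    (hρ : R < ρ) (f : ℝ → ℝ) (hf : ContDiffOn ℝ (⊤ : ℕ∞) f (Ici R))
    (hnn : ∀ r ∈ Ici R, 0 ≤ f r) (hzero : ∀ r, ρ ≤ r → f r = 0) :
    (∫⁻ r in Ioi R, ENNReal.ofReal (f r ^ p * r ^ ((n : ℝ) - 1 - p))) ≤
      ENNReal.ofReal ((p / ((n : ℝ) - p)) ^ p) *
        ∫⁻ r in Ioi R, ENNReal.ofReal (|deriv f r| ^ p * r ^ ((n : ℝ) - 1)) := by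
  have hp0 : (0:ℝ) < p := lt_trans one_pos hp
  have hp1 : (0:ℝ) < p - 1 := by linarith
  have hnp : (0:ℝ) < (n:ℝ) - p := by linarith
  set q : ℝ := p / (p - 1) with hqdef
  have hpq : p.HolderConjugate q := Real.HolderConjugate.conjExponent hp
  have hq0 : 0 < q := hpq.symm.pos
  -- derivative facts
  set g : ℝ → ℝ := derivWithin f (Ici R) with hgdef
  have hfc : ContinuousOn f (Ici R) := hf.continuousOn
  have hgc : ContinuousOn g (Ici R) :=
    hf.continuousOn_derivWithin (uniqueDiffOn_Ici R) (by exact_mod_cast le_top)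
  have hg_eq : ∀ r ∈ Ioi R, g r = deriv f r := fun r hr =>
    derivWithin_of_mem_nhds (Ici_mem_nhds hr)
  have hfd : ∀ r ∈ Ioi R, HasDerivAt f (g r) r := by
    intro r hr
    have h2 : DifferentiableAt ℝ f r :=
      ((hf.differentiableOn (by simp)) r (mem_Ici.mpr (le_of_lt hr))).differentiableAt (Ici_mem_nhds hr)
    rw [hg_eq r hr]; exact h2.hasDerivAt
  have hderiv0 : ∀ r ∈ Ioi ρ, deriv f r = 0 := by
    intro r hr
    have he : f =ᶠ[𝓝 r] fun _ => (0:ℝ) :=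
      eventually_of_mem (Ioi_mem_nhds hr) fun x hx => hzero x (le_of_lt hx)
    rw [he.deriv_eq]; exact deriv_const r 0
  -- splitting
  have hdisj : Disjoint (Ioc R ρ) (Ioi ρ) := by
    rw [Set.disjoint_left]; rintro x ⟨_, h1⟩ h2
    exact absurd h2 (not_lt.2 h1)
  have split : ∀ φ : ℝ → ℝ≥0∞, (∀ r ∈ Ioi ρ, φ r = 0) →
      ∫⁻ r in Ioi R, φ r = ∫⁻ r in Ioc R ρ, φ r := by
    intro φ hφ
    rw [← Ioc_union_Ioi_eq_Ioi hρ.le, lintegral_union measurableSet_Ioi hdisj]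
    have h0 : φ =ᵐ[volume.restrict (Ioi ρ)] (fun _ => 0) :=
      (ae_restrict_iff' measurableSet_Ioi).2 (ae_of_all _ hφ)
    rw [lintegral_congr_ae h0, lintegral_zero, add_zero]
  -- continuity / integrability on Icc
  have hsub : Icc R ρ ⊆ Ici R := Icc_subset_Ici_self
  have hne : ∀ r ∈ Icc R ρ, r ≠ 0 := fun r hr => (lt_of_lt_of_le hR hr.1).ne'
  have hfcc : ContinuousOn f (Icc R ρ) := hfc.mono hsub
  have hgcc : ContinuousOn g (Icc R ρ) := hgc.mono hsub
  have hIA : IntegrableOn (fun r => f r ^ p * r ^ ((n:ℝ)-1-p)) (Ioc R ρ) :=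
    (((hfcc.rpow_const fun x _ => Or.inr hp0.le).mul
      (continuousOn_id.rpow_const fun x hx => Or.inl (hne x hx))).integrableOn_Icc).mono_set
      Ioc_subset_Icc_self
  have hIC : IntegrableOn (fun r => f r ^ (p-1) * |g r| * r ^ ((n:ℝ)-p)) (Ioc R ρ) :=
    ((((hfcc.rpow_const fun x _ => Or.inr hp1.le).mul hgcc.abs).mul
      (continuousOn_id.rpow_const fun x hx => Or.inl (hne x hx))).integrableOn_Icc).mono_set
      Ioc_subset_Icc_self
  have haeIoc : ∀ᵐ r ∂(volume.restrict (Ioc R ρ)), r ∈ Ioc R ρ :=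
    ae_restrict_mem measurableSet_Ioc
  -- A conversion
  have hA_tail : ∀ r ∈ Ioi ρ, ENNReal.ofReal (f r ^ p * r ^ ((n:ℝ)-1-p)) = 0 := by
    intro r hr
    rw [hzero r (le_of_lt hr), Real.zero_rpow hp0.ne', zero_mul, ENNReal.ofReal_zero]
  have hA1 : (∫⁻ r in Ioi R, ENNReal.ofReal (f r ^ p * r ^ ((n:ℝ)-1-p)))
      = ENNReal.ofReal (∫ r in R..ρ, f r ^ p * r ^ ((n:ℝ)-1-p)) := by
    rw [split _ hA_tail, intervalIntegral.integral_of_le hρ.le]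
    refine (ofReal_integral_eq_lintegral_ofReal hIA ?_).symm
    filter_upwards [haeIoc] with r hr
    exact mul_nonneg (Real.rpow_nonneg (hnn r (mem_Ici.mpr hr.1.le)) _)
      (Real.rpow_nonneg (lt_trans hR hr.1).le _)
  -- C conversion
  have hC_tail : ∀ r ∈ Ioi ρ,
      ENNReal.ofReal (f r ^ (p-1) * |deriv f r| * r ^ ((n:ℝ)-p)) = 0 := by
    intro r hr
    rw [hderiv0 r hr, abs_zero, mul_zero, zero_mul, ENNReal.ofReal_zero]
  have hswap : (fun r => ENNReal.ofReal (f r ^ (p-1) * |deriv f r| * r ^ ((n:ℝ)-p)))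
      =ᵐ[volume.restrict (Ioc R ρ)]
      (fun r => ENNReal.ofReal (f r ^ (p-1) * |g r| * r ^ ((n:ℝ)-p))) := by
    filter_upwards [haeIoc] with r hr
    rw [hg_eq r hr.1]
  have hC1 : (∫⁻ r in Ioi R, ENNReal.ofReal (f r ^ (p-1) * |deriv f r| * r ^ ((n:ℝ)-p)))
      = ENNReal.ofReal (∫ r in R..ρ, f r ^ (p-1) * |g r| * r ^ ((n:ℝ)-p)) := by
    rw [split _ hC_tail, lintegral_congr_ae hswap, intervalIntegral.integral_of_le hρ.le]
    refine (ofReal_integral_eq_lintegral_ofReal hIC ?_).symm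
    filter_upwards [haeIoc] with r hr
    exact mul_nonneg (mul_nonneg (Real.rpow_nonneg (hnn r (mem_Ici.mpr hr.1.le)) _)
      (abs_nonneg _)) (Real.rpow_nonneg (lt_trans hR hr.1).le _)
  -- step 1 : A ≤ k * C
  have hAC : (∫⁻ r in Ioi R, ENNReal.ofReal (f r ^ p * r ^ ((n:ℝ)-1-p)))
      ≤ ENNReal.ofReal (p/((n:ℝ)-p)) *
        ∫⁻ r in Ioi R, ENNReal.ofReal (f r ^ (p-1) * |deriv f r| * r ^ ((n:ℝ)-p)) := by
    rw [hA1, hC1, ← ENNReal.ofReal_mul (by positivity)]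
    exact ENNReal.ofReal_le_ofReal
      (radial_hardy_ibp n p R ρ hp hpn hR hρ f g hfc hgc hfd hnn (hzero ρ le_rfl))
  -- exponent identities
  have hγq : ((n:ℝ)-1-p)/q * q = (n:ℝ)-1-p := div_mul_cancel₀ _ hq0.ne'
  have hβp : ((n:ℝ)-1)/p * p = (n:ℝ)-1 := div_mul_cancel₀ _ hp0.ne'
  have hpq' : (p-1) * q = p := by rw [hqdef]; field_simp
  have hγβ : ((n:ℝ)-1-p)/q + ((n:ℝ)-1)/p = (n:ℝ)-p := by
    rw [hqdef]; field_simp; ring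
  -- measurability
  have hdc : ContinuousOn (fun r => deriv f r) (Ioi R) :=
    (hgc.mono Ioi_subset_Ici_self).congr fun r hr => (hg_eq r hr).symm
  have hF_meas : AEMeasurable (fun r => ENNReal.ofReal (f r ^ (p-1) * r ^ (((n:ℝ)-1-p)/q)))
      (volume.restrict (Ioi R)) := by
    apply ENNReal.measurable_ofReal.comp_aemeasurable
    refine ContinuousOn.aemeasurable ?_ measurableSet_Ioi
    exact ((hfc.mono Ioi_subset_Ici_self).rpow_const fun x _ => Or.inr hp1.le).mul
      (continuousOn_id.rpow_const fun x hx => Or.inl (lt_trans hR hx).ne')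
  have hG_meas : AEMeasurable (fun r => ENNReal.ofReal (|deriv f r| * r ^ (((n:ℝ)-1)/p)))
      (volume.restrict (Ioi R)) := by
    apply ENNReal.measurable_ofReal.comp_aemeasurable
    refine ContinuousOn.aemeasurable ?_ measurableSet_Ioi
    exact hdc.abs.mul (continuousOn_id.rpow_const fun x hx => Or.inl (lt_trans hR hx).ne')
  have haeIoi : ∀ᵐ r ∂(volume.restrict (Ioi R)), r ∈ Ioi R :=
    ae_restrict_mem measurableSet_Ioi
  -- Hölder
  have hHolder : (∫⁻ r in Ioi R, ENNReal.ofReal (f r ^ (p-1) * |deriv f r| * r ^ ((n:ℝ)-p)))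
      ≤ (∫⁻ r in Ioi R, ENNReal.ofReal (f r ^ p * r ^ ((n:ℝ)-1-p))) ^ (1/q)
        * (∫⁻ r in Ioi R, ENNReal.ofReal (|deriv f r| ^ p * r ^ ((n:ℝ)-1))) ^ (1/p) := by
    have key := ENNReal.lintegral_mul_le_Lp_mul_Lq (volume.restrict (Ioi R)) hpq.symm
      hF_meas hG_meas
    simp only [Pi.mul_apply] at key
    have e1 : (∫⁻ r in Ioi R, ENNReal.ofReal (f r ^ (p-1) * r ^ (((n:ℝ)-1-p)/q))
          * ENNReal.ofReal (|deriv f r| * r ^ (((n:ℝ)-1)/p)))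
        = ∫⁻ r in Ioi R, ENNReal.ofReal (f r ^ (p-1) * |deriv f r| * r ^ ((n:ℝ)-p)) := by
      apply lintegral_congr_ae
      filter_upwards [haeIoi] with r hr
      have hr0 : 0 < r := lt_trans hR hr
      have hfr : 0 ≤ f r := hnn r (mem_Ici.mpr hr.le)
      rw [← ENNReal.ofReal_mul (mul_nonneg (Real.rpow_nonneg hfr _)
        (Real.rpow_nonneg hr0.le _))]
      congr 1
      rw [show f r ^ (p-1) * r ^ (((n:ℝ)-1-p)/q) * (|deriv f r| * r ^ (((n:ℝ)-1)/p))
          = f r ^ (p-1) * |deriv f r| * (r ^ (((n:ℝ)-1-p)/q) * r ^ (((n:ℝ)-1)/p)) by ring,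
        ← Real.rpow_add hr0, hγβ]
    have e2 : (∫⁻ r in Ioi R, ENNReal.ofReal (f r ^ (p-1) * r ^ (((n:ℝ)-1-p)/q)) ^ q)
        = ∫⁻ r in Ioi R, ENNReal.ofReal (f r ^ p * r ^ ((n:ℝ)-1-p)) := by
      apply lintegral_congr_ae
      filter_upwards [haeIoi] with r hr
      have hr0 : 0 < r := lt_trans hR hr
      have hfr : 0 ≤ f r := hnn r (mem_Ici.mpr hr.le)
      rw [ENNReal.ofReal_rpow_of_nonneg (mul_nonneg (Real.rpow_nonneg hfr _)
        (Real.rpow_nonneg hr0.le _)) hq0.le]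
      congr 1
      rw [Real.mul_rpow (Real.rpow_nonneg hfr _) (Real.rpow_nonneg hr0.le _),
        ← Real.rpow_mul hfr, ← Real.rpow_mul hr0.le, hpq', hγq]
    have e3 : (∫⁻ r in Ioi R, ENNReal.ofReal (|deriv f r| * r ^ (((n:ℝ)-1)/p)) ^ p)
        = ∫⁻ r in Ioi R, ENNReal.ofReal (|deriv f r| ^ p * r ^ ((n:ℝ)-1)) := by
      apply lintegral_congr_ae
      filter_upwards [haeIoi] with r hr
      have hr0 : 0 < r := lt_trans hR hr
      rw [ENNReal.ofReal_rpow_of_nonneg (mul_nonneg (abs_nonneg _)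
        (Real.rpow_nonneg hr0.le _)) hp0.le]
      congr 1
      rw [Real.mul_rpow (abs_nonneg _) (Real.rpow_nonneg hr0.le _),
        ← Real.rpow_mul hr0.le, hβp]
    rw [e1, e2, e3] at key
    exact key
  -- endgame
  set A := ∫⁻ r in Ioi R, ENNReal.ofReal (f r ^ p * r ^ ((n:ℝ)-1-p)) with hAdef
  set B := ∫⁻ r in Ioi R, ENNReal.ofReal (|deriv f r| ^ p * r ^ ((n:ℝ)-1)) with hBdef
  set k := ENNReal.ofReal (p/((n:ℝ)-p)) with hkdef
  by_cases hA0 : A = 0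
  · rw [hA0]; exact zero_le
  have hAfin : A ≠ ⊤ := by rw [hA1]; exact ENNReal.ofReal_ne_top
  have hq_ne : A ^ (1/q) ≠ 0 := (ENNReal.rpow_pos (zero_lt_iff.mpr hA0) hAfin).ne'
  have hq_top : A ^ (1/q) ≠ ⊤ :=
    ENNReal.rpow_ne_top_of_nonneg (by positivity) hAfin
  have hiq : 1/q + 1/p = 1 := by
    rw [one_div, one_div]; exact hpq.symm.inv_add_inv_eq_one
  have hsplitA : A ^ (1/q) * A ^ (1/p) = A := by
    rw [← ENNReal.rpow_add _ _ hA0 hAfin, hiq, ENNReal.rpow_one]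
  have main : A ^ (1/q) * A ^ (1/p) ≤ A ^ (1/q) * (k * B ^ (1/p)) := by
    rw [hsplitA]
    calc A ≤ k * _ := hAC
      _ ≤ k * (A ^ (1/q) * B ^ (1/p)) := mul_le_mul_right hHolder _
      _ = A ^ (1/q) * (k * B ^ (1/p)) := by ring
  have step : A ^ (1/p) ≤ k * B ^ (1/p) :=
    (ENNReal.mul_le_mul_iff_right hq_ne hq_top).1 main
  have final := ENNReal.rpow_le_rpow step hp0.le
  rw [← ENNReal.rpow_mul, one_div_mul_cancel hp0.ne', ENNReal.rpow_one,
    ENNReal.mul_rpow_of_nonneg _ _ hp0.le, ← ENNReal.rpow_mul,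
    one_div_mul_cancel hp0.ne', ENNReal.rpow_one, hkdef,
    ENNReal.ofReal_rpow_of_nonneg (div_nonneg hp0.le hnp.le) hp0.le] at final
  exact final
end
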